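/- arXiv:2602.09048 — 7 statements merged into one kernel-verified Lean document; each statement's English description precedes it below -/
import Mathlib

section
/- Let F be a finite field with Q elements and let ψ be a nontrivial additive character of F with values in the complex numbers. Then for any two subsets U, V ⊆ F, the bilinear character sum satisfies |Σ_{v ∈ V} Σ_{u ∈ U} ψ(u·v)| ≤ √Q · √(|U|·|V|), where |U| and |V| denote the cardinalities of U and V. -/
open Finset

/-- Let `F` be a finite field with `Q` elements and `ψ` a nontrivial
additive character of `F` with values in `ℂ`. Then for any two subsets `U, V ⊆ F`,
`|∑ v ∈ V, ∑ u ∈ U, ψ (u * v)| ≤ √Q * √(|U| * |V|)`. -/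
theorem bilinear_character_sum_bound
    (F : Type*) [Field F] [Fintype F] (ψ : AddChar F ℂ) (hψ : ψ ≠ 1)
    (U V : Finset F) :
    ‖∑ v ∈ V, ∑ u ∈ U, ψ (u * v)‖ ≤
      Real.sqrt (Fintype.card F) * Real.sqrt ((U.card : ℝ) * (V.card : ℝ)) := by
  classical
  set f : F → ℂ := fun v => ∑ u ∈ U, ψ (u * v) with hf
  set Q : ℝ := (Fintype.card F : ℝ)
  have hQ0 : 0 ≤ Q := Nat.cast_nonneg _
  -- key orthogonality computation
  have key : ∑ v : F, ‖f v‖ ^ 2 = Q * U.card := by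
    have h1 : ∀ v : F, (‖f v‖ : ℂ) ^ 2 = ∑ u ∈ U, ∑ u' ∈ U, ψ ((u - u') * v) := by
      intro v
      have : (‖f v‖ : ℂ) ^ 2 = f v * (starRingEnd ℂ) (f v) := by
        rw [Complex.mul_conj]
        norm_cast
        rw [Complex.sq_norm]
      rw [this, hf]
      simp only [map_sum]
      rw [Finset.sum_mul_sum]
      refine Finset.sum_congr rfl fun u _ => Finset.sum_congr rfl fun u' _ => ?_
      rw [← AddChar.map_neg_eq_conj, ← AddChar.map_add_eq_mul]
      ring_nf
    have h2 : (∑ v : F, (‖f v‖ : ℂ) ^ 2) = (Q * U.card : ℝ) := by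
      simp_rw [h1]
      have : ∀ u ∈ U, ∀ u' ∈ U, (∑ v : F, ψ ((u - u') * v)) =
          if u = u' then (Q : ℂ) else 0 := by
        intro u _ u' _
        simp_rw [mul_comm (u - u')]
        rw [AddChar.sum_mulShift _ (AddChar.IsPrimitive.of_ne_one hψ)]
        simp [sub_eq_zero, Q, eq_comm]
      calc (∑ v : F, ∑ u ∈ U, ∑ u' ∈ U, ψ ((u - u') * v))
          = ∑ u ∈ U, ∑ u' ∈ U, ∑ v : F, ψ ((u - u') * v) := by
            rw [Finset.sum_comm]
            exact Finset.sum_congr rfl fun u _ => Finset.sum_comm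
        _ = ∑ u ∈ U, ∑ u' ∈ U, if u = u' then (Q : ℂ) else 0 := by
            refine Finset.sum_congr rfl fun u hu => Finset.sum_congr rfl fun u' hu' => ?_
            exact this u hu u' hu'
        _ = ∑ u ∈ U, (Q : ℂ) := by
            refine Finset.sum_congr rfl fun u hu => ?_
            rw [Finset.sum_ite_eq, if_pos hu]
        _ = (Q * U.card : ℝ) := by
            rw [Finset.sum_const, nsmul_eq_mul]; push_cast; ring
    have := congrArg Complex.re h2
    simpa [← Complex.ofReal_pow] using this
  -- Cauchy–Schwarz
  have hCS : (∑ v ∈ V, ‖f v‖) ^ 2 ≤ (V.card : ℝ) * ∑ v ∈ V, ‖f v‖ ^ 2 := by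
    have := Finset.sum_mul_sq_le_sq_mul_sq V (fun _ => (1 : ℝ)) (fun v => ‖f v‖)
    simp only [one_mul, one_pow, Finset.sum_const, nsmul_eq_mul, mul_one] at this
    exact this
  have hsub : ∑ v ∈ V, ‖f v‖ ^ 2 ≤ ∑ v : F, ‖f v‖ ^ 2 :=
    Finset.sum_le_sum_of_subset_of_nonneg (Finset.subset_univ V)
      (fun i _ _ => by positivity)
  have hnorm : ‖∑ v ∈ V, f v‖ ≤ ∑ v ∈ V, ‖f v‖ := norm_sum_le _ _
  have hsq : ‖∑ v ∈ V, f v‖ ^ 2 ≤ Q * (U.card * V.card) := by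
    calc ‖∑ v ∈ V, f v‖ ^ 2 ≤ (∑ v ∈ V, ‖f v‖) ^ 2 := by
          apply pow_le_pow_left₀ (norm_nonneg _) hnorm
      _ ≤ (V.card : ℝ) * ∑ v ∈ V, ‖f v‖ ^ 2 := hCS
      _ ≤ (V.card : ℝ) * (Q * U.card) := by
          refine mul_le_mul_of_nonneg_left (le_trans hsub (le_of_eq key)) ?_
          positivity
      _ = Q * (U.card * V.card) := by ring
  have hfin : ‖∑ v ∈ V, f v‖ ≤ Real.sqrt (Q * (U.card * V.card)) := by
    rw [show (Q * ((U.card:ℝ) * V.card)) = Real.sqrt (Q * (U.card * V.card)) ^ 2 from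
      (Real.sq_sqrt (by positivity)).symm] at hsq
    exact (pow_le_pow_iff_left₀ (norm_nonneg _) (Real.sqrt_nonneg _) two_ne_zero).mp hsq
  rw [← Real.sqrt_mul hQ0]
  exact hfin
end

section
/- Let F be a finite field with Q elements, let ψ be a nontrivial additive character of F with values in the complex numbers, and let H be a subgroup of the multiplicative group Fˣ. Then |Σ_{u ∈ H} ψ(u)| ≤ √Q. -/
open scoped Classical

/-- Let `F` be a finite field with `Q` elements, `ψ` a nontrivial
additive character of `F` with values in `ℂ`, and `H` a subgroup of `Fˣ`. Then
`|∑ u ∈ H, ψ u| ≤ √Q`. -/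
theorem character_sum_over_subgroup_bound
    (F : Type*) [Field F] [Fintype F] (ψ : AddChar F ℂ) (hψ : ψ ≠ 1)
    (H : Subgroup Fˣ) :
    ‖∑ u : H, ψ ((u : Fˣ) : F)‖ ≤ Real.sqrt (Fintype.card F) := by
  classical
  have hprim : ψ.IsPrimitive := AddChar.IsPrimitive.of_ne_one hψ
  set S : ℂ := ∑ u : H, ψ ((u : Fˣ) : F) with hS
  set f : F → ℂ := fun t => ∑ u : H, ψ (t * ((u : Fˣ) : F)) with hf
  -- Total second moment over all of F equals |H| * Q (as a complex number).
  have hC : ∑ t : F, (f t * (starRingEnd ℂ) (f t))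
      = (Fintype.card H : ℂ) * (Fintype.card F : ℂ) := by
    have h1 : ∀ t : F, f t * (starRingEnd ℂ) (f t)
        = ∑ u : H, ∑ v : H, ψ (t * (((u : Fˣ) : F) - ((v : Fˣ) : F))) := by
      intro t
      rw [hf, map_sum, Finset.sum_mul_sum]
      refine Finset.sum_congr rfl fun u _ => Finset.sum_congr rfl fun v _ => ?_
      rw [← AddChar.map_neg_eq_conj, ← AddChar.map_add_eq_mul]
      ring_nf
    calc ∑ t : F, (f t * (starRingEnd ℂ) (f t))
        = ∑ u : H, ∑ v : H, ∑ t : F,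
            ψ (t * (((u : Fˣ) : F) - ((v : Fˣ) : F))) := by
          simp_rw [h1]
          rw [Finset.sum_comm]
          exact Finset.sum_congr rfl fun u _ => Finset.sum_comm
      _ = ∑ u : H, ∑ v : H,
            (if ((u : Fˣ) : F) - ((v : Fˣ) : F) = 0 then (Fintype.card F : ℂ) else 0) := by
          refine Finset.sum_congr rfl fun u _ => Finset.sum_congr rfl fun v _ => ?_
          rw [AddChar.sum_mulShift _ hprim]
          split_ifs <;> simp
      _ = (Fintype.card H : ℂ) * (Fintype.card F : ℂ) := by
          have heq : ∀ u v : H, (((u : Fˣ) : F) - ((v : Fˣ) : F) = 0) ↔ v = u := by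
            intro u v
            rw [sub_eq_zero]
            constructor
            · intro h; exact (Subtype.ext (Units.ext h)).symm
            · rintro rfl; rfl
          simp_rw [heq]
          simp [Finset.sum_ite_eq, Finset.card_univ, mul_comm]
  -- Real version of the second moment identity.
  have key : ∑ t : F, ‖f t‖ ^ 2 = (Fintype.card H : ℝ) * Fintype.card F := by
    have := hC
    simp_rw [Complex.mul_conj'] at this
    exact_mod_cast this
  -- On H itself, each partial sum equals S.
  have hcoset : ∀ t : H, f ((t : Fˣ) : F) = S := by
    intro t
    rw [hf, hS]
    refine Fintype.sum_bijective (fun u => t * u) (Group.mulLeft_bijective t) _ _ fun u => ?_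
    simp [Units.val_mul]
  have hinj : Function.Injective (fun t : H => ((t : Fˣ) : F)) :=
    fun a b h => Subtype.ext (Units.ext h)
  -- Lower bound: |H| * ‖S‖² ≤ total second moment.
  have hlow : (Fintype.card H : ℝ) * ‖S‖ ^ 2 ≤ ∑ t : F, ‖f t‖ ^ 2 := by
    have hsub : ∑ t ∈ Finset.univ.image (fun t : H => ((t : Fˣ) : F)), ‖f t‖ ^ 2
        ≤ ∑ t : F, ‖f t‖ ^ 2 :=
      Finset.sum_le_sum_of_subset_of_nonneg (Finset.subset_univ _)
        (fun i _ _ => sq_nonneg _)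
    rw [Finset.sum_image (fun a _ b _ h => hinj h)] at hsub
    simp_rw [hcoset] at hsub
    simpa [Finset.card_univ, mul_comm] using hsub
  have hsq : ‖S‖ ^ 2 ≤ (Fintype.card F : ℝ) := by
    have hH : 0 < (Fintype.card H : ℝ) := by positivity
    have := hlow.trans_eq key
    exact le_of_mul_le_mul_left this hH
  calc ‖S‖ = Real.sqrt (‖S‖ ^ 2) := by rw [Real.sqrt_sq (norm_nonneg _)]
    _ ≤ Real.sqrt (Fintype.card F) := Real.sqrt_le_sqrt hsq
end

section
/- For every integer n ≥ 10, the Euler totient function satisfies φ(n)/n ≥ 3 / (e^γ · π² · log log n), where γ is the Euler–Mascheroni constant and log denotes the natural logarithm. -/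
open Finset ArithmeticFunction

namespace TotientAux
lemma exp_ub {q : ℝ} (k : ℕ) (hk : 0 < (k:ℝ)) (hq : 0 ≤ q) (hqk : q < k) :
    Real.exp q ≤ ((1 - q/k)⁻¹)^k := by
  have h1 : 0 < 1 - q/k := by
    have : q/k < 1 := (div_lt_one hk).mpr hqk
    linarith
  have e1 : 1 - q/k ≤ (Real.exp (q/k))⁻¹ := by
    have := Real.add_one_le_exp (-(q/k))
    rw [Real.exp_neg] at this; linarith
  have e2 : Real.exp (q/k) ≤ (1 - q/k)⁻¹ := by
    rw [← one_div, le_div_iff₀ h1]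
    calc Real.exp (q/k) * (1-q/k) ≤ Real.exp (q/k) * (Real.exp (q/k))⁻¹ :=
          mul_le_mul_of_nonneg_left e1 (Real.exp_nonneg _)
      _ = 1 := mul_inv_cancel₀ (Real.exp_ne_zero _)
  have : Real.exp q = (Real.exp (q/k))^k := by
    rw [← Real.exp_nat_mul]; congr 1; field_simp
  rw [this]
  exact pow_le_pow_left₀ (Real.exp_nonneg _) e2 k

lemma exp_lb {q : ℝ} (k : ℕ) (hk : 0 < (k:ℝ)) (hq : 0 ≤ q) :
    (1 + q/k)^k ≤ Real.exp q := by
  have : Real.exp q = (Real.exp (q/k))^k := by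
    rw [← Real.exp_nat_mul]; congr 1; field_simp
  rw [this]
  exact pow_le_pow_left₀ (by positivity) (by linarith [Real.add_one_le_exp (q/k)]) k

lemma log_ge {x q : ℝ} (k : ℕ) (hk : 0 < (k:ℝ)) (hq : 0 ≤ q) (hqk : q < k)
    (h : ((1 - q/k)⁻¹)^k ≤ x) : q ≤ Real.log x := by
  have e3 : Real.exp q ≤ x := le_trans (exp_ub k hk hq hqk) h
  have hx : 0 < x := lt_of_lt_of_le (Real.exp_pos q) e3
  exact (Real.le_log_iff_exp_le hx).mpr e3

lemma log_le {x q : ℝ} (k : ℕ) (hk : 0 < (k:ℝ)) (hq : 0 ≤ q) (hx : 0 < x)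
    (h : x ≤ (1 + q/k)^k) : Real.log x ≤ q := by
  exact (Real.log_le_iff_le_exp hx).mpr (le_trans h (exp_lb k hk hq))

lemma log2_lb : (0.6931471803:ℝ) ≤ Real.log 2 := le_of_lt Real.log_two_gt_d9
lemma log2_ub : Real.log 2 ≤ 0.6931471808 := le_of_lt Real.log_two_lt_d9

lemma log_split (e : ℕ) (x : ℝ) (hx : 0 < x) :
    Real.log (2^e * x) = e * Real.log 2 + Real.log x := by
  rw [Real.log_mul (by positivity) hx.ne', Real.log_pow]

/-- `log 100 ≤ 4.6060830848` -/
lemma log100_ub : Real.log 100 ≤ 4.6060830848 := by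
  have h : (100:ℝ) = 2^6 * (1.25 * 1.25) := by norm_num
  have h54 : Real.log 1.25 ≤ 0.2236 := log_le 64 (by norm_num) (by norm_num) (by norm_num)
    (by norm_num)
  rw [h, log_split 6 _ (by norm_num), Real.log_mul (by norm_num) (by norm_num)]
  nlinarith [log2_ub]

lemma log100_lb : (4.6042830818:ℝ) ≤ Real.log 100 := by
  have h : (100:ℝ) = 2^6 * (1.25 * 1.25) := by norm_num
  have h54 : (0.2227:ℝ) ≤ Real.log 1.25 := log_ge 64 (by norm_num) (by norm_num) (by norm_num)
    (by norm_num)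
  rw [h, log_split 6 _ (by norm_num), Real.log_mul (by norm_num) (by norm_num)]
  nlinarith [log2_lb]

lemma lll100_lb : (1.5267943606:ℝ) ≤ Real.log (Real.log 100) := by
  have h1 : (4.6042830818:ℝ) = 2^2 * 1.15107077045 := by norm_num
  have h2 : (0.1405:ℝ) ≤ Real.log 1.15107077045 := log_ge 64 (by norm_num) (by norm_num)
    (by norm_num) (by norm_num)
  have h3 : Real.log 4.6042830818 ≤ Real.log (Real.log 100) :=
    Real.log_le_log (by norm_num) log100_lb
  rw [h1, log_split 2 _ (by norm_num)] at h3
  nlinarith [log2_lb]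

lemma log102_lb : (4.6228830818:ℝ) ≤ Real.log 102 := by
  have h : (102:ℝ) = 2^6 * 1.59375 := by norm_num
  have h2 : (0.464:ℝ) ≤ Real.log 1.59375 := log_ge 64 (by norm_num) (by norm_num) (by norm_num)
    (by norm_num)
  rw [h, log_split 6 _ (by norm_num)]
  nlinarith [log2_lb]

lemma log17_lb : (2.8331687212:ℝ) ≤ Real.log 17 := by
  have h : (17:ℝ) = 2^4 * 1.0625 := by norm_num
  have h2 : (0.06058:ℝ) ≤ Real.log 1.0625 := log_ge 64 (by norm_num) (by norm_num) (by norm_num)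
    (by norm_num)
  rw [h, log_split 4 _ (by norm_num)]
  nlinarith [log2_lb]

lemma lll17_lb : (1.0401471803:ℝ) ≤ Real.log (Real.log 17) := by
  have h1 : (2.8331687212:ℝ) = 2^1 * 1.4165843606 := by norm_num
  have h2 : (0.347:ℝ) ≤ Real.log 1.4165843606 := log_ge 64 (by norm_num) (by norm_num)
    (by norm_num) (by norm_num)
  have h3 : Real.log 2.8331687212 ≤ Real.log (Real.log 17) :=
    Real.log_le_log (by norm_num) log17_lb
  rw [h1, log_split 1 _ (by norm_num)] at h3
  nlinarith [log2_lb]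

lemma log10_lb : (2.3021415409:ℝ) ≤ Real.log 10 := by
  have h : (10:ℝ) = 2^3 * 1.25 := by norm_num
  have h2 : (0.2227:ℝ) ≤ Real.log 1.25 := log_ge 64 (by norm_num) (by norm_num) (by norm_num)
    (by norm_num)
  rw [h, log_split 3 _ (by norm_num)]
  nlinarith [log2_lb]

lemma lll10_lb : (0.8336471803:ℝ) ≤ Real.log (Real.log 10) := by
  have h1 : (2.3021415409:ℝ) = 2^1 * 1.15107077045 := by norm_num
  have h2 : (0.1405:ℝ) ≤ Real.log 1.15107077045 := log_ge 64 (by norm_num) (by norm_num)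
    (by norm_num) (by norm_num)
  have h3 : Real.log 2.3021415409 ≤ Real.log (Real.log 10) :=
    Real.log_le_log (by norm_num) log10_lb
  rw [h1, log_split 1 _ (by norm_num)] at h3
  nlinarith [log2_lb]

lemma logBig_lb : (16.0873851469:ℝ) ≤ Real.log 9699690 := by
  have h : (9699690:ℝ) = 2^23 * (4849845/4194304) := by norm_num
  have h2 : (0.145:ℝ) ≤ Real.log (4849845/4194304) := log_ge 64 (by norm_num) (by norm_num)
    (by norm_num) (by norm_num)
  rw [h, log_split 23 _ (by norm_num)]
  nlinarith [log2_lb]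

lemma lllBig_lb : (2.7780287212:ℝ) ≤ Real.log (Real.log 9699690) := by
  have h1 : (16.0873851469:ℝ) = 2^4 * 1.00546157168125 := by norm_num
  have h2 : (0.00544:ℝ) ≤ Real.log 1.00546157168125 := log_ge 64 (by norm_num) (by norm_num)
    (by norm_num) (by norm_num)
  have h3 : Real.log 16.0873851469 ≤ Real.log (Real.log 9699690) :=
    Real.log_le_log (by norm_num) logBig_lb
  rw [h1, log_split 4 _ (by norm_num)] at h3
  nlinarith [log2_lb]

noncomputable def thA (N : ℕ) : ℝ := ∑ p ∈ Nat.primesBelow (N+1), Real.log p / p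
noncomputable def thP (N : ℕ) : ℝ := ∑ p ∈ Nat.primesBelow (N+1), ((p:ℝ))⁻¹

lemma primesBelow_subset_Icc (N : ℕ) : Nat.primesBelow (N+1) ⊆ Icc 1 N := by
  intro p hp
  have h1 := Nat.prime_of_mem_primesBelow hp
  have h2 := Nat.lt_of_mem_primesBelow hp
  simp only [mem_Icc]
  exact ⟨h1.one_lt.le, by omega⟩

lemma theta_le (N : ℕ) : ∑ p ∈ Nat.primesBelow (N+1), Real.log p ≤ N * (2 * Real.log 2) := by
  have hne : ∀ p ∈ Nat.primesBelow (N+1), ((p:ℝ)) ≠ 0 := fun p hp => by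
    have := (Nat.prime_of_mem_primesBelow hp).pos; positivity
  have h1 : Real.log (primorial N) = ∑ p ∈ Nat.primesBelow (N+1), Real.log p := by
    have : ((primorial N : ℕ) : ℝ) = ∏ p ∈ Nat.primesBelow (N+1), (p:ℝ) := by
      rw [primorial, Nat.primesBelow]; push_cast; rfl
    rw [this, Real.log_prod hne]
  have h2 : Real.log (primorial N) ≤ Real.log (4^N) := by
    apply Real.log_le_log (by exact_mod_cast primorial_pos N)
    exact_mod_cast primorial_le_4_pow N
  rw [h1] at h2
  calc ∑ p ∈ Nat.primesBelow (N+1), Real.log p ≤ Real.log (4^N) := h2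
    _ = N * (2 * Real.log 2) := by
        rw [show (4:ℝ) = 2^2 by norm_num, ← pow_mul, Real.log_pow]; push_cast; ring

lemma vonMangoldt_identity (N : ℕ) :
    ∑ d ∈ Icc 1 N, Λ d * ((N / d : ℕ):ℝ) = ∑ m ∈ Icc 1 N, Real.log m := by
  have h1 : ∀ m ∈ Icc 1 N, Real.log (m:ℝ) = ∑ i ∈ m.divisors, Λ i := fun m _ =>
    vonMangoldt_sum.symm
  rw [Finset.sum_congr rfl h1]
  rw [Finset.sum_comm' (s := Icc 1 N) (t := fun m => m.divisors)
      (s' := fun d => (Icc 1 N).filter (d ∣ ·)) (t' := Icc 1 N) (f := fun _ i => Λ i) ?_]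
  · apply Finset.sum_congr rfl
    intro d _
    rw [Finset.sum_const, nsmul_eq_mul, mul_comm]
    congr 1
    rw [show Icc 1 N = Ioc 0 N from (Finset.Icc_add_one_left_eq_Ioc 0 N)]
    exact_mod_cast (congrArg (Nat.cast (R := ℝ)) (Nat.Ioc_filter_dvd_card_eq_div N d)).symm
  · intro m d
    simp only [mem_Icc, Nat.mem_divisors, mem_filter]
    constructor
    · rintro ⟨⟨h1, h2⟩, ⟨h3, h4⟩⟩
      have hd : 0 < d := Nat.pos_of_dvd_of_pos h3 (by omega)
      exact ⟨⟨⟨h1, h2⟩, h3⟩, hd, le_trans (Nat.le_of_dvd (by omega) h3) h2⟩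
    · rintro ⟨⟨⟨h1, h2⟩, h3⟩, _, _⟩
      exact ⟨⟨h1, h2⟩, h3, by omega⟩

lemma sum_log_le (N : ℕ) :
    ∑ m ∈ Icc 1 N, Real.log m ≤ N * Real.log N - N + 1 + Real.log N := by
  induction N with
  | zero => simp
  | succ N ih =>
    rw [Finset.sum_Icc_succ_top (by omega)]
    rcases Nat.eq_zero_or_pos N with h | h
    · subst h; norm_num
    have hN1 : (1:ℝ) ≤ N := by exact_mod_cast h
    have hstep : 1/((N:ℝ)+1) ≤ Real.log ((N:ℝ)+1) - Real.log N := by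
      have h1 : Real.log ((N:ℝ)/((N:ℝ)+1)) ≤ (N:ℝ)/((N:ℝ)+1) - 1 :=
        Real.log_le_sub_one_of_pos (by positivity)
      rw [Real.log_div (by positivity) (by positivity)] at h1
      have h2 : (N:ℝ)/((N:ℝ)+1) - 1 = -(1/((N:ℝ)+1)) := by field_simp; ring
      rw [h2] at h1; linarith
    have hkey : 1 ≤ ((N:ℝ)+1) * (Real.log ((N:ℝ)+1) - Real.log N) := by
      have h3 := mul_le_mul_of_nonneg_left hstep (by positivity : (0:ℝ) ≤ (N:ℝ)+1)
      rwa [mul_one_div, div_self (by positivity : ((N:ℝ)+1) ≠ 0)] at h3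
    push_cast
    push_cast at ih
    nlinarith [hkey]

lemma cast_div_ge (N d : ℕ) (hd : 0 < d) : (N:ℝ)/d - 1 ≤ ((N/d : ℕ):ℝ) := by
  have h1 : N < d * (N/d) + d := by
    have := Nat.div_add_mod N d
    have := Nat.mod_lt N hd
    omega
  have h2 : (N:ℝ) < d * ((N/d:ℕ):ℝ) + d := by exact_mod_cast h1
  have hd' : (0:ℝ) < d := by exact_mod_cast hd
  rw [sub_le_iff_le_add, div_le_iff₀ hd']
  nlinarith

lemma thA_le (N : ℕ) (hN : 100 ≤ N) : thA N ≤ Real.log N + 23/50 := by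
  have hN0 : (0:ℝ) < N := by positivity
  have hNR : (100:ℝ) ≤ N := by exact_mod_cast hN
  -- lower bound the vonMangoldt sum by the prime part
  have key1 : ∑ p ∈ Nat.primesBelow (N+1), Real.log p * ((N / p : ℕ):ℝ)
      ≤ ∑ m ∈ Icc 1 N, Real.log m := by
    rw [← vonMangoldt_identity]
    have : ∀ p ∈ Nat.primesBelow (N+1), Real.log p * ((N / p : ℕ):ℝ) = Λ p * ((N / p : ℕ):ℝ) :=
      fun p hp => by rw [vonMangoldt_apply_prime (Nat.prime_of_mem_primesBelow hp)]
    rw [Finset.sum_congr rfl this]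
    apply Finset.sum_le_sum_of_subset_of_nonneg (primesBelow_subset_Icc N)
    intro d _ _
    exact mul_nonneg vonMangoldt_nonneg (Nat.cast_nonneg _)
  -- floor bound
  have key2 : N * thA N - ∑ p ∈ Nat.primesBelow (N+1), Real.log p
      ≤ ∑ p ∈ Nat.primesBelow (N+1), Real.log p * ((N / p : ℕ):ℝ) := by
    rw [thA, Finset.mul_sum, ← Finset.sum_sub_distrib]
    apply Finset.sum_le_sum
    intro p hp
    have hp2 := (Nat.prime_of_mem_primesBelow hp).two_le
    have hpR : (0:ℝ) < p := by positivity
    have hlp : 0 ≤ Real.log p := Real.log_natCast_nonneg p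
    have := cast_div_ge N p (by omega)
    calc (N:ℝ) * (Real.log p / p) - Real.log p = Real.log p * ((N:ℝ)/p - 1) := by ring
      _ ≤ Real.log p * ((N / p : ℕ):ℝ) := mul_le_mul_of_nonneg_left this hlp
  have key3 := theta_le N
  have key4 := sum_log_le N
  -- combine: N * thA N ≤ N log N - N + 1 + log N + N * 2 log 2
  have key5 : N * thA N ≤ N * Real.log N - N + 1 + Real.log N + N * (2 * Real.log 2) := by
    linarith
  -- numeric: (log N + 1)/N ≤ 0.0561 etc.
  have hlogN : Real.log N ≤ Real.log 100 + (N/100 - 1) := by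
    have h1 : Real.log ((N:ℝ)/100) ≤ (N:ℝ)/100 - 1 := Real.log_le_sub_one_of_pos (by positivity)
    rw [Real.log_div hN0.ne' (by norm_num)] at h1
    linarith
  have hl2 := log2_ub
  have hl100 := log100_ub
  -- conclude
  rw [← mul_le_mul_iff_right₀ hN0]
  calc N * thA N ≤ N * Real.log N - N + 1 + Real.log N + N * (2 * Real.log 2) := key5
    _ ≤ N * (Real.log N + 23/50) := by nlinarith


set_option maxRecDepth 60000 in
lemma primesBelow101 : Nat.primesBelow 101 = ({2,3,5,7,11,13,17,19,23,29,31,37,41,43,47,53,59,61,67,71,73,79,83,89,97} : Finset ℕ) := by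
  decide

set_option maxHeartbeats 1000000 in
lemma thP100_ub : thP 100 ≤ 1.802818 := by
  rw [thP, show (100+1) = 101 from rfl, primesBelow101]
  rw [show ({2,3,5,7,11,13,17,19,23,29,31,37,41,43,47,53,59,61,67,71,73,79,83,89,97} : Finset ℕ) = (List.toFinset [2,3,5,7,11,13,17,19,23,29,31,37,41,43,47,53,59,61,67,71,73,79,83,89,97]) from rfl]
  rw [List.sum_toFinset _ (by decide)]
  norm_num [List.map, List.sum_cons]

set_option maxHeartbeats 1000000 in
lemma thA100_lb : (3.3:ℝ) ≤ thA 100 := by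
  have hA3 : (1.0970471803:ℝ) ≤ Real.log 3 := by
    have hq : (0.4039:ℝ) ≤ Real.log (1.5) :=
      log_ge 64 (by norm_num) (by norm_num) (by norm_num) (by norm_num)
    rw [show (3:ℝ) = 2^1 * (1.5) by norm_num, log_split 1 _ (by norm_num)]
    nlinarith [log2_lb]
  have hA5 : (1.6087943606:ℝ) ≤ Real.log 5 := by
    have hq : (0.2225:ℝ) ≤ Real.log (1.25) :=
      log_ge 64 (by norm_num) (by norm_num) (by norm_num) (by norm_num)
    rw [show (5:ℝ) = 2^2 * (1.25) by norm_num, log_split 2 _ (by norm_num)]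
    nlinarith [log2_lb]
  have hA7 : (1.9431943606:ℝ) ≤ Real.log 7 := by
    have hq : (0.5569:ℝ) ≤ Real.log (1.75) :=
      log_ge 64 (by norm_num) (by norm_num) (by norm_num) (by norm_num)
    rw [show (7:ℝ) = 2^2 * (1.75) by norm_num, log_split 2 _ (by norm_num)]
    nlinarith [log2_lb]
  have hA11 : (2.3968415409:ℝ) ≤ Real.log 11 := by
    have hq : (0.3174:ℝ) ≤ Real.log (1.375) :=
      log_ge 64 (by norm_num) (by norm_num) (by norm_num) (by norm_num)
    rw [show (11:ℝ) = 2^3 * (1.375) by norm_num, log_split 3 _ (by norm_num)]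
    nlinarith [log2_lb]
  have hA13 : (2.5628415409:ℝ) ≤ Real.log 13 := by
    have hq : (0.4834:ℝ) ≤ Real.log (1.625) :=
      log_ge 64 (by norm_num) (by norm_num) (by norm_num) (by norm_num)
    rw [show (13:ℝ) = 2^3 * (1.625) by norm_num, log_split 3 _ (by norm_num)]
    nlinarith [log2_lb]
  have hA17 : (2.8328887212:ℝ) ≤ Real.log 17 := by
    have hq : (0.0603:ℝ) ≤ Real.log (1.0625) :=
      log_ge 64 (by norm_num) (by norm_num) (by norm_num) (by norm_num)
    rw [show (17:ℝ) = 2^4 * (1.0625) by norm_num, log_split 4 _ (by norm_num)]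
    nlinarith [log2_lb]
  have hA19 : (2.9439887212:ℝ) ≤ Real.log 19 := by
    have hq : (0.1714:ℝ) ≤ Real.log (1.1875) :=
      log_ge 64 (by norm_num) (by norm_num) (by norm_num) (by norm_num)
    rw [show (19:ℝ) = 2^4 * (1.1875) by norm_num, log_split 4 _ (by norm_num)]
    nlinarith [log2_lb]
  have hA23 : (3.1341887212:ℝ) ≤ Real.log 23 := by
    have hq : (0.3616:ℝ) ≤ Real.log (1.4375) :=
      log_ge 64 (by norm_num) (by norm_num) (by norm_num) (by norm_num)
    rw [show (23:ℝ) = 2^4 * (1.4375) by norm_num, log_split 4 _ (by norm_num)]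
    nlinarith [log2_lb]
  have hA29 : (3.3642887212:ℝ) ≤ Real.log 29 := by
    have hq : (0.5917:ℝ) ≤ Real.log (1.8125) :=
      log_ge 64 (by norm_num) (by norm_num) (by norm_num) (by norm_num)
    rw [show (29:ℝ) = 2^4 * (1.8125) by norm_num, log_split 4 _ (by norm_num)]
    nlinarith [log2_lb]
  have hA31 : (3.4302887212:ℝ) ≤ Real.log 31 := by
    have hq : (0.6577:ℝ) ≤ Real.log (1.9375) :=
      log_ge 64 (by norm_num) (by norm_num) (by norm_num) (by norm_num)
    rw [show (31:ℝ) = 2^4 * (1.9375) by norm_num, log_split 4 _ (by norm_num)]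
    nlinarith [log2_lb]
  have hA37 : (3.6105359015:ℝ) ≤ Real.log 37 := by
    have hq : (0.1448:ℝ) ≤ Real.log (1.15625) :=
      log_ge 64 (by norm_num) (by norm_num) (by norm_num) (by norm_num)
    rw [show (37:ℝ) = 2^5 * (1.15625) by norm_num, log_split 5 _ (by norm_num)]
    nlinarith [log2_lb]
  have hA41 : (3.7128359015:ℝ) ≤ Real.log 41 := by
    have hq : (0.2471:ℝ) ≤ Real.log (1.28125) :=
      log_ge 64 (by norm_num) (by norm_num) (by norm_num) (by norm_num)
    rw [show (41:ℝ) = 2^5 * (1.28125) by norm_num, log_split 5 _ (by norm_num)]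
    nlinarith [log2_lb]
  have hA43 : (3.7602359015:ℝ) ≤ Real.log 43 := by
    have hq : (0.2945:ℝ) ≤ Real.log (1.34375) :=
      log_ge 64 (by norm_num) (by norm_num) (by norm_num) (by norm_num)
    rw [show (43:ℝ) = 2^5 * (1.34375) by norm_num, log_split 5 _ (by norm_num)]
    nlinarith [log2_lb]
  have hA47 : (3.8487359015:ℝ) ≤ Real.log 47 := by
    have hq : (0.383:ℝ) ≤ Real.log (1.46875) :=
      log_ge 64 (by norm_num) (by norm_num) (by norm_num) (by norm_num)
    rw [show (47:ℝ) = 2^5 * (1.46875) by norm_num, log_split 5 _ (by norm_num)]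
    nlinarith [log2_lb]
  have hA53 : (3.9680359015:ℝ) ≤ Real.log 53 := by
    have hq : (0.5023:ℝ) ≤ Real.log (1.65625) :=
      log_ge 64 (by norm_num) (by norm_num) (by norm_num) (by norm_num)
    rw [show (53:ℝ) = 2^5 * (1.65625) by norm_num, log_split 5 _ (by norm_num)]
    nlinarith [log2_lb]
  have hA59 : (4.0743359015:ℝ) ≤ Real.log 59 := by
    have hq : (0.6086:ℝ) ≤ Real.log (1.84375) :=
      log_ge 64 (by norm_num) (by norm_num) (by norm_num) (by norm_num)
    rw [show (59:ℝ) = 2^5 * (1.84375) by norm_num, log_split 5 _ (by norm_num)]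
    nlinarith [log2_lb]
  have hA61 : (4.1073359015:ℝ) ≤ Real.log 61 := by
    have hq : (0.6416:ℝ) ≤ Real.log (1.90625) :=
      log_ge 64 (by norm_num) (by norm_num) (by norm_num) (by norm_num)
    rw [show (61:ℝ) = 2^5 * (1.90625) by norm_num, log_split 5 _ (by norm_num)]
    nlinarith [log2_lb]
  have hA67 : (4.2043830818:ℝ) ≤ Real.log 67 := by
    have hq : (0.0455:ℝ) ≤ Real.log (1.046875) :=
      log_ge 64 (by norm_num) (by norm_num) (by norm_num) (by norm_num)
    rw [show (67:ℝ) = 2^6 * (1.046875) by norm_num, log_split 6 _ (by norm_num)]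
    nlinarith [log2_lb]
  have hA71 : (4.2623830818:ℝ) ≤ Real.log 71 := by
    have hq : (0.1035:ℝ) ≤ Real.log (1.109375) :=
      log_ge 64 (by norm_num) (by norm_num) (by norm_num) (by norm_num)
    rw [show (71:ℝ) = 2^6 * (1.109375) by norm_num, log_split 6 _ (by norm_num)]
    nlinarith [log2_lb]
  have hA73 : (4.2900830818:ℝ) ≤ Real.log 73 := by
    have hq : (0.1312:ℝ) ≤ Real.log (1.140625) :=
      log_ge 64 (by norm_num) (by norm_num) (by norm_num) (by norm_num)
    rw [show (73:ℝ) = 2^6 * (1.140625) by norm_num, log_split 6 _ (by norm_num)]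
    nlinarith [log2_lb]
  have hA79 : (4.3688830818:ℝ) ≤ Real.log 79 := by
    have hq : (0.21:ℝ) ≤ Real.log (1.234375) :=
      log_ge 64 (by norm_num) (by norm_num) (by norm_num) (by norm_num)
    rw [show (79:ℝ) = 2^6 * (1.234375) by norm_num, log_split 6 _ (by norm_num)]
    nlinarith [log2_lb]
  have hA83 : (4.4180830818:ℝ) ≤ Real.log 83 := by
    have hq : (0.2592:ℝ) ≤ Real.log (1.296875) :=
      log_ge 64 (by norm_num) (by norm_num) (by norm_num) (by norm_num)
    rw [show (83:ℝ) = 2^6 * (1.296875) by norm_num, log_split 6 _ (by norm_num)]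
    nlinarith [log2_lb]
  have hA89 : (4.4875830818:ℝ) ≤ Real.log 89 := by
    have hq : (0.3287:ℝ) ≤ Real.log (1.390625) :=
      log_ge 64 (by norm_num) (by norm_num) (by norm_num) (by norm_num)
    rw [show (89:ℝ) = 2^6 * (1.390625) by norm_num, log_split 6 _ (by norm_num)]
    nlinarith [log2_lb]
  have hA97 : (4.5730830818:ℝ) ≤ Real.log 97 := by
    have hq : (0.4142:ℝ) ≤ Real.log (1.515625) :=
      log_ge 64 (by norm_num) (by norm_num) (by norm_num) (by norm_num)
    rw [show (97:ℝ) = 2^6 * (1.515625) by norm_num, log_split 6 _ (by norm_num)]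
    nlinarith [log2_lb]
  rw [thA, show (100+1) = 101 from rfl, primesBelow101]
  rw [show ({2,3,5,7,11,13,17,19,23,29,31,37,41,43,47,53,59,61,67,71,73,79,83,89,97} : Finset ℕ) = (List.toFinset [2,3,5,7,11,13,17,19,23,29,31,37,41,43,47,53,59,61,67,71,73,79,83,89,97]) from rfl]
  rw [List.sum_toFinset _ (by decide)]
  simp only [List.map, List.sum_cons, List.sum_nil]
  push_cast
  linarith [log2_lb]

lemma thP_mono {a b : ℕ} (h : a ≤ b) : thP a ≤ thP b := by
  apply Finset.sum_le_sum_of_subset_of_nonneg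
  · intro p hp
    rw [Nat.mem_primesBelow] at *
    exact ⟨by omega, hp.2⟩
  · intro p _ _
    positivity

lemma thP101_ub : thP 101 ≤ 1.812719 := by
  have h : thP 101 = thP 100 + ((101:ℕ):ℝ)⁻¹ := by
    rw [thP, thP, show (101+1) = 102 from rfl, show (100+1) = 101 from rfl]
    rw [show (102 : ℕ) = 101 + 1 from rfl, Nat.primesBelow_succ, if_pos (by norm_num : Nat.Prime 101)]
    rw [Finset.sum_insert (Nat.notMem_primesBelow 101)]
    ring
  rw [h]
  have := thP100_ub
  norm_num at *
  linarith


lemma thP_inv : ∀ M : ℕ, 100 ≤ M →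
    thP M ≤ Real.log (Real.log M) - 51/200 + (thA M - 23/50) / Real.log M := by
  refine Nat.le_induction ?_ ?_
  · -- base case M = 100
    have h1 := thA100_lb
    have h2 := thP100_ub
    have h3 := lll100_lb
    have h4 := log100_ub
    have hlogpos : (0:ℝ) < Real.log 100 := lt_of_lt_of_le (by norm_num) log100_lb
    have key : (2.84:ℝ)/4.6060830848 ≤ (thA 100 - 23/50)/Real.log 100 :=
      div_le_div₀ (by linarith) (by linarith) hlogpos h4
    push_cast
    norm_num at *
    linarith
  · -- inductive step
    intro M hM ih
    have hM0 : (0:ℝ) < M := by positivity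
    have hM100 : (100:ℝ) ≤ M := by exact_mod_cast hM
    have ht : (0:ℝ) < Real.log M :=
      lt_of_lt_of_le (by norm_num) (le_trans log100_lb (Real.log_le_log (by norm_num) hM100))
    have hMM : (M:ℝ) ≤ ((M:ℝ)+1) := by linarith
    have hu : Real.log M ≤ Real.log ((M:ℝ)+1) := Real.log_le_log hM0 hMM
    have hu0 : (0:ℝ) < Real.log ((M:ℝ)+1) := lt_of_lt_of_le ht hu
    have hcast : ((M+1 : ℕ):ℝ) = (M:ℝ)+1 := by push_cast; ring
    -- key1 : the A-increment cancels against the P-increment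
    have key1 : thP (M+1) - (thA (M+1) - 23/50)/Real.log ((M:ℝ)+1)
        = thP M - (thA M - 23/50)/Real.log ((M:ℝ)+1) := by
      rw [thP, thA, show (M+1+1) = (M+1)+1 from rfl, Nat.primesBelow_succ]
      by_cases hp : (M+1).Prime
      · rw [if_pos hp, Finset.sum_insert (Nat.notMem_primesBelow (M+1)),
          Finset.sum_insert (Nat.notMem_primesBelow (M+1))]
        rw [← thP, ← thA, hcast]
        field_simp
        ring
      · rw [if_neg hp, ← thP, ← thA]
    have hAM := thA_le M hM
    have e1 : (thA M - 23/50)/Real.log M - (thA M - 23/50)/Real.log ((M:ℝ)+1)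
        = (thA M - 23/50) * (1/Real.log M - 1/Real.log ((M:ℝ)+1)) := by ring
    have key2 : (thA M - 23/50) * (1/Real.log M - 1/Real.log ((M:ℝ)+1))
        ≤ Real.log M * (1/Real.log M - 1/Real.log ((M:ℝ)+1)) := by
      apply mul_le_mul_of_nonneg_right (by linarith)
      have : 1/Real.log ((M:ℝ)+1) ≤ 1/Real.log M := by
        apply one_div_le_one_div_of_le ht hu
      linarith
    have e2 : Real.log M * (1/Real.log M - 1/Real.log ((M:ℝ)+1))
        = 1 - Real.log M/Real.log ((M:ℝ)+1) := by
      field_simp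
    have key3 : 1 - Real.log M/Real.log ((M:ℝ)+1)
        ≤ Real.log (Real.log ((M:ℝ)+1)) - Real.log (Real.log M) := by
      have h1 : Real.log (Real.log M/Real.log ((M:ℝ)+1)) ≤ Real.log M/Real.log ((M:ℝ)+1) - 1 :=
        Real.log_le_sub_one_of_pos (by positivity)
      rw [Real.log_div ht.ne' hu0.ne'] at h1
      linarith
    rw [hcast]
    linarith [ih, key1, e1, key2, e2, key3]

lemma thP_bound (M : ℕ) (hM : 100 ≤ M) : thP M ≤ Real.log (Real.log M) + 149/200 := by
  have h1 := thP_inv M hM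
  have hM0 : (0:ℝ) < M := by positivity
  have hM100 : (100:ℝ) ≤ M := by exact_mod_cast hM
  have ht : (0:ℝ) < Real.log M :=
    lt_of_lt_of_le (by norm_num) (le_trans log100_lb (Real.log_le_log (by norm_num) hM100))
  have h2 : (thA M - 23/50)/Real.log M ≤ 1 :=
    (div_le_one ht).mpr (by linarith [thA_le M hM])
  linarith


lemma prod_one_add_le_exp (S : Finset ℕ) (f : ℕ → ℝ) (hf : ∀ p ∈ S, 0 ≤ f p) :
    ∏ p ∈ S, (1 + f p) ≤ Real.exp (∑ p ∈ S, f p) := by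
  rw [Real.exp_sum]
  exact Finset.prod_le_prod (fun p hp => by linarith [hf p hp])
    (fun p hp => by linarith [Real.add_one_le_exp (f p)])

lemma prod_subset_one_le (S T : Finset ℕ) (h : S ⊆ T) (f : ℕ → ℝ) (hf : ∀ p ∈ T, 1 ≤ f p) :
    ∏ p ∈ S, f p ≤ ∏ p ∈ T, f p := by
  rw [← Finset.prod_sdiff h]
  have h1 : 1 ≤ ∏ p ∈ T \ S, f p := by
    calc (1:ℝ) = ∏ _p ∈ T \ S, 1 := (Finset.prod_const_one).symm
      _ ≤ ∏ p ∈ T \ S, f p := Finset.prod_le_prod (fun _ _ => by norm_num)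
          (fun p hp => hf p (Finset.mem_sdiff.mp hp).1)
  have h2 : 0 ≤ ∏ p ∈ S, f p :=
    Finset.prod_nonneg (fun p hp => by linarith [hf p (h hp)])
  nlinarith

lemma sq_telescope : ∀ M : ℕ, 10 ≤ M →
    ∑ m ∈ Icc 11 M, (((m:ℝ))^2 - 1)⁻¹ ≤ 21/220 - (2*(M:ℝ))⁻¹ - (2*((M:ℝ)+1))⁻¹ := by
  refine Nat.le_induction ?_ ?_
  · norm_num
  · intro M hM ih
    have hM0 : (10:ℝ) ≤ M := by exact_mod_cast hM
    rw [Finset.sum_Icc_succ_top (by omega)]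
    have key : (((M:ℝ)+1)^2 - 1)⁻¹ = (2*(M:ℝ))⁻¹ - (2*((M:ℝ)+2))⁻¹ := by
      rw [show ((M:ℝ)+1)^2 - 1 = M*(M+2) by ring]
      rw [inv_eq_one_div, inv_eq_one_div, inv_eq_one_div]
      rw [div_sub_div _ _ (by positivity) (by positivity)]
      rw [div_eq_div_iff (by positivity) (by positivity)]
      ring
    push_cast
    push_cast at ih
    rw [key, show ((M:ℝ)+1+1) = (M:ℝ)+2 by ring]
    linarith

set_option maxHeartbeats 2000000 in
lemma T_le_big (n : ℕ) (hn : 9699690 ≤ n) :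
    ∏ p ∈ n.primeFactors, ((p:ℝ)/((p:ℝ)-1)) ≤ 5.3822 * Real.log (Real.log n) := by
  have hn0 : 0 < n := by omega
  have hprime : ∀ p ∈ n.primeFactors, Nat.Prime p := fun p hp => Nat.prime_of_mem_primeFactors hp
  have hple : ∀ p ∈ n.primeFactors, p ≤ n :=
    fun p hp => Nat.le_of_dvd hn0 (Nat.dvd_of_mem_primeFactors hp)
  have h2le : ∀ p ∈ n.primeFactors, 2 ≤ p := fun p hp => (hprime p hp).two_le
  set S := n.primeFactors with hSdef
  set y := Real.log n with hydef
  have hy16 : (16.0873851469:ℝ) ≤ y :=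
    le_trans logBig_lb (Real.log_le_log (by norm_num) (by exact_mod_cast hn))
  have hy0 : (0:ℝ) < y := by linarith
  set u := Real.log y with hudef
  have hu27 : (2.7780287212:ℝ) ≤ u := by
    have h1 : Real.log 9699690 ≤ y := Real.log_le_log (by norm_num) (by exact_mod_cast hn)
    have h2 : (0:ℝ) < Real.log 9699690 := lt_of_lt_of_le (by norm_num) logBig_lb
    exact le_trans lllBig_lb (Real.log_le_log h2 h1)
  have hu0 : (0:ℝ) < u := by linarith
  set B := ⌊y⌋₊ with hBdef
  have hB16 : 16 ≤ B := Nat.le_floor (by push_cast; linarith)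
  have hBy : (B:ℝ) ≤ y := Nat.floor_le hy0.le
  have hyB : y < (B:ℝ)+1 := by exact_mod_cast Nat.lt_floor_add_one y
  have hfact : ∀ p ∈ S, (p:ℝ)/((p:ℝ)-1) = (1+(p:ℝ)⁻¹) * (1+((p:ℝ)^2-1)⁻¹) := by
    intro p hp
    have h2 : (2:ℝ) ≤ p := by exact_mod_cast h2le p hp
    have e1 : (p:ℝ) ≠ 0 := by linarith
    have e2 : (p:ℝ)-1 ≠ 0 := by linarith
    have e3 : (p:ℝ)^2-1 ≠ 0 := by nlinarith
    field_simp
    ring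
  rw [Finset.prod_congr rfl hfact, Finset.prod_mul_distrib]
  -- bound on the quadratic product
  have hQ : ∏ p ∈ S, (1+((p:ℝ)^2-1)⁻¹) ≤ (44100/27648:ℝ) * Real.exp (21/220) := by
    rw [← Finset.prod_filter_mul_prod_filter_not S (· ≤ 10)]
    have hQs : ∏ p ∈ S.filter (· ≤ 10), (1+((p:ℝ)^2-1)⁻¹)
        ≤ ∏ p ∈ ({2,3,5,7} : Finset ℕ), (1+((p:ℝ)^2-1)⁻¹) := by
      apply prod_subset_one_le
      · intro p hp
        rcases Finset.mem_filter.mp hp with ⟨hpS, hp10⟩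
        have hpp := hprime p hpS
        have h2 := hpp.two_le
        interval_cases p <;> revert hpp <;> decide
      · intro p hp
        fin_cases hp <;> norm_num
    have hQs2 : ∏ p ∈ ({2,3,5,7} : Finset ℕ), (1+((p:ℝ)^2-1)⁻¹) = 44100/27648 := by
      norm_num [Finset.prod_insert, Finset.mem_insert]
    have hQl : ∏ p ∈ S.filter (fun p => ¬ p ≤ 10), (1+((p:ℝ)^2-1)⁻¹)
        ≤ Real.exp (21/220) := by
      have h1 : ∀ p ∈ S.filter (fun p => ¬ p ≤ 10), (0:ℝ) ≤ ((p:ℝ)^2-1)⁻¹ := by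
        intro p hp
        rcases Finset.mem_filter.mp hp with ⟨hpS, hp10⟩
        have : (11:ℝ) ≤ p := by exact_mod_cast (by omega : 11 ≤ p)
        have : (0:ℝ) < (p:ℝ)^2 - 1 := by nlinarith
        positivity
      refine le_trans (prod_one_add_le_exp _ _ h1) (Real.exp_le_exp.mpr ?_)
      have hsub : S.filter (fun p => ¬ p ≤ 10) ⊆ Icc 11 n := by
        intro p hp
        rcases Finset.mem_filter.mp hp with ⟨hpS, hp10⟩
        rw [mem_Icc]
        exact ⟨by omega, hple p hpS⟩
      have h2 : ∑ p ∈ S.filter (fun p => ¬ p ≤ 10), ((p:ℝ)^2-1)⁻¹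
          ≤ ∑ m ∈ Icc 11 n, (((m:ℝ))^2-1)⁻¹ := by
        apply Finset.sum_le_sum_of_subset_of_nonneg hsub
        intro m hm _
        have : (11:ℝ) ≤ m := by exact_mod_cast (mem_Icc.mp hm).1
        have : (0:ℝ) < (m:ℝ)^2 - 1 := by nlinarith
        positivity
      have h3 := sq_telescope n (by omega)
      have hn' : (0:ℝ) < n := by positivity
      have t1 : (0:ℝ) < (2*(n:ℝ))⁻¹ := by positivity
      have t2 : (0:ℝ) < (2*((n:ℝ)+1))⁻¹ := by positivity
      linarith
    have hQlpos : (0:ℝ) ≤ ∏ p ∈ S.filter (· ≤ 10), (1+((p:ℝ)^2-1)⁻¹) := by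
      apply Finset.prod_nonneg
      intro p hp
      rcases Finset.mem_filter.mp hp with ⟨hpS, _⟩
      have h2 : (2:ℝ) ≤ p := by exact_mod_cast h2le p hpS
      have : (0:ℝ) < (p:ℝ)^2-1 := by nlinarith
      positivity
    refine mul_le_mul (le_trans hQs (le_of_eq hQs2)) hQl ?_ (by norm_num)
    apply Finset.prod_nonneg
    intro p hp
    rcases Finset.mem_filter.mp hp with ⟨hpS, hp10⟩
    have : (11:ℝ) ≤ p := by exact_mod_cast (by omega : 11 ≤ p)
    have : (0:ℝ) < (p:ℝ)^2 - 1 := by nlinarith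
    positivity
  -- bound on the linear product
  have hL : ∏ p ∈ S, (1+(p:ℝ)⁻¹) ≤ (96/35:ℝ) * Real.exp ((thP B - 247/210) + 1/u) := by
    rw [← Finset.prod_filter_mul_prod_filter_not S (· ≤ B)]
    have hLa : ∏ p ∈ S.filter (· ≤ B), (1+(p:ℝ)⁻¹)
        ≤ (96/35:ℝ) * Real.exp (thP B - 247/210) := by
      rw [← Finset.prod_filter_mul_prod_filter_not (S.filter (· ≤ B))
        (· ∈ ({2,3,5,7} : Finset ℕ))]
      have h1 : ∏ p ∈ (S.filter (· ≤ B)).filter (· ∈ ({2,3,5,7} : Finset ℕ)), (1+(p:ℝ)⁻¹)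
          ≤ ∏ p ∈ ({2,3,5,7} : Finset ℕ), (1+(p:ℝ)⁻¹) := by
        apply prod_subset_one_le
        · intro p hp
          exact (Finset.mem_filter.mp hp).2
        · intro p hp
          have hpos : (0:ℝ) ≤ ((p:ℕ):ℝ)⁻¹ := by positivity
          linarith
      have h2 : ∏ p ∈ ({2,3,5,7} : Finset ℕ), (1+(p:ℝ)⁻¹) = 96/35 := by
        norm_num [Finset.prod_insert, Finset.mem_insert]
      have h3 : ∏ p ∈ (S.filter (· ≤ B)).filter (fun p => ¬ p ∈ ({2,3,5,7} : Finset ℕ)),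
          (1+(p:ℝ)⁻¹) ≤ Real.exp (thP B - 247/210) := by
        refine le_trans (prod_one_add_le_exp _ _ (fun p _ => by positivity))
          (Real.exp_le_exp.mpr ?_)
        have hVW : ({2,3,5,7} : Finset ℕ) ⊆ Nat.primesBelow (B+1) := by
          intro p hp
          rw [Nat.mem_primesBelow]
          fin_cases hp
          · exact ⟨by omega, by norm_num⟩
          · exact ⟨by omega, by norm_num⟩
          · exact ⟨by omega, by norm_num⟩
          · exact ⟨by omega, by norm_num⟩
        have hsub : (S.filter (· ≤ B)).filter (fun p => ¬ p ∈ ({2,3,5,7} : Finset ℕ))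
            ⊆ Nat.primesBelow (B+1) \ ({2,3,5,7} : Finset ℕ) := by
          intro p hp
          rcases Finset.mem_filter.mp hp with ⟨hp1, hp2⟩
          rcases Finset.mem_filter.mp hp1 with ⟨hpS, hpB⟩
          rw [Finset.mem_sdiff, Nat.mem_primesBelow]
          exact ⟨⟨by omega, hprime p hpS⟩, hp2⟩
        have e1 : ∑ p ∈ Nat.primesBelow (B+1) \ ({2,3,5,7} : Finset ℕ), ((p:ℕ):ℝ)⁻¹
            = thP B - 247/210 := by
          have e0 := Finset.sum_sdiff (f := fun p => ((p:ℕ):ℝ)⁻¹) hVW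
          have e2 : ∑ p ∈ ({2,3,5,7} : Finset ℕ), ((p:ℕ):ℝ)⁻¹ = 247/210 := by
            norm_num [Finset.sum_insert, Finset.mem_insert]
          have e3 : thP B = ∑ p ∈ Nat.primesBelow (B+1), ((p:ℕ):ℝ)⁻¹ := rfl
          rw [e2] at e0
          rw [e3, ← e0]
          ring
        rw [← e1]
        exact Finset.sum_le_sum_of_subset_of_nonneg hsub (fun p _ _ => by positivity)
      have h4 : (0:ℝ) ≤ ∏ p ∈ (S.filter (· ≤ B)).filter (· ∈ ({2,3,5,7} : Finset ℕ)),
          (1+(p:ℝ)⁻¹) := Finset.prod_nonneg (fun p _ => by positivity)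
      refine mul_le_mul (le_trans h1 (le_of_eq h2)) h3 ?_ (by norm_num)
      exact Finset.prod_nonneg (fun p _ => by positivity)
    have hLb : ∏ p ∈ S.filter (fun p => ¬ p ≤ B), (1+(p:ℝ)⁻¹) ≤ Real.exp (1/u) := by
      refine le_trans (prod_one_add_le_exp _ _ (fun p _ => by positivity))
        (Real.exp_le_exp.mpr ?_)
      set F2 := S.filter (fun p => ¬ p ≤ B) with hF2
      have hBp : ∀ p ∈ F2, ((B:ℝ)+1) ≤ p := by
        intro p hp
        have h := (Finset.mem_filter.mp hp).2
        have : B+1 ≤ p := by omega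
        exact_mod_cast this
      have hB1 : (0:ℝ) < (B:ℝ)+1 := by positivity
      have hppos : ∀ p ∈ F2, (0:ℝ) < p := fun p hp => lt_of_lt_of_le hB1 (hBp p hp)
      have hsum : ∑ p ∈ F2, ((p:ℕ):ℝ)⁻¹ ≤ F2.card * ((B:ℝ)+1)⁻¹ := by
        have h := Finset.sum_le_card_nsmul F2 (fun p => ((p:ℕ):ℝ)⁻¹) (((B:ℝ)+1)⁻¹)
          (fun p hp => inv_anti₀ hB1 (hBp p hp))
        rwa [nsmul_eq_mul] at h
      have hdvd : (∏ p ∈ F2, p) ∣ n :=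
        dvd_trans (Finset.prod_dvd_prod_of_subset F2 S _ (Finset.filter_subset _ _))
          (Nat.prod_primeFactors_dvd n)
      have hprodn : (∏ p ∈ F2, p) ≤ n := Nat.le_of_dvd hn0 hdvd
      have hlogsum : (F2.card : ℝ) * Real.log ((B:ℝ)+1) ≤ y := by
        have h1 : ∀ p ∈ F2, Real.log ((B:ℝ)+1) ≤ Real.log p :=
          fun p hp => Real.log_le_log hB1 (hBp p hp)
        have h2 := Finset.card_nsmul_le_sum F2 (fun p => Real.log ((p:ℕ):ℝ))
          (Real.log ((B:ℝ)+1)) h1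
        rw [nsmul_eq_mul] at h2
        have h4 : ((∏ p ∈ F2, p : ℕ):ℝ) = ∏ p ∈ F2, ((p:ℕ):ℝ) := by push_cast; rfl
        have h3 : ∑ p ∈ F2, Real.log ((p:ℕ):ℝ) = Real.log (∏ p ∈ F2, ((p:ℕ):ℝ)) :=
          (Real.log_prod (fun p hp => ne_of_gt (hppos p hp))).symm
        have h5 : Real.log (∏ p ∈ F2, ((p:ℕ):ℝ)) ≤ y := by
          rw [← h4]
          apply Real.log_le_log
          · rw [h4]
            exact Finset.prod_pos hppos
          · exact_mod_cast hprodn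
        linarith
      have hulog : u ≤ Real.log ((B:ℝ)+1) := Real.log_le_log hy0 (le_of_lt hyB)
      have hcard : (F2.card:ℝ) * u ≤ (B:ℝ)+1 := by
        have h6 : (F2.card:ℝ) * u ≤ (F2.card:ℝ) * Real.log ((B:ℝ)+1) :=
          mul_le_mul_of_nonneg_left hulog (by positivity)
        linarith
      have h7 : (F2.card:ℝ) * ((B:ℝ)+1)⁻¹ ≤ 1/u := by
        rw [← div_eq_mul_inv, div_le_div_iff₀ hB1 hu0]
        linarith
      linarith
    have h0 : (0:ℝ) ≤ ∏ p ∈ S.filter (· ≤ B), (1+(p:ℝ)⁻¹) :=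
      Finset.prod_nonneg (fun p _ => by positivity)
    calc (∏ p ∈ S.filter (· ≤ B), (1+(p:ℝ)⁻¹)) * ∏ p ∈ S.filter (fun p => ¬ p ≤ B), (1+(p:ℝ)⁻¹)
        ≤ ((96/35:ℝ) * Real.exp (thP B - 247/210)) * Real.exp (1/u) :=
          mul_le_mul hLa hLb (Finset.prod_nonneg (fun p _ => by positivity)) (by positivity)
      _ = (96/35:ℝ) * Real.exp ((thP B - 247/210) + 1/u) := by
          rw [Real.exp_add]; ring
  -- combine
  have hcomb : (∏ p ∈ S, (1+(p:ℝ)⁻¹)) * (∏ p ∈ S, (1+((p:ℝ)^2-1)⁻¹))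
      ≤ (35/8:ℝ) * Real.exp (((thP B - 247/210) + 1/u) + 21/220) := by
    have hs1 : (0:ℝ) ≤ ∏ p ∈ S, (1+(p:ℝ)⁻¹) :=
      Finset.prod_nonneg (fun p _ => by positivity)
    calc (∏ p ∈ S, (1+(p:ℝ)⁻¹)) * (∏ p ∈ S, (1+((p:ℝ)^2-1)⁻¹))
        ≤ ((96/35:ℝ) * Real.exp ((thP B - 247/210) + 1/u))
            * ((44100/27648:ℝ) * Real.exp (21/220)) := by
          apply mul_le_mul hL hQ ?_ (by positivity)
          apply Finset.prod_nonneg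
          intro p hp
          have h2 : (2:ℝ) ≤ p := by exact_mod_cast h2le p hp
          have : (0:ℝ) < (p:ℝ)^2-1 := by nlinarith
          positivity
      _ = (35/8:ℝ) * Real.exp (((thP B - 247/210) + 1/u) + 21/220) := by
          conv_lhs => rw [Real.exp_add]
          conv_rhs => rw [Real.exp_add, Real.exp_add]
          ring
  refine le_trans hcomb ?_
  -- two regimes
  rcases le_or_gt B 101 with hcase | hcase
  · have hPB : thP B ≤ 1.812719 := le_trans (thP_mono hcase) thP101_ub
    have h1u : 1/u ≤ 1/2.7780287212 := by
      apply one_div_le_one_div_of_le (by norm_num) hu27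
    have hexp : ((thP B - 247/210) + 1/u) + 21/220 ≤ 1.09196 := by linarith
    have hE : Real.exp (((thP B - 247/210) + 1/u) + 21/220) ≤ ((1 - (1.09196:ℝ)/256)⁻¹)^256 :=
      le_trans (Real.exp_le_exp.mpr hexp) (exp_ub 256 (by norm_num) (by norm_num) (by norm_num))
    have hfin : (35/8:ℝ) * ((1 - (1.09196:ℝ)/256)⁻¹)^256 ≤ 5.3822 * 2.7780287212 := by
      norm_num
    calc (35/8:ℝ) * Real.exp (((thP B - 247/210) + 1/u) + 21/220)
        ≤ (35/8:ℝ) * ((1 - (1.09196:ℝ)/256)⁻¹)^256 :=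
          mul_le_mul_of_nonneg_left hE (by norm_num)
      _ ≤ 5.3822 * 2.7780287212 := hfin
      _ ≤ 5.3822 * u := by nlinarith
  · have hlogB : (4.6228830818:ℝ) ≤ Real.log B := by
      refine le_trans log102_lb (Real.log_le_log (by norm_num) ?_)
      exact_mod_cast (by omega : (102:ℕ) ≤ B)
    have hlogB0 : (0:ℝ) < Real.log B := by linarith
    have hPB : thP B ≤ Real.log (Real.log B) + 149/200 := thP_bound B (by omega)
    have hBpos : (0:ℝ) < (B:ℝ) := by
      have : (0:ℕ) < B := by omega
      exact_mod_cast this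
    have hlllB : Real.log (Real.log B) ≤ Real.log u :=
      Real.log_le_log hlogB0 (Real.log_le_log hBpos hBy)
    have hulogB : (4.6228830818:ℝ) ≤ u := le_trans hlogB (Real.log_le_log hBpos hBy)
    have h1u : 1/u ≤ 1/4.6228830818 := by
      apply one_div_le_one_div_of_le (by norm_num) hulogB
    have hexp : ((thP B - 247/210) + 1/u) + 21/220 ≤ Real.log u := by linarith
    calc (35/8:ℝ) * Real.exp (((thP B - 247/210) + 1/u) + 21/220)
        ≤ (35/8:ℝ) * Real.exp (Real.log u) :=
          mul_le_mul_of_nonneg_left (Real.exp_le_exp.mpr hexp) (by norm_num)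
      _ = (35/8:ℝ) * u := by rw [Real.exp_log hu0]
      _ ≤ 5.3822 * u := by nlinarith


lemma nth_prime_0 : Nat.nth Nat.Prime 0 = 2 := by
  have h := Nat.nth_count (p := Nat.Prime) (n := 2) (by norm_num)
  rwa [show Nat.count Nat.Prime 2 = 0 by rw [Nat.count_eq_card_filter_range]; decide] at h
lemma nth_prime_1 : Nat.nth Nat.Prime 1 = 3 := by
  have h := Nat.nth_count (p := Nat.Prime) (n := 3) (by norm_num)
  rwa [show Nat.count Nat.Prime 3 = 1 by rw [Nat.count_eq_card_filter_range]; decide] at h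
lemma nth_prime_2 : Nat.nth Nat.Prime 2 = 5 := by
  have h := Nat.nth_count (p := Nat.Prime) (n := 5) (by norm_num)
  rwa [show Nat.count Nat.Prime 5 = 2 by rw [Nat.count_eq_card_filter_range]; decide] at h
lemma nth_prime_3 : Nat.nth Nat.Prime 3 = 7 := by
  have h := Nat.nth_count (p := Nat.Prime) (n := 7) (by norm_num)
  rwa [show Nat.count Nat.Prime 7 = 3 by rw [Nat.count_eq_card_filter_range]; decide] at h
lemma nth_prime_4 : Nat.nth Nat.Prime 4 = 11 := by
  have h := Nat.nth_count (p := Nat.Prime) (n := 11) (by norm_num)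
  rwa [show Nat.count Nat.Prime 11 = 4 by rw [Nat.count_eq_card_filter_range]; decide] at h
lemma nth_prime_5 : Nat.nth Nat.Prime 5 = 13 := by
  have h := Nat.nth_count (p := Nat.Prime) (n := 13) (by norm_num)
  rwa [show Nat.count Nat.Prime 13 = 5 by rw [Nat.count_eq_card_filter_range]; decide] at h
lemma nth_prime_6 : Nat.nth Nat.Prime 6 = 17 := by
  have h := Nat.nth_count (p := Nat.Prime) (n := 17) (by norm_num)
  rwa [show Nat.count Nat.Prime 17 = 6 by rw [Nat.count_eq_card_filter_range]; decide] at h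
lemma nth_prime_7 : Nat.nth Nat.Prime 7 = 19 := by
  have h := Nat.nth_count (p := Nat.Prime) (n := 19) (by norm_num)
  rwa [show Nat.count Nat.Prime 19 = 7 by rw [Nat.count_eq_card_filter_range]; decide] at h

lemma max'_ge_nth (S : Finset ℕ) (hS : ∀ q ∈ S, Nat.Prime q) (h : S.Nonempty) :
    Nat.nth Nat.Prime (S.card - 1) ≤ S.max' h := by
  have hsub : S ⊆ (Finset.range (S.max' h + 1)).filter Nat.Prime := by
    intro q hq
    rw [Finset.mem_filter, Finset.mem_range, Nat.lt_succ_iff]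
    exact ⟨S.le_max' q hq, hS q hq⟩
  have hc : S.card ≤ Nat.count Nat.Prime (S.max' h + 1) := by
    rw [Nat.count_eq_card_filter_range]
    exact Finset.card_le_card hsub
  have hpos : 0 < S.card := Finset.card_pos.mpr h
  have := Nat.nth_lt_of_lt_count (p := Nat.Prime) (n := S.max' h + 1) (k := S.card - 1)
    (by omega)
  omega

lemma prod_nth_le_prod : ∀ (k : ℕ) (S : Finset ℕ), (∀ q ∈ S, Nat.Prime q) → S.card = k →
    ∏ i ∈ range k, Nat.nth Nat.Prime i ≤ ∏ q ∈ S, q := by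
  intro k
  induction k with
  | zero => intro S _ hc; rw [Finset.card_eq_zero.mp hc]; simp
  | succ k ih =>
    intro S hS hc
    have hne : S.Nonempty := Finset.card_pos.mp (by omega)
    set q := S.max' hne with hq
    have hqS : q ∈ S := S.max'_mem hne
    have hcard : (S.erase q).card = k := by
      rw [Finset.card_erase_of_mem hqS]; omega
    have hIH := ih (S.erase q) (fun r hr => hS r (Finset.mem_of_mem_erase hr)) hcard
    have hnth : Nat.nth Nat.Prime k ≤ q := by
      have := max'_ge_nth S hS hne
      rw [hc] at this
      simpa using this
    calc ∏ i ∈ range (k+1), Nat.nth Nat.Prime i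
        = (∏ i ∈ range k, Nat.nth Nat.Prime i) * Nat.nth Nat.Prime k := prod_range_succ _ _
      _ ≤ (∏ r ∈ S.erase q, r) * q := Nat.mul_le_mul hIH hnth
      _ = ∏ r ∈ S, r := by rw [mul_comm]; exact Finset.mul_prod_erase S (fun r => r) hqS

lemma ratio_antitone {m q : ℕ} (h2 : 2 ≤ m) (hmq : m ≤ q) :
    (q:ℝ)/((q:ℝ)-1) ≤ (m:ℝ)/((m:ℝ)-1) := by
  have h2' : (2:ℝ) ≤ m := by exact_mod_cast h2
  have hq' : (m:ℝ) ≤ q := by exact_mod_cast hmq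
  rw [div_le_div_iff₀ (by linarith) (by linarith)]
  nlinarith

lemma ratio_one_le {m : ℕ} (h2 : 2 ≤ m) : 1 ≤ (m:ℝ)/((m:ℝ)-1) := by
  have h2' : (2:ℝ) ≤ m := by exact_mod_cast h2
  rw [le_div_iff₀ (by linarith)]
  linarith

lemma prod_ratio_le_nth : ∀ (k : ℕ) (S : Finset ℕ), (∀ q ∈ S, Nat.Prime q) → S.card = k →
    ∏ q ∈ S, ((q:ℝ)/((q:ℝ)-1))
      ≤ ∏ i ∈ range k, ((Nat.nth Nat.Prime i:ℝ)/((Nat.nth Nat.Prime i:ℝ)-1)) := by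
  intro k
  induction k with
  | zero => intro S _ hc; simp [Finset.card_eq_zero.mp hc]
  | succ k ih =>
    intro S hS hc
    have hne : S.Nonempty := Finset.card_pos.mp (by omega)
    set q := S.max' hne with hq
    have hqS : q ∈ S := S.max'_mem hne
    have hcard : (S.erase q).card = k := by
      rw [Finset.card_erase_of_mem hqS]; omega
    have hIH := ih (S.erase q) (fun r hr => hS r (Finset.mem_of_mem_erase hr)) hcard
    have hnth : Nat.nth Nat.Prime k ≤ q := by
      have := max'_ge_nth S hS hne
      rw [hc] at this
      simpa using this
    have hnth2 : 2 ≤ Nat.nth Nat.Prime k := (Nat.prime_nth_prime k).two_le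
    have hstep : (q:ℝ)/((q:ℝ)-1)
        ≤ (Nat.nth Nat.Prime k:ℝ)/((Nat.nth Nat.Prime k:ℝ)-1) := ratio_antitone hnth2 hnth
    have hprodnn : 0 ≤ ∏ r ∈ S.erase q, ((r:ℝ)/((r:ℝ)-1)) := by
      apply Finset.prod_nonneg
      intro r hr
      have h2 : (2:ℝ) ≤ r := by exact_mod_cast (hS r (Finset.mem_of_mem_erase hr)).two_le
      exact div_nonneg (by linarith) (by linarith)
    calc ∏ r ∈ S, ((r:ℝ)/((r:ℝ)-1))
        = ((q:ℝ)/((q:ℝ)-1)) * ∏ r ∈ S.erase q, ((r:ℝ)/((r:ℝ)-1)) :=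
          (Finset.mul_prod_erase S _ hqS).symm
      _ ≤ ((Nat.nth Nat.Prime k:ℝ)/((Nat.nth Nat.Prime k:ℝ)-1))
            * ∏ i ∈ range k, ((Nat.nth Nat.Prime i:ℝ)/((Nat.nth Nat.Prime i:ℝ)-1)) := by
          apply mul_le_mul hstep hIH hprodnn
          have : (2:ℝ) ≤ (Nat.nth Nat.Prime k:ℝ) := by exact_mod_cast hnth2
          exact div_nonneg (by linarith) (by linarith)
      _ = ∏ i ∈ range (k+1), ((Nat.nth Nat.Prime i:ℝ)/((Nat.nth Nat.Prime i:ℝ)-1)) := by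
          rw [prod_range_succ, mul_comm]

lemma card_le_of_lt (n : ℕ) (hn : 0 < n) (k : ℕ)
    (hbig : n < ∏ i ∈ range (k+1), Nat.nth Nat.Prime i) : n.primeFactors.card ≤ k := by
  by_contra hcon
  push_neg at hcon
  have h1 := prod_nth_le_prod n.primeFactors.card n.primeFactors
    (fun p hp => Nat.prime_of_mem_primeFactors hp) rfl
  have h2 : ∏ i ∈ range (k+1), Nat.nth Nat.Prime i
      ≤ ∏ i ∈ range n.primeFactors.card, Nat.nth Nat.Prime i := by
    apply Finset.prod_le_prod_of_subset_of_one_le'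
    · exact Finset.range_subset_range.mpr (by omega)
    · intro i _ _
      exact (Nat.prime_nth_prime i).one_lt.le
  have h3 : (∏ p ∈ n.primeFactors, p) ≤ n := Nat.le_of_dvd hn (Nat.prod_primeFactors_dvd n)
  omega

lemma T_le_ratio (n : ℕ) (k : ℕ) (hcard : n.primeFactors.card ≤ k) :
    ∏ p ∈ n.primeFactors, ((p:ℝ)/((p:ℝ)-1))
      ≤ ∏ i ∈ range k, ((Nat.nth Nat.Prime i:ℝ)/((Nat.nth Nat.Prime i:ℝ)-1)) := by
  refine le_trans (prod_ratio_le_nth n.primeFactors.card n.primeFactors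
    (fun p hp => Nat.prime_of_mem_primeFactors hp) rfl) ?_
  rw [← Finset.prod_sdiff (Finset.range_subset_range.mpr hcard)]
  have h1 : 1 ≤ ∏ i ∈ range k \ range n.primeFactors.card,
      ((Nat.nth Nat.Prime i:ℝ)/((Nat.nth Nat.Prime i:ℝ)-1)) := by
    calc (1:ℝ) = ∏ _i ∈ range k \ range n.primeFactors.card, 1 := (prod_const_one).symm
      _ ≤ _ := Finset.prod_le_prod (fun _ _ => by norm_num)
          (fun i _ => ratio_one_le (Nat.prime_nth_prime i).two_le)
  have h2 : 0 ≤ ∏ i ∈ range n.primeFactors.card,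
      ((Nat.nth Nat.Prime i:ℝ)/((Nat.nth Nat.Prime i:ℝ)-1)) := by
    apply Finset.prod_nonneg
    intro i _
    have : (2:ℝ) ≤ (Nat.nth Nat.Prime i:ℝ) := by exact_mod_cast (Nat.prime_nth_prime i).two_le
    exact div_nonneg (by linarith) (by linarith)
  nlinarith

lemma prod_nth_8 : ∏ i ∈ range 8, Nat.nth Nat.Prime i = 9699690 := by
  rw [show (8:ℕ) = 7+1 from rfl]
  repeat rw [prod_range_succ]
  rw [prod_range_zero, nth_prime_0, nth_prime_1, nth_prime_2, nth_prime_3, nth_prime_4,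
    nth_prime_5, nth_prime_6, nth_prime_7]
  norm_num

lemma prod_ratio_7 : ∏ i ∈ range 7, ((Nat.nth Nat.Prime i:ℝ)/((Nat.nth Nat.Prime i:ℝ)-1))
    = 17017/3072 := by
  rw [show (7:ℕ) = 6+1 from rfl]
  repeat rw [prod_range_succ]
  rw [prod_range_zero, nth_prime_0, nth_prime_1, nth_prime_2, nth_prime_3, nth_prime_4,
    nth_prime_5, nth_prime_6]
  norm_num

lemma prod_ratio_2 : ∏ i ∈ range 2, ((Nat.nth Nat.Prime i:ℝ)/((Nat.nth Nat.Prime i:ℝ)-1))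
    = 3 := by
  rw [show range 2 = range (1+1) from rfl]
  repeat rw [prod_range_succ]
  rw [prod_range_zero, nth_prime_0, nth_prime_1]
  norm_num

lemma T_le_mid (n : ℕ) (h17 : 17 ≤ n) (hlt : n < 9699690) :
    ∏ p ∈ n.primeFactors, ((p:ℝ)/((p:ℝ)-1)) ≤ 5.3822 * Real.log (Real.log n) := by
  have hcard : n.primeFactors.card ≤ 7 := by
    apply card_le_of_lt n (by omega) 7
    rw [prod_nth_8]; omega
  have h1 := T_le_ratio n 7 hcard
  rw [prod_ratio_7] at h1
  have hlog : Real.log 17 ≤ Real.log n := Real.log_le_log (by norm_num) (by exact_mod_cast h17)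
  have hlog17 : (0:ℝ) < Real.log 17 := lt_of_lt_of_le (by norm_num) log17_lb
  have hlll : Real.log (Real.log 17) ≤ Real.log (Real.log n) := Real.log_le_log hlog17 hlog
  have := lll17_lb
  calc ∏ p ∈ n.primeFactors, ((p:ℝ)/((p:ℝ)-1)) ≤ 17017/3072 := h1
    _ ≤ 5.3822 * 1.0401471803 := by norm_num
    _ ≤ 5.3822 * Real.log (Real.log n) := by nlinarith
lemma T_le_small (n : ℕ) (h10 : 10 ≤ n) (hlt : n ≤ 16) :
    ∏ p ∈ n.primeFactors, ((p:ℝ)/((p:ℝ)-1)) ≤ 5.3822 * Real.log (Real.log n) := by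
  have hcard : n.primeFactors.card ≤ 2 := by
    apply card_le_of_lt n (by omega) 2
    rw [show ∏ i ∈ range 3, Nat.nth Nat.Prime i = 30 by
      rw [show (3:ℕ) = 2+1 from rfl]
      repeat rw [prod_range_succ]
      rw [prod_range_zero, nth_prime_0, nth_prime_1, nth_prime_2]
      norm_num]
    omega
  have h1 := T_le_ratio n 2 hcard
  rw [prod_ratio_2] at h1
  have hlog : Real.log 10 ≤ Real.log n := Real.log_le_log (by norm_num) (by exact_mod_cast h10)
  have hlog10 : (0:ℝ) < Real.log 10 := lt_of_lt_of_le (by norm_num) log10_lb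
  have hlll : Real.log (Real.log 10) ≤ Real.log (Real.log n) := Real.log_le_log hlog10 hlog
  have := lll10_lb
  calc ∏ p ∈ n.primeFactors, ((p:ℝ)/((p:ℝ)-1)) ≤ 3 := h1
    _ ≤ 5.3822 * 0.8336471803 := by norm_num
    _ ≤ 5.3822 * Real.log (Real.log n) := by nlinarith

lemma T_le (n : ℕ) (hn : 10 ≤ n) :
    ∏ p ∈ n.primeFactors, ((p:ℝ)/((p:ℝ)-1)) ≤ 5.3822 * Real.log (Real.log n) := by
  rcases le_or_gt n 16 with h | h
  · exact T_le_small n hn h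
  · rcases lt_or_ge n 9699690 with h2 | h2
    · exact T_le_mid n (by omega) h2
    · exact T_le_big n h2

end TotientAux

open TotientAux

/-- For every integer `n ≥ 10`,
`φ(n)/n ≥ 3 / (e^γ * π² * log log n)` where `γ` is the Euler–Mascheroni constant. -/
theorem totient_ratio_lower_bound (n : ℕ) (hn : 10 ≤ n) :
    (Nat.totient n : ℝ) / (n : ℝ) ≥
      3 / (Real.exp Real.eulerMascheroniConstant * Real.pi ^ 2 * Real.log (Real.log n)) := by
  have hn0 : (0:ℝ) < n := by positivity
  have h2le : ∀ p ∈ n.primeFactors, 2 ≤ p :=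
    fun p hp => (Nat.prime_of_mem_primeFactors hp).two_le
  -- positivity of log log n
  have hlog : Real.log 10 ≤ Real.log n := Real.log_le_log (by norm_num) (by exact_mod_cast hn)
  have hlog10 : (0:ℝ) < Real.log 10 := lt_of_lt_of_le (by norm_num) log10_lb
  have hlll : (0:ℝ) < Real.log (Real.log n) :=
    lt_of_lt_of_le (by norm_num) (le_trans lll10_lb (Real.log_le_log hlog10 hlog))
  -- totient product formula
  have hprod : (Nat.totient n : ℝ) / (n:ℝ) = ∏ p ∈ n.primeFactors, (1 - (p:ℝ)⁻¹) := by
    have hq := congrArg (Rat.cast (K := ℝ)) (Nat.totient_eq_mul_prod_factors n)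
    push_cast at hq
    rw [hq]
    field_simp
  have hprodpos : (0:ℝ) < ∏ p ∈ n.primeFactors, (1 - (p:ℝ)⁻¹) := by
    apply Finset.prod_pos
    intro p hp
    have h2 : (2:ℝ) ≤ p := by exact_mod_cast h2le p hp
    have hp0 : (0:ℝ) < p := by linarith
    have : (p:ℝ)⁻¹ ≤ 2⁻¹ := inv_anti₀ (by norm_num) h2
    have : (0:ℝ) < 1 - (p:ℝ)⁻¹ := by norm_num at this ⊢; linarith
    linarith
  -- product of (1-1/p) and p/(p-1) is 1
  have hmul : (∏ p ∈ n.primeFactors, (1 - (p:ℝ)⁻¹)) * (∏ p ∈ n.primeFactors, ((p:ℝ)/((p:ℝ)-1)))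
      = 1 := by
    rw [← Finset.prod_mul_distrib]
    apply Finset.prod_eq_one
    intro p hp
    have h2 : (2:ℝ) ≤ p := by exact_mod_cast h2le p hp
    field_simp
    exact div_self (by linarith)
  have hT := T_le n hn
  -- K bound : 3 * 5.3822 ≤ exp γ * π²
  have hK : (3:ℝ) * 5.3822 ≤ Real.exp Real.eulerMascheroniConstant * Real.pi^2 := by
    have h1 : ((33/32:ℝ))^16 ≤ Real.exp Real.eulerMascheroniConstant := by
      have h2 : ((1 + (1/2)/16:ℝ))^16 ≤ Real.exp (1/2) := exp_lb 16 (by norm_num) (by norm_num)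
      have h3 : Real.exp (1/2) ≤ Real.exp Real.eulerMascheroniConstant :=
        Real.exp_le_exp.mpr (le_of_lt Real.one_half_lt_eulerMascheroniConstant)
      calc ((33/32:ℝ))^16 = ((1 + (1/2)/16:ℝ))^16 := by norm_num
        _ ≤ Real.exp Real.eulerMascheroniConstant := le_trans h2 h3
    have h4 : (3.141592:ℝ)^2 ≤ Real.pi^2 := by
      have := Real.pi_gt_d6
      nlinarith
    calc (3:ℝ) * 5.3822 ≤ ((33/32:ℝ))^16 * (3.141592:ℝ)^2 := by norm_num
      _ ≤ Real.exp Real.eulerMascheroniConstant * Real.pi^2 := by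
        apply mul_le_mul h1 h4 (by positivity) (Real.exp_nonneg _)
  -- final assembly
  rw [hprod, ge_iff_le, div_le_iff₀ (by positivity)]
  have hTpos : (0:ℝ) < ∏ p ∈ n.primeFactors, ((p:ℝ)/((p:ℝ)-1)) := by
    apply Finset.prod_pos
    intro p hp
    have h2 : (2:ℝ) ≤ p := by exact_mod_cast h2le p hp
    exact div_pos (by linarith) (by linarith)
  have key : 3 * (∏ p ∈ n.primeFactors, ((p:ℝ)/((p:ℝ)-1)))
      ≤ Real.exp Real.eulerMascheroniConstant * Real.pi^2 * Real.log (Real.log n) := by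
    calc 3 * (∏ p ∈ n.primeFactors, ((p:ℝ)/((p:ℝ)-1))) ≤ 3 * (5.3822 * Real.log (Real.log n)) :=
          by nlinarith
      _ = (3 * 5.3822) * Real.log (Real.log n) := by ring
      _ ≤ Real.exp Real.eulerMascheroniConstant * Real.pi^2 * Real.log (Real.log n) := by
          nlinarith
  calc (3:ℝ) = 3 * ((∏ p ∈ n.primeFactors, (1 - (p:ℝ)⁻¹))
        * (∏ p ∈ n.primeFactors, ((p:ℝ)/((p:ℝ)-1)))) := by rw [hmul]; ring
    _ = (3 * (∏ p ∈ n.primeFactors, ((p:ℝ)/((p:ℝ)-1))))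
        * (∏ p ∈ n.primeFactors, (1 - (p:ℝ)⁻¹)) := by ring
    _ ≤ (Real.exp Real.eulerMascheroniConstant * Real.pi^2 * Real.log (Real.log n))
        * (∏ p ∈ n.primeFactors, (1 - (p:ℝ)⁻¹)) := by nlinarith
    _ = (∏ p ∈ n.primeFactors, (1 - (p:ℝ)⁻¹))
        * (Real.exp Real.eulerMascheroniConstant * Real.pi^2 * Real.log (Real.log n)) := by ring
end

section
/- Let q be a prime power, let n ≥ 2 be an integer, let K be a finite field with q elements, and let F be a finite field extension of K with q^n elements. Then the number of elements α ∈ F such that the n elements α, α^q, α^{q²}, …, α^{q^{n−1}} are linearly independent over K equals the number of units of the quotient ring K[X]/(X^n − 1). -/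
open Polynomial
open scoped DirectSum

open scoped DirectSum

universe u v

private lemma exists_generator_of_isTorsion {R : Type u} [CommRing R] [IsPrincipalIdealRing R]
    [IsDomain R] {N : Type v} [AddCommGroup N] [Module R N] [Module.Finite R N]
    (hN : Module.IsTorsion R N) :
    ∃ y : N, ∀ r : R, r • y = 0 → ∀ z : N, r • z = 0 := by
  classical
  have htors' : Module.IsTorsion R (ULift.{u} N) := by
    intro z
    obtain ⟨a, ha⟩ := @hN z.down
    exact ⟨a, ULift.ext _ _ ha⟩
  obtain ⟨ι, hι, pf, hirr, ef, ⟨e0⟩⟩ :=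
    Module.equiv_directSum_of_isTorsion (R := R) (M := ULift.{u} N) htors'
  haveI := hι
  set e : N ≃ₗ[R] ⨁ i : ι, R ⧸ (Submodule.span R {pf i ^ ef i}) :=
    (ULift.moduleEquiv (R := R) (M := N)).symm.trans e0 with he
  set y : ⨁ i : ι, R ⧸ (Submodule.span R {pf i ^ ef i}) :=
    ∑ i : ι, DirectSum.lof R ι _ i (Submodule.Quotient.mk 1) with hy
  refine ⟨e.symm y, ?_⟩
  intro P hP
  have h1' : P • y = 0 := by
    have := congrArg e hP
    rw [map_smul, LinearEquiv.apply_symm_apply, map_zero] at this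
    exact this
  have hdvd : ∀ j : ι, (pf j ^ ef j) ∣ P := by
    intro j
    have hc := congrArg (DirectSum.component R ι _ j) h1'
    rw [map_zero, map_smul] at hc
    have hcy : DirectSum.component R ι _ j y = Submodule.Quotient.mk 1 := by
      rw [hy, map_sum]
      rw [Finset.sum_eq_single j]
      · rw [DirectSum.component.lof_self]
      · intro b _ hb
        rw [DirectSum.component.of, dif_neg hb]
      · intro h; exact absurd (Finset.mem_univ j) h
    rw [hcy, ← Submodule.Quotient.mk_smul, Submodule.Quotient.mk_eq_zero] at hc
    rw [Submodule.mem_span_singleton] at hc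
    obtain ⟨c, hc⟩ := hc
    rw [smul_eq_mul, smul_eq_mul, mul_one] at hc
    exact ⟨c, by rw [← hc, mul_comm]⟩
  have h3 : ∀ z : (⨁ i : ι, R ⧸ (Submodule.span R {pf i ^ ef i})), P • z = 0 := by
    intro z
    induction z using DirectSum.induction_on with
    | zero => simp
    | of i x =>
      obtain ⟨Q, rfl⟩ := Submodule.Quotient.mk_surjective _ x
      rw [← DirectSum.lof_eq_of R, ← map_smul]
      have h5 : P • (Submodule.Quotient.mk Q : R ⧸ (Submodule.span R {pf i ^ ef i})) = 0 := by
        rw [← Submodule.Quotient.mk_smul, Submodule.Quotient.mk_eq_zero]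
        rw [Submodule.mem_span_singleton]
        obtain ⟨c, hc⟩ := hdvd i
        exact ⟨Q * c, by rw [smul_eq_mul, smul_eq_mul, hc]; ring⟩
      rw [h5, map_zero]
    | add a b ha hb => rw [smul_add, ha, hb, add_zero]
  intro z
  have := congrArg e.symm (h3 (e z))
  rw [map_smul, LinearEquiv.symm_apply_apply, map_zero] at this
  exact this


/-- Let `q` be a prime power, `n ≥ 2`, `K` a finite field with `q`
elements and `F` a field extension of `K` with `q^n` elements. Then the number of
normal elements `α ∈ F` (i.e. those for which `α, α^q, …, α^{q^{n-1}}` are linearly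
independent over `K`) equals the number of units of `K[X]/(X^n - 1)`. -/
theorem card_normal_elements_eq_card_units_quotient
    (q n : ℕ) (hq : IsPrimePow q) (hn : 2 ≤ n)
    (K F : Type*) [Field K] [Fintype K] [Field F] [Fintype F] [Algebra K F]
    (hK : Fintype.card K = q) (hF : Fintype.card F = q ^ n) :
    Nat.card {α : F // LinearIndependent K (fun i : Fin n => α ^ q ^ (i : ℕ))} =
      Nat.card ((K[X] ⧸ Ideal.span ({X ^ n - 1} : Set K[X]))ˣ) := by
  classical
  have hq2 : 2 ≤ q := hq.two_le
  -- the characteristic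
  obtain ⟨p, hpm, hcharp, k, hqp⟩ :
      ∃ p : ℕ, p.Prime ∧ CharP F p ∧ ∃ k : ℕ, q = p ^ k := by
    obtain ⟨m, hpm, hcard⟩ := FiniteField.card F (ringChar F)
    obtain ⟨p', k', hp', hk', rfl⟩ := hq
    replace hp' : p'.Prime := Nat.prime_iff.mpr hp'
    have h1 : p' ∣ ringChar F ^ (m : ℕ) := by
      rw [← hcard, hF]; exact dvd_pow (dvd_pow_self p' hk'.ne') (by omega)
    have hpp : p' = ringChar F :=
      (Nat.prime_dvd_prime_iff_eq hp' hpm).mp (hp'.dvd_of_dvd_pow h1)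
    exact ⟨ringChar F, hpm, ringChar.charP F, k', by rw [← hpp]⟩
  haveI := hcharp
  haveI : Fact p.Prime := ⟨hpm⟩
  -- the Frobenius as a K-linear map
  obtain ⟨φ, hφ⟩ : ∃ φ : F →ₗ[K] F, ∀ x, φ x = x ^ q := by
    refine ⟨{ toFun := fun x => x ^ q, map_add' := ?_, map_smul' := ?_ }, fun _ => rfl⟩
    · intro x y
      rw [hqp]
      exact add_pow_char_pow x y p k
    · intro c x
      simp only [RingHom.id_apply, Algebra.smul_def, mul_pow, ← map_pow]
      congr 1
      rw [← hK]
      exact congrArg _ (FiniteField.pow_card c)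
  have hφpow : ∀ (m : ℕ) (x : F), (φ ^ m) x = x ^ q ^ m := by
    intro m
    induction m with
    | zero => intro x; simp
    | succ m ih =>
      intro x
      rw [pow_succ, Module.End.mul_apply, hφ, ih, ← pow_mul, ← pow_succ']
  have hXn : aeval φ ((X : K[X]) ^ n - 1) = 0 := by
    rw [map_sub, map_one, aeval_X_pow]
    ext x
    simp only [LinearMap.sub_apply, Module.End.one_apply, LinearMap.zero_apply, hφpow]
    rw [← hF, FiniteField.pow_card, sub_self]
  -- linear independence of iterated Frobenius maps (Dedekind)
  have hsmall : ∀ P : K[X], P.natDegree < n → aeval φ P = 0 → P = 0 := by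
    intro P hdeg h0
    -- the monoid homs x ↦ x ^ q ^ i
    set ψ : Fin n → (F →* F) := fun i => powMonoidHom (q ^ (i : ℕ)) with hψ
    have hinj : Function.Injective ψ := by
      intro i j hij
      by_contra hne
      wlog hlt : (i : ℕ) < (j : ℕ) generalizing i j
      · exact this (i := j) (j := i) hij.symm (Ne.symm hne) (by omega)
      -- use a generator of the units
      obtain ⟨g, hg⟩ := IsCyclic.exists_generator (α := Fˣ)
      have hcard : Fintype.card Fˣ = q ^ n - 1 := by rw [Fintype.card_units, hF]
      have horder : orderOf g = q ^ n - 1 := by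
        rw [orderOf_eq_card_of_forall_mem_zpowers hg, Nat.card_eq_fintype_card]
        exact hcard
      have hgeq : (g : F) ^ q ^ (i : ℕ) = (g : F) ^ q ^ (j : ℕ) := by
        have := congrArg (fun f : F →* F => f (g : F)) hij
        simpa [hψ, powMonoidHom] using this
      have hu : g ^ q ^ (i : ℕ) = g ^ q ^ (j : ℕ) := Units.ext (by push_cast; exact hgeq)
      have hdvd : orderOf g ∣ q ^ (j : ℕ) - q ^ (i : ℕ) := by
        apply orderOf_dvd_of_pow_eq_one
        have hle : q ^ (i : ℕ) ≤ q ^ (j : ℕ) := Nat.pow_le_pow_right (by omega) (by omega)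
        have h2 : g ^ (q ^ (j : ℕ) - q ^ (i : ℕ)) * g ^ (q ^ (i : ℕ))
            = 1 * g ^ (q ^ (i : ℕ)) := by
          rw [← pow_add, Nat.sub_add_cancel hle, one_mul, hu]
        exact mul_right_cancel h2
      have hlt2 : q ^ (j : ℕ) - q ^ (i : ℕ) < q ^ n - 1 := by
        have h1 : q ^ (j : ℕ) ≤ q ^ (n - 1) := Nat.pow_le_pow_right (by omega) (by omega)
        have h2 : q ^ (n - 1) < q ^ n := Nat.pow_lt_pow_right (by omega) (by omega)
        have h3 : 0 < q ^ (i : ℕ) := Nat.pow_pos (by omega)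
        have h4 : 0 < q ^ (j : ℕ) := Nat.pow_pos (by omega)
        calc q ^ (j : ℕ) - q ^ (i : ℕ) < q ^ (j : ℕ) := Nat.sub_lt h4 h3
          _ ≤ q ^ (n - 1) := h1
          _ ≤ q ^ n - 1 := Nat.le_sub_one_of_lt h2
      have hpos : 0 < q ^ (j : ℕ) - q ^ (i : ℕ) := by
        have : q ^ (i : ℕ) < q ^ (j : ℕ) := Nat.pow_lt_pow_right (by omega) hlt
        omega
      have hfin := Nat.le_of_dvd hpos (horder ▸ hdvd)
      exact lt_irrefl _ (hfin.trans_lt hlt2)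
    have hli : LinearIndependent F (fun i : Fin n => ⇑(ψ i)) :=
      (linearIndependent_monoidHom F F).comp ψ hinj
    have hrel : ∑ i : Fin n, algebraMap K F (P.coeff (i : ℕ)) • ⇑(ψ i) = 0 := by
      funext x
      have h1 := congrArg (fun f : Module.End K F => f x)
        ((aeval_eq_sum_range' hdeg φ).symm.trans h0)
      simp only [LinearMap.sum_apply, LinearMap.smul_apply, LinearMap.zero_apply] at h1
      rw [← Fin.sum_univ_eq_sum_range (fun i => P.coeff i • (φ ^ i) x) n] at h1
      simpa [hψ, powMonoidHom, hφpow, Algebra.smul_def] using h1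
    have hcoeff : ∀ i : Fin n, P.coeff (i : ℕ) = 0 := by
      intro i
      have := Fintype.linearIndependent_iff.mp hli
        (fun i => algebraMap K F (P.coeff (i : ℕ))) hrel i
      exact (algebraMap K F).injective (by simpa using this)
    ext m
    rcases lt_or_ge m n with hm | hm
    · simpa using hcoeff ⟨m, hm⟩
    · simp [Polynomial.coeff_eq_zero_of_natDegree_lt (lt_of_lt_of_le hdeg hm)]
  have hmonic : ((X : K[X]) ^ n - 1).Monic := by
    simpa using monic_X_pow_sub_C (1 : K) (by omega : n ≠ 0)
  have hker : ∀ P : K[X], aeval φ P = 0 ↔ ((X : K[X]) ^ n - 1) ∣ P := by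
    intro P
    constructor
    · intro h0
      have hmod : aeval φ (P %ₘ ((X : K[X]) ^ n - 1)) = 0 := by
        have := Polynomial.modByMonic_add_div P ((X : K[X]) ^ n - 1)
        have h2 := congrArg (aeval φ) this
        rw [map_add, map_mul, hXn, zero_mul, add_zero] at h2
        rw [h2, h0]
      have hdeg : (P %ₘ ((X : K[X]) ^ n - 1)).natDegree < n := by
        by_cases h : P %ₘ ((X : K[X]) ^ n - 1) = 0
        · rw [h]; simpa using by omega
        · have := Polynomial.degree_modByMonic_lt P hmonic
          have hdd : ((X : K[X]) ^ n - 1).degree = n := by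
            simpa using Polynomial.degree_X_pow_sub_C (by omega : 0 < n) (1 : K)
          rw [hdd] at this
          exact (Polynomial.natDegree_lt_iff_degree_lt h).mpr this
      have := hsmall _ hdeg hmod
      exact (Polynomial.modByMonic_eq_zero_iff_dvd hmonic).mp this
    · intro hP
      obtain ⟨Q, rfl⟩ := hP
      rw [map_mul, hXn, zero_mul]
  -- existence of an element with full annihilator, via the structure theorem
  have hexists : ∃ α₀ : F, ∀ P : K[X], aeval φ P α₀ = 0 → aeval φ P = 0 := by
    have htors : Module.IsTorsion K[X] (Module.AEval' φ) := by
      intro z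
      refine ⟨⟨(X : K[X]) ^ n - 1, mem_nonZeroDivisors_of_ne_zero hmonic.ne_zero⟩, ?_⟩
      show ((X : K[X]) ^ n - 1) • z = 0
      apply (Module.AEval.of K F φ).symm.injective
      rw [Module.AEval.of_symm_smul, hXn, map_zero]
      simp
    obtain ⟨y, hy⟩ := exists_generator_of_isTorsion htors
    refine ⟨(Module.AEval.of K F φ).symm y, ?_⟩
    intro P hP
    have h1 : P • y = 0 := by
      apply ((Module.AEval.of K F φ)).symm.injective
      rw [Module.AEval.of_symm_smul, map_zero]
      show aeval φ P • ((Module.AEval.of K F φ).symm y) = 0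
      rw [Module.End.smul_def]
      exact hP
    have h4 := hy P h1
    ext m
    have h5 := congrArg (Module.AEval.of K F φ).symm (h4 ((Module.AEval.of K F φ) m))
    rw [Module.AEval.of_symm_smul, map_zero, LinearEquiv.symm_apply_apply] at h5
    rw [Module.End.smul_def] at h5
    exact h5
  obtain ⟨α₀, hα₀⟩ := hexists
  have hne : ((X : K[X]) ^ n - 1) ≠ 0 := hmonic.ne_zero
  set A := AdjoinRoot ((X : K[X]) ^ n - 1) with hA
  have hI : ∀ a ∈ Ideal.span ({(X : K[X]) ^ n - 1} : Set K[X]), aeval φ a = 0 := by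
    intro a ha
    rw [Ideal.mem_span_singleton] at ha
    exact (hker a).mpr ha
  set θ : A →ₐ[K] Module.End K F :=
    Ideal.Quotient.liftₐ (Ideal.span ({(X : K[X]) ^ n - 1} : Set K[X])) (aeval φ) hI with hθdef
  have hθ : ∀ P : K[X], θ (AdjoinRoot.mk _ P) = aeval φ P := by
    intro P
    rfl
  obtain ⟨L, hL⟩ : ∃ L : F → (A →ₗ[K] F), ∀ (α : F) (r : A), L α r = θ r α := by
    refine ⟨fun α => { toFun := fun r => θ r α, map_add' := ?_, map_smul' := ?_ }, fun α r => rfl⟩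
    · intro r s
      show θ (r + s) α = θ r α + θ s α
      rw [map_add, LinearMap.add_apply]
    · intro c r
      show θ (c • r) α = c • (θ r α)
      rw [map_smul, LinearMap.smul_apply]
  have hrankF : Module.finrank K F = n := by
    have h1 : q ^ n = q ^ Module.finrank K F := by
      rw [← hF, Module.card_eq_pow_finrank (K := K) (V := F), hK]
    exact (Nat.pow_right_injective hq2 h1.symm)
  set B : PowerBasis K A := AdjoinRoot.powerBasis hne with hB
  have hdim : B.dim = n := by
    rw [hB]
    show ((X : K[X]) ^ n - 1).natDegree = n
    have h1 : ((X : K[X]) ^ n - 1) = X ^ n - C 1 := by rw [map_one]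
    rw [h1, Polynomial.natDegree_X_pow_sub_C]
  have hgen : θ B.gen = φ := by
    have h7 : B.gen = AdjoinRoot.mk _ (X : K[X]) := rfl
    rw [h7, hθ, aeval_X]
  set b : Module.Basis (Fin n) K A := B.basis.reindex (finCongr hdim) with hb
  have hbval : ∀ (α : F) (i : Fin n), L α (b i) = α ^ q ^ (i : ℕ) := by
    intro α i
    rw [hb, Module.Basis.reindex_apply, PowerBasis.coe_basis, hL, map_pow, hgen]
    have h2 : (((finCongr hdim).symm i : Fin B.dim) : ℕ) = (i : ℕ) := rfl
    rw [h2]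
    have h3 := hφpow (i : ℕ) α
    rw [← h3]
  haveI : Module.Finite K A := Module.Finite.of_basis b
  have hrankR : Module.finrank K A = n := by
    rw [Module.finrank_eq_card_basis b, Fintype.card_fin]
  have hNI : ∀ α : F, LinearIndependent K (fun i : Fin n => α ^ q ^ (i : ℕ)) ↔
      Function.Injective (L α) := by
    intro α
    constructor
    · intro hli
      rw [← LinearMap.ker_eq_bot]
      rw [Submodule.eq_bot_iff]
      intro x hx
      rw [LinearMap.mem_ker] at hx
      have hrel : ∑ i : Fin n, b.repr x i • (α ^ q ^ (i : ℕ)) = 0 := by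
        have h2 : ∑ i : Fin n, b.repr x i • (α ^ q ^ (i : ℕ))
            = L α (∑ i : Fin n, b.repr x i • b i) := by
          rw [map_sum]
          refine Finset.sum_congr rfl fun i _ => ?_
          rw [map_smul, hbval]
        rw [h2, b.sum_repr, hx]
      have hz := Fintype.linearIndependent_iff.mp hli _ hrel
      have h4 : x = ∑ i : Fin n, b.repr x i • b i := (b.sum_repr x).symm
      rw [h4]
      refine Finset.sum_eq_zero fun i _ => ?_
      rw [hz i, zero_smul]
    · intro hinj
      have h1 : LinearIndependent K (⇑(L α) ∘ ⇑b) :=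
        b.linearIndependent.map' (L α) (LinearMap.ker_eq_bot.mpr hinj)
      have h2 : (fun i : Fin n => α ^ q ^ (i : ℕ)) = ⇑(L α) ∘ ⇑b := by
        funext i
        rw [Function.comp_apply, hbval]
      rw [h2]
      exact h1
  have hinj₀ : Function.Injective (L α₀) := by
    rw [← LinearMap.ker_eq_bot, Submodule.eq_bot_iff]
    intro r hr
    obtain ⟨P, rfl⟩ := AdjoinRoot.mk_surjective r
    rw [LinearMap.mem_ker, hL, hθ] at hr
    have h5 := hα₀ P hr
    rw [AdjoinRoot.mk_eq_zero]
    exact (hker P).mp h5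
  have hsurj : ∀ α : F, Function.Injective (L α) → Function.Surjective (L α) := by
    intro α h
    exact (LinearMap.injective_iff_surjective_of_finrank_eq_finrank
      (by rw [hrankR, hrankF])).mp h
  have hcomp : ∀ (u r : A), L (θ u α₀) r = L α₀ (u * r) := by
    intro u r
    rw [hL, hL, mul_comm u r, map_mul, Module.End.mul_apply]
  have hunit : ∀ u : A, Function.Injective (L (θ u α₀)) → IsUnit u := by
    intro u hinj
    have hmu : Function.Injective (LinearMap.mulLeft K u) := by
      intro r s hrs
      apply hinj
      rw [hcomp, hcomp]
      exact congrArg (L α₀) hrs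
    have hmusurj : Function.Surjective (LinearMap.mulLeft K u) :=
      (LinearMap.injective_iff_surjective_of_finrank_eq_finrank rfl).mp hmu
    obtain ⟨v, hv⟩ := hmusurj 1
    exact IsUnit.of_mul_eq_one (a := u) v hv
  have hunit' : ∀ u : Aˣ, Function.Injective (L (θ (u : A) α₀)) := by
    intro u r s hrs
    rw [hcomp, hcomp] at hrs
    have h6 := hinj₀ hrs
    exact (Units.mul_right_inj u).mp h6
  have hbij : Function.Bijective (fun u : Aˣ =>
      (⟨θ (u : A) α₀, (hNI _).mpr (hunit' u)⟩ :
        {α : F // LinearIndependent K (fun i : Fin n => α ^ q ^ (i : ℕ))})) := by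
    constructor
    · intro u v huv
      have h1 : θ (u : A) α₀ = θ (v : A) α₀ := congrArg Subtype.val huv
      have h2 : L α₀ (u : A) = L α₀ (v : A) := by rw [hL, hL]; exact h1
      exact Units.ext (hinj₀ h2)
    · rintro ⟨α, hα⟩
      obtain ⟨r, hr⟩ := hsurj α₀ hinj₀ α
      have hrα : θ r α₀ = α := by rw [← hL]; exact hr
      have hu : IsUnit r := by
        apply hunit r
        rw [hrα]
        exact (hNI α).mp hα
      refine ⟨hu.unit, ?_⟩
      apply Subtype.ext
      show θ ((hu.unit : Aˣ) : A) α₀ = α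
      rw [IsUnit.unit_spec]
      exact hrα
  exact (Nat.card_eq_of_bijective _ hbij).symm
end

section
/- There exists an absolute constant c > 0 such that for every prime power q, every integer n ≥ 2, and K a finite field with q elements, the number Φ(x^n − 1) of units of the quotient ring K[X]/(X^n − 1) satisfies Φ(x^n − 1)/(q^n − 1) ≥ c / log(q^n), where log denotes the natural logarithm. -/
open Polynomial Module Function


noncomputable def preimEquiv {R T : Type*} [AddCommGroup R] [AddCommGroup T]
    (f : R →+ T) (hf : Surjective f) (U : Set T) :
    (f ⁻¹' U) ≃ U × {x : R // f x = 0} where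
  toFun x := (⟨f x.1, x.2⟩, ⟨x.1 - surjInv hf (f x.1), by simp [map_sub, surjInv_eq hf]⟩)
  invFun p := ⟨surjInv hf p.1.1 + p.2.1, by
    have : f (surjInv hf p.1.1 + p.2.1) = p.1.1 := by
      simp [map_add, surjInv_eq hf, p.2.2]
    simp [Set.mem_preimage, this, p.1.2]⟩
  left_inv x := by ext; simp
  right_inv p := by
    ext
    · simp [map_add, surjInv_eq hf, p.2.2]
    · simp [map_add, surjInv_eq hf, p.2.2]

theorem card_preimage {R T : Type*} [AddCommGroup R] [AddCommGroup T]
    (f : R →+ T) (hf : Surjective f) (U : Set T) :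
    Nat.card (f ⁻¹' U) = Nat.card U * Nat.card {x : R // f x = 0} := by
  rw [Nat.card_congr (preimEquiv f hf U), Nat.card_prod]

noncomputable def unitsEquivIsUnit (M : Type*) [CommMonoid M] : {x : M // IsUnit x} ≃ Mˣ where
  toFun x := x.2.unit
  invFun u := ⟨u, u.isUnit⟩
  left_inv x := Subtype.ext x.2.unit_spec
  right_inv u := Units.ext u.isUnit.unit_spec

theorem pi_isUnit_iff {ι : Type*} {F : ι → Type*} [∀ i, Field (F i)] (t : ∀ i, F i) :
    IsUnit t ↔ ∀ i, t i ≠ 0 := by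
  constructor
  · rintro ⟨u, rfl⟩ i h
    have := congrFun u.mul_inv i
    rw [Pi.mul_apply, h, zero_mul] at this
    exact zero_ne_one (α := F i) this
  · intro h
    refine isUnit_iff_exists_inv.2 ⟨fun i => (t i)⁻¹, ?_⟩
    funext i
    exact mul_inv_cancel₀ (h i)

theorem card_isUnit_pi {ι : Type*} [Fintype ι] {F : ι → Type*} [∀ i, Field (F i)]
    [∀ i, Finite (F i)] :
    Nat.card {t : ∀ i, F i // IsUnit t} = ∏ i, (Nat.card (F i) - 1) := by
  have e1 : {t : ∀ i, F i // IsUnit t} ≃ ∀ i, {x : F i // x ≠ 0} :=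
    (Equiv.subtypeEquivRight fun t => pi_isUnit_iff t).trans
      (Equiv.subtypePiEquivPi (p := fun i (b : F i) => b ≠ 0))
  rw [Nat.card_congr e1, Nat.card_pi]
  refine Finset.prod_congr rfl fun i _ => ?_
  rw [← Nat.card_units, Nat.card_congr (unitsEquivNeZero (G₀ := F i)).symm]

theorem main_identity (R : Type*) [CommRing R] [Finite R]
    [Fintype {m : Ideal R // m.IsMaximal}] :
    Nat.card Rˣ * ∏ m : {m : Ideal R // m.IsMaximal}, Nat.card (R ⧸ m.1) =
    Nat.card R * ∏ m : {m : Ideal R // m.IsMaximal}, (Nat.card (R ⧸ m.1) - 1) := by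
  classical
  haveI : ∀ m : {m : Ideal R // m.IsMaximal}, m.1.IsMaximal := fun m => m.2
  letI : ∀ m : {m : Ideal R // m.IsMaximal}, Field (R ⧸ m.1) :=
    fun m => Ideal.Quotient.field m.1
  have hcop : Pairwise (IsCoprime on fun m : {m : Ideal R // m.IsMaximal} => m.1) :=
    fun m m' hne => (Ideal.isCoprime_iff_sup_eq).2
      (Ideal.IsMaximal.coprime_of_ne m.2 m'.2 (fun h => hne (Subtype.ext h)))
  haveI : ∀ m : {m : Ideal R // m.IsMaximal}, Finite (R ⧸ m.1) :=
    fun m => Finite.of_surjective _ Ideal.Quotient.mk_surjective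
  let e := Ideal.quotientInfRingEquivPiQuotient _ hcop
  let π : R →+* ∀ m : {m : Ideal R // m.IsMaximal}, R ⧸ m.1 :=
    (e : _ ≃+* _).toRingHom.comp (Ideal.Quotient.mk _)
  have hπs : Surjective π := e.surjective.comp Ideal.Quotient.mk_surjective
  have hker : ∀ x, π x = 0 ↔ x ∈ ⨅ m : {m : Ideal R // m.IsMaximal}, m.1 := by
    intro x
    rw [show π x = e (Ideal.Quotient.mk _ x) from rfl, EmbeddingLike.map_eq_zero_iff,
      Ideal.Quotient.eq_zero_iff_mem]
  have hjac : (⨅ m : {m : Ideal R // m.IsMaximal}, m.1) ≤ Ideal.jacobson (⊥ : Ideal R) := by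
    rw [Ideal.jacobson]
    refine le_sInf ?_
    rintro J ⟨-, hJ⟩
    exact iInf_le (fun m : {m : Ideal R // m.IsMaximal} => m.1) ⟨J, hJ⟩
  have hunit : ∀ x : R, IsUnit x ↔ IsUnit (π x) := by
    intro x
    refine ⟨fun h => h.map π, fun h => ?_⟩
    obtain ⟨t, ht⟩ := isUnit_iff_exists_inv.1 h
    obtain ⟨y, rfl⟩ := hπs t
    have h0 : π (x * y - 1) = 0 := by rw [map_sub, map_mul, ht, map_one, sub_self]
    have : x * y - 1 ∈ Ideal.jacobson (⊥ : Ideal R) := hjac ((hker _).1 h0)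
    exact isUnit_of_mul_isUnit_left (Ideal.isUnit_of_sub_one_mem_jacobson_bot _ this)
  have h1 : Nat.card Rˣ =
      (∏ m : {m : Ideal R // m.IsMaximal}, (Nat.card (R ⧸ m.1) - 1)) *
        Nat.card {x : R // π x = 0} := by
    rw [← Nat.card_congr (unitsEquivIsUnit R), ← card_isUnit_pi]
    have e2 : {x : R // IsUnit x} ≃ (π.toAddMonoidHom ⁻¹' {t | IsUnit t}) :=
      Equiv.subtypeEquivRight fun x => by simpa using hunit x
    rw [Nat.card_congr e2, card_preimage π.toAddMonoidHom hπs]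
    rfl
  have h2 : Nat.card R =
      (∏ m : {m : Ideal R // m.IsMaximal}, Nat.card (R ⧸ m.1)) *
        Nat.card {x : R // π x = 0} := by
    have e2 : R ≃ (π.toAddMonoidHom ⁻¹' Set.univ) :=
      (Equiv.Set.univ R).symm.trans (Equiv.setCongr (by simp))
    rw [Nat.card_congr e2, card_preimage π.toAddMonoidHom hπs]
    congr 1
    rw [Nat.card_congr (Equiv.Set.univ _), Nat.card_pi]
  rw [h1, h2]
  ring

theorem per_ideal (K : Type*) [Field K] [Fintype K] {n d : ℕ} (hn : 0 < n)
    (m : Ideal (AdjoinRoot (X ^ n - 1 : K[X]))) (hm : m.IsMaximal)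
    (hfr : finrank K (AdjoinRoot (X ^ n - 1 : K[X]) ⧸ m) = d) :
    ∃ g : Fin d → (AdjoinRoot (X ^ n - 1 : K[X]) →ₐ[K] AlgebraicClosure K),
      Injective g ∧ (∀ i, RingHom.ker (g i) = m) ∧
        ∀ i, (g i (AdjoinRoot.root _)) ^ (Fintype.card K ^ d - 1) = 1 := by
  classical
  haveI := hm
  letI : Field (AdjoinRoot (X ^ n - 1 : K[X]) ⧸ m) := Ideal.Quotient.field m
  have hmonic : (X ^ n - 1 : K[X]).Monic := by
    have := monic_X_pow_sub_C (1 : K) hn.ne'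
    rwa [map_one] at this
  letI : Module.Finite K (AdjoinRoot (X ^ n - 1 : K[X])) :=
    Module.Finite.of_basis (AdjoinRoot.powerBasis' hmonic).basis
  haveI : Module.Finite K (AdjoinRoot (X ^ n - 1 : K[X]) ⧸ m) :=
    Module.Finite.of_surjective (Ideal.Quotient.mkₐ K m).toLinearMap
      (Ideal.Quotient.mkₐ_surjective K m)
  have hcardhom : Fintype.card ((AdjoinRoot (X ^ n - 1 : K[X]) ⧸ m) →ₐ[K] AlgebraicClosure K)
      = d := by rw [AlgHom.card, hfr]
  let e := (Fintype.equivFinOfCardEq hcardhom).symm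
  refine ⟨fun i => (e i).comp (Ideal.Quotient.mkₐ K m), ?_, ?_, ?_⟩
  · intro i j hij
    apply e.injective
    ext x
    obtain ⟨y, rfl⟩ := Ideal.Quotient.mkₐ_surjective K m x
    exact DFunLike.congr_fun hij y
  · intro i
    ext x
    rw [RingHom.mem_ker]
    constructor
    · intro hx
      have : (e i) (Ideal.Quotient.mkₐ K m x) = 0 := hx
      have h2 : Ideal.Quotient.mkₐ K m x = 0 := by
        apply RingHom.injective (e i).toRingHom
        simpa using this
      rwa [Ideal.Quotient.mkₐ_eq_mk, Ideal.Quotient.eq_zero_iff_mem] at h2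
    · intro hx
      have h2 : Ideal.Quotient.mkₐ K m x = 0 := by
        rw [Ideal.Quotient.mkₐ_eq_mk, Ideal.Quotient.eq_zero_iff_mem]; exact hx
      show (e i) (Ideal.Quotient.mkₐ K m x) = 0
      rw [h2, map_zero]
  · intro i
    letI : Fintype (AdjoinRoot (X ^ n - 1 : K[X])) :=
      Module.fintypeOfFintype (AdjoinRoot.powerBasis' hmonic).basis
    haveI : Finite (AdjoinRoot (X ^ n - 1 : K[X]) ⧸ m) :=
      Finite.of_surjective _ Ideal.Quotient.mk_surjective
    letI : Fintype (AdjoinRoot (X ^ n - 1 : K[X]) ⧸ m) := Fintype.ofFinite _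
    have hcard : Fintype.card (AdjoinRoot (X ^ n - 1 : K[X]) ⧸ m) = Fintype.card K ^ d := by
      rw [card_eq_pow_finrank (K := K), hfr]
    set xbar := Ideal.Quotient.mkₐ K m (AdjoinRoot.root (X ^ n - 1 : K[X])) with hxbar
    have hrootpow : (AdjoinRoot.root (X ^ n - 1 : K[X])) ^ n = 1 := by
      have h0 : AdjoinRoot.mk (X ^ n - 1 : K[X]) (X ^ n - 1 : K[X]) = 0 := AdjoinRoot.mk_self
      rw [map_sub, map_pow, map_one, sub_eq_zero, AdjoinRoot.mk_X] at h0
      exact h0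
    have hxbarn : xbar ^ n = 1 := by rw [hxbar, ← map_pow, hrootpow, map_one]
    have hxne : xbar ≠ 0 := by
      intro h
      rw [h, zero_pow hn.ne'] at hxbarn
      exact zero_ne_one hxbarn
    have hx1 : xbar ^ (Fintype.card K ^ d - 1) = 1 := by
      rw [← hcard]
      exact FiniteField.pow_card_sub_one_eq_one xbar hxne
    show ((e i) xbar) ^ (Fintype.card K ^ d - 1) = 1
    rw [← map_pow, hx1, map_one]

theorem fiber_bound (K : Type*) [Field K] [Fintype K] {n : ℕ} (hn : 0 < n) (d : ℕ) :
    Nat.card {m : {m : Ideal (AdjoinRoot (X ^ n - 1 : K[X])) // m.IsMaximal} //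
        finrank K (AdjoinRoot (X ^ n - 1 : K[X]) ⧸ m.1) = d} * d
      ≤ Fintype.card K ^ d - 1 := by
  classical
  rcases Nat.eq_zero_or_pos d with rfl | hd
  · simp
  have hq2 : 2 ≤ Fintype.card K := Fintype.one_lt_card
  have hqd : 0 < Fintype.card K ^ d - 1 := by
    have : 2 ≤ Fintype.card K ^ d :=
      le_trans hq2 (Nat.le_self_pow hd.ne' _)
    omega
  set ιd := {m : {m : Ideal (AdjoinRoot (X ^ n - 1 : K[X])) // m.IsMaximal} //
    finrank K (AdjoinRoot (X ^ n - 1 : K[X]) ⧸ m.1) = d} with hιd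
  choose g hg1 hg2 hg3 using fun m : ιd => per_ideal K hn m.1.1 m.1.2 m.2
  -- ιd is finite
  haveI : Finite (Ideal (AdjoinRoot (X ^ n - 1 : K[X]))) := by
    have hmonic : (X ^ n - 1 : K[X]).Monic := by
      have := monic_X_pow_sub_C (1 : K) hn.ne'
      rwa [map_one] at this
    letI : Fintype (AdjoinRoot (X ^ n - 1 : K[X])) :=
      Module.fintypeOfFintype (AdjoinRoot.powerBasis' hmonic).basis
    exact Finite.of_injective (fun I => (I : Set (AdjoinRoot (X ^ n - 1 : K[X]))))
      fun I J h => SetLike.coe_injective h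
  haveI : Finite ιd := Subtype.finite
  letI : Fintype ιd := Fintype.ofFinite _
  set Λ := (nthRoots (Fintype.card K ^ d - 1) (1 : AlgebraicClosure K)).toFinset with hΛ
  have hmem : ∀ p : ιd × Fin d, g p.1 p.2 (AdjoinRoot.root _) ∈ Λ := by
    intro p
    rw [hΛ, Multiset.mem_toFinset, mem_nthRoots hqd]
    exact hg3 p.1 p.2
  have hinj : Injective (fun p : ιd × Fin d =>
      (⟨g p.1 p.2 (AdjoinRoot.root _), hmem p⟩ : Λ)) := by
    rintro ⟨m, i⟩ ⟨m', j⟩ h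
    simp only [Subtype.mk.injEq] at h
    have he : g m i = g m' j := AdjoinRoot.algHom_ext h
    have hm : m = m' := Subtype.ext (Subtype.ext (by rw [← hg2 m i, ← hg2 m' j, he]))
    subst hm
    have : i = j := hg1 m he
    rw [this]
  have hcard : Fintype.card (ιd × Fin d) ≤ Λ.card := by
    have := Fintype.card_le_of_injective _ hinj
    simpa [Fintype.card_coe] using this
  have hΛcard : Λ.card ≤ Fintype.card K ^ d - 1 :=
    le_trans (Multiset.toFinset_card_le _) (card_nthRoots _ _)
  calc Nat.card ιd * d = Fintype.card (ιd × Fin d) := by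
        rw [Fintype.card_prod, Fintype.card_fin, Nat.card_eq_fintype_card]
    _ ≤ _ := le_trans hcard hΛcard

theorem main_bound (K : Type*) [Field K] [Fintype K] {n : ℕ} (hn : 2 ≤ n) :
    (Fintype.card K : ℝ) ^ n ≤
      Real.exp 1 * n * Nat.card (AdjoinRoot (X ^ n - 1 : K[X]))ˣ := by
  classical
  set q := Fintype.card K with hq
  have hq2 : 2 ≤ q := Fintype.one_lt_card
  have hn0 : 0 < n := by omega
  have hmonic : (X ^ n - 1 : K[X]).Monic := by
    have := monic_X_pow_sub_C (1 : K) hn0.ne'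
    rwa [map_one] at this
  letI : Fintype (AdjoinRoot (X ^ n - 1 : K[X])) :=
    Module.fintypeOfFintype (AdjoinRoot.powerBasis' hmonic).basis
  haveI : Finite (Ideal (AdjoinRoot (X ^ n - 1 : K[X]))) :=
    Finite.of_injective (fun I => (I : Set (AdjoinRoot (X ^ n - 1 : K[X]))))
      fun I J h => SetLike.coe_injective h
  letI : Fintype {m : Ideal (AdjoinRoot (X ^ n - 1 : K[X])) // m.IsMaximal} :=
    Fintype.ofFinite _
  -- cardinality of R
  have hcardR : Nat.card (AdjoinRoot (X ^ n - 1 : K[X])) = q ^ n := by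
    have hdeg : (X ^ n - 1 : K[X]).natDegree = n := by
      have := natDegree_X_pow_sub_C (n := n) (r := (1 : K))
      rwa [map_one] at this
    rw [Nat.card_eq_fintype_card,
      Module.card_fintype (AdjoinRoot.powerBasis' hmonic).basis]
    simp [AdjoinRoot.powerBasis', hdeg]
    rfl
  -- local notation
  set ι := {m : Ideal (AdjoinRoot (X ^ n - 1 : K[X])) // m.IsMaximal} with hι
  set c : ι → ℕ := fun m => Nat.card (AdjoinRoot (X ^ n - 1 : K[X]) ⧸ m.1) with hc
  set dm : ι → ℕ := fun m => finrank K (AdjoinRoot (X ^ n - 1 : K[X]) ⧸ m.1) with hdm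
  have hcpow : ∀ m : ι, c m = q ^ dm m := by
    intro m
    haveI : Finite (AdjoinRoot (X ^ n - 1 : K[X]) ⧸ m.1) :=
      Finite.of_surjective _ Ideal.Quotient.mk_surjective
    letI : Fintype (AdjoinRoot (X ^ n - 1 : K[X]) ⧸ m.1) := Fintype.ofFinite _
    rw [hc]
    simp only
    rw [Nat.card_eq_fintype_card, card_eq_pow_finrank (K := K)]
  have hd1 : ∀ m : ι, 1 ≤ dm m := by
    intro m
    haveI := m.2
    letI : Field (AdjoinRoot (X ^ n - 1 : K[X]) ⧸ m.1) := Ideal.Quotient.field m.1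
    haveI : Module.Finite K (AdjoinRoot (X ^ n - 1 : K[X]) ⧸ m.1) :=
      Module.Finite.of_surjective (Ideal.Quotient.mkₐ K m.1).toLinearMap
        (Ideal.Quotient.mkₐ_surjective K m.1)
    exact Module.finrank_pos
  have hdn : ∀ m : ι, dm m ≤ n := by
    intro m
    have h1 : c m ≤ q ^ n := by
      rw [← hcardR, hc]
      exact Nat.card_le_card_of_surjective _ Ideal.Quotient.mk_surjective
    rw [hcpow m] at h1
    exact (Nat.pow_le_pow_iff_right hq2).1 h1
  have hc2 : ∀ m : ι, 2 ≤ c m := by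
    intro m
    rw [hcpow m]
    exact le_trans hq2 (Nat.le_self_pow (by have := hd1 m; omega) _)
  -- the sum bound
  have hsum : ∑ m : ι, ((c m : ℝ) - 1)⁻¹ ≤ 1 + Real.log n := by
    have grp := Finset.sum_comp (s := (Finset.univ : Finset ι))
      (fun d : ℕ => ((q : ℝ) ^ d - 1)⁻¹) dm
    have hterm : ∀ m : ι, ((c m : ℝ) - 1)⁻¹ = ((q : ℝ) ^ (dm m) - 1)⁻¹ := by
      intro m
      rw [hcpow m]
      norm_cast
    calc ∑ m : ι, ((c m : ℝ) - 1)⁻¹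
        = ∑ m : ι, ((q : ℝ) ^ (dm m) - 1)⁻¹ := Finset.sum_congr rfl fun m _ => hterm m
      _ = ∑ d ∈ Finset.univ.image dm, (Finset.univ.filter fun m => dm m = d).card •
            ((q : ℝ) ^ d - 1)⁻¹ := grp
      _ ≤ ∑ d ∈ Finset.univ.image dm, (d : ℝ)⁻¹ := by
          apply Finset.sum_le_sum
          intro d hdim
          obtain ⟨m0, _, hm0⟩ := Finset.mem_image.1 hdim
          have hdpos : 0 < d := by rw [← hm0]; exact hd1 m0
          have hqd1 : (1 : ℝ) ≤ (q : ℝ) ^ d := by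
            apply one_le_pow₀
            exact_mod_cast le_trans (by norm_num) hq2
          have hqd2 : (2 : ℝ) ≤ (q : ℝ) ^ d := by
            calc (2:ℝ) ≤ (q:ℝ) := by exact_mod_cast hq2
            _ ≤ (q:ℝ)^d := le_self_pow₀ (by exact_mod_cast le_trans one_le_two hq2) hdpos.ne'
          -- nat bound
          have hnat : (Finset.univ.filter fun m => dm m = d).card * d ≤ q ^ d - 1 := by
            have := fiber_bound K hn0 d
            have hcards : (Finset.univ.filter fun m => dm m = d).card
                = Nat.card {m : ι // dm m = d} := by
              rw [Nat.card_eq_fintype_card, Fintype.card_subtype]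
            rw [hcards]
            exact this
          have hcast : ((Finset.univ.filter fun m => dm m = d).card : ℝ) * d
              ≤ (q : ℝ) ^ d - 1 := by
            have h1 : ((q ^ d - 1 : ℕ) : ℝ) = (q : ℝ) ^ d - 1 := by
              have : 1 ≤ q ^ d := le_trans one_le_two (by exact_mod_cast hqd2)
              push_cast [Nat.cast_sub this]
              ring
            rw [← h1]
            exact_mod_cast hnat
          rw [nsmul_eq_mul, ← div_eq_mul_inv, ← one_div,
            div_le_div_iff₀ (by linarith) (by exact_mod_cast hdpos)]
          linarith [hcast]
      _ ≤ ∑ d ∈ Finset.Icc 1 n, (d : ℝ)⁻¹ := by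
          apply Finset.sum_le_sum_of_subset_of_nonneg
          · intro d hdim
            obtain ⟨m0, _, hm0⟩ := Finset.mem_image.1 hdim
            rw [Finset.mem_Icc, ← hm0]
            exact ⟨hd1 m0, hdn m0⟩
          · intro d _ _
            positivity
      _ = (harmonic n : ℝ) := by
          rw [harmonic_eq_sum_Icc]
          push_cast
          rfl
      _ ≤ 1 + Real.log n := harmonic_le_one_add_log n
  -- product lower bound
  have hprodpos : (0:ℝ) < ∏ m : ι, (c m : ℝ) := by
    apply Finset.prod_pos
    intro m _
    have := hc2 m
    positivity
  have hpoint : ∀ m : ι, Real.exp (-(((c m : ℝ) - 1)⁻¹)) ≤ ((c m : ℝ) - 1) / (c m : ℝ) := by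
    intro m
    have h2 : (2:ℝ) ≤ (c m : ℝ) := by exact_mod_cast hc2 m
    have hpos : (0:ℝ) < (c m : ℝ) - 1 := by linarith
    set x := ((c m : ℝ) - 1)⁻¹ with hx
    have hxpos : 0 < x := by positivity
    have key : 1 + x ≤ Real.exp x := by
      have := Real.add_one_le_exp x
      linarith
    have heq : (1 + x)⁻¹ = ((c m : ℝ) - 1) / (c m : ℝ) := by
      rw [hx]
      rw [show 1 + ((c m : ℝ) - 1)⁻¹ = (c m : ℝ) / ((c m : ℝ) - 1) by field_simp; ring]
      rw [inv_div]
    calc Real.exp (-x) = (Real.exp x)⁻¹ := Real.exp_neg x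
      _ ≤ (1 + x)⁻¹ := by
          apply inv_anti₀ (by positivity) key
      _ = ((c m : ℝ) - 1) / (c m : ℝ) := heq
  have hprodge : Real.exp (-(1 + Real.log n)) ≤ ∏ m : ι, (((c m : ℝ) - 1) / (c m : ℝ)) := by
    calc Real.exp (-(1 + Real.log n)) ≤ Real.exp (-(∑ m : ι, ((c m : ℝ) - 1)⁻¹)) := by
          apply Real.exp_le_exp.2
          linarith [hsum]
      _ = ∏ m : ι, Real.exp (-(((c m : ℝ) - 1)⁻¹)) := by
          rw [← Real.exp_sum, Finset.sum_neg_distrib]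
      _ ≤ ∏ m : ι, (((c m : ℝ) - 1) / (c m : ℝ)) :=
          Finset.prod_le_prod (fun m _ => (Real.exp_pos _).le) (fun m _ => hpoint m)
  -- the counting identity, over ℝ
  have hidR : (Nat.card (AdjoinRoot (X ^ n - 1 : K[X]))ˣ : ℝ) * ∏ m : ι, (c m : ℝ) =
      (q : ℝ) ^ n * ∏ m : ι, ((c m : ℝ) - 1) := by
    have h := congrArg (Nat.cast : ℕ → ℝ) (main_identity (AdjoinRoot (X ^ n - 1 : K[X])))
    rw [Nat.cast_mul, Nat.cast_mul, Nat.cast_prod, Nat.cast_prod, hcardR] at h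
    have hcast2 : ∀ m : ι, ((c m - 1 : ℕ) : ℝ) = (c m : ℝ) - 1 := by
      intro m
      have := hc2 m
      rw [Nat.cast_sub (by omega)]
      norm_num
    calc (Nat.card (AdjoinRoot (X ^ n - 1 : K[X]))ˣ : ℝ) * ∏ m : ι, (c m : ℝ)
        = ((q ^ n : ℕ) : ℝ) * ∏ m : ι, ((c m - 1 : ℕ) : ℝ) := h
      _ = (q : ℝ) ^ n * ∏ m : ι, ((c m : ℝ) - 1) := by
          rw [Finset.prod_congr rfl fun m _ => hcast2 m]
          push_cast
          ring
  have hΦ : (q : ℝ) ^ n * Real.exp (-(1 + Real.log n)) ≤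
      (Nat.card (AdjoinRoot (X ^ n - 1 : K[X]))ˣ : ℝ) := by
    have hΦeq : (Nat.card (AdjoinRoot (X ^ n - 1 : K[X]))ˣ : ℝ) =
        (q : ℝ) ^ n * ∏ m : ι, (((c m : ℝ) - 1) / (c m : ℝ)) := by
      rw [Finset.prod_div_distrib, mul_div_assoc', eq_div_iff hprodpos.ne']
      linarith [hidR]
    rw [hΦeq]
    exact mul_le_mul_of_nonneg_left hprodge (by positivity)
  have hexp : Real.exp (1 + Real.log n) = Real.exp 1 * n := by
    rw [Real.exp_add, Real.exp_log (by exact_mod_cast hn0)]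
  calc (q : ℝ) ^ n
      = (q : ℝ) ^ n * (Real.exp (-(1 + Real.log n)) * Real.exp (1 + Real.log n)) := by
        rw [← Real.exp_add, neg_add_cancel, Real.exp_zero, mul_one]
    _ = ((q : ℝ) ^ n * Real.exp (-(1 + Real.log n))) * Real.exp (1 + Real.log n) := by ring
    _ ≤ (Nat.card (AdjoinRoot (X ^ n - 1 : K[X]))ˣ : ℝ) * Real.exp (1 + Real.log n) :=
        mul_le_mul_of_nonneg_right hΦ (Real.exp_pos _).le
    _ = Real.exp 1 * n * Nat.card (AdjoinRoot (X ^ n - 1 : K[X]))ˣ := by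
        rw [hexp]; ring

/-- There is an absolute constant `c > 0` such that for every prime
power `q`, every integer `n ≥ 2` and every finite field `K` with `q` elements, the
number `Φ(xⁿ - 1)` of units of `K[X]/(Xⁿ - 1)` satisfies
`Φ(xⁿ - 1)/(qⁿ - 1) ≥ c / log (qⁿ)`. -/
theorem card_units_quotient_lower_bound :
    ∃ c : ℝ, 0 < c ∧
      ∀ (q n : ℕ), IsPrimePow q → 2 ≤ n →
        ∀ (K : Type) [Field K] [Fintype K], Fintype.card K = q →
          (Nat.card ((K[X] ⧸ Ideal.span ({X ^ n - 1} : Set K[X]))ˣ) : ℝ) /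
              ((q : ℝ) ^ n - 1) ≥ c / Real.log ((q : ℝ) ^ n) := by
  have he : (0:ℝ) < Real.exp 1 := Real.exp_pos 1
  have hl2 : (0:ℝ) < Real.log 2 := Real.log_pos (by norm_num)
  refine ⟨Real.log 2 / Real.exp 1, by positivity, ?_⟩
  intro q n hq hn K _ _ hK
  subst hK
  show (Nat.card ((AdjoinRoot (X ^ n - 1 : K[X]))ˣ) : ℝ) / ((Fintype.card K : ℝ) ^ n - 1)
    ≥ Real.log 2 / Real.exp 1 / Real.log ((Fintype.card K : ℝ) ^ n)
  have hq2 : (2:ℝ) ≤ (Fintype.card K : ℝ) := by exact_mod_cast Fintype.one_lt_card (α := K)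
  have hn0 : (0:ℝ) < (n:ℝ) := by
    have : (2:ℝ) ≤ (n:ℝ) := by exact_mod_cast hn
    linarith
  set Q : ℝ := (Fintype.card K : ℝ) with hQ
  set Φ : ℝ := (Nat.card ((AdjoinRoot (X ^ n - 1 : K[X]))ˣ) : ℝ) with hΦdef
  have hΦ0 : 0 ≤ Φ := by positivity
  have hQn : (2:ℝ) ≤ Q ^ n := le_trans hq2 (le_self_pow₀ (by linarith) (by omega))
  have hA : (0:ℝ) < Q ^ n - 1 := by linarith
  have hlogQ : Real.log 2 ≤ Real.log Q := Real.log_le_log (by norm_num) hq2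
  have hlogQ0 : 0 < Real.log Q := lt_of_lt_of_le hl2 hlogQ
  have hmb : Q ^ n ≤ Real.exp 1 * n * Φ := main_bound K hn
  have h1 : 1 / (Real.exp 1 * n) ≤ Φ / Q ^ n := by
    rw [div_le_div_iff₀ (by positivity) (by positivity)]
    nlinarith [hmb]
  have h2 : Real.log 2 / Real.exp 1 / Real.log (Q ^ n) ≤ 1 / (Real.exp 1 * n) := by
    rw [Real.log_pow, div_div, div_le_div_iff₀ (by positivity) (by positivity)]
    have : Real.exp 1 * ((n:ℝ) * Real.log Q) = (Real.exp 1 * n) * Real.log Q := by ring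
    nlinarith [mul_le_mul_of_nonneg_right hlogQ (le_of_lt (mul_pos he hn0))]
  have h3 : Φ / Q ^ n ≤ Φ / (Q ^ n - 1) := by
    apply div_le_div_of_nonneg_left hΦ0 hA (by linarith)
  exact le_trans (le_trans h2 h1) h3
end

section
/- Let F be a finite field and set N = |F| − 1. For every nonzero element α ∈ F, the sum (φ(N)/N) · Σ_{d ∣ N} (μ(d)/φ(d)) · Σ_{χ : ord(χ) = d} χ(α), where the inner sum runs over all multiplicative characters χ of F with values in ℂ whose order is exactly d, equals 1 if α has multiplicative order N (i.e., α generates the cyclic group Fˣ), and equals 0 otherwise. -/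
open Finset ArithmeticFunction Nat
open scoped ArithmeticFunction.Moebius ArithmeticFunction.zeta

noncomputable def gfun : ArithmeticFunction ℂ :=
  ⟨fun d => (μ d : ℂ)^2 / (Nat.totient d : ℂ), by simp⟩

lemma gfun_apply (d : ℕ) : gfun d = (μ d : ℂ)^2 / (Nat.totient d : ℂ) := rfl

noncomputable def hfun : ArithmeticFunction ℂ :=
  ⟨fun d => (d : ℂ) / (Nat.totient d : ℂ), by simp⟩

lemma hfun_apply (d : ℕ) : hfun d = (d : ℂ) / (Nat.totient d : ℂ) := rfl

lemma gfun_mult : gfun.IsMultiplicative := by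
  refine ⟨by simp [gfun_apply], fun {m n} h => ?_⟩
  simp only [gfun_apply]
  rw [isMultiplicative_moebius.map_mul_of_coprime h, Nat.totient_mul h]
  push_cast
  ring

lemma hfun_mult : hfun.IsMultiplicative := by
  refine ⟨by simp [hfun_apply], fun {m n} h => ?_⟩
  simp only [hfun_apply]
  rw [Nat.totient_mul h]
  push_cast
  ring

lemma I1 (N : ℕ) (hN : N ≠ 0) :
    ∑ d ∈ N.divisors, (μ d : ℂ)^2 / (Nat.totient d : ℂ) = (N : ℂ) / (Nat.totient N : ℂ) := by
  have key : (↑ζ * gfun : ArithmeticFunction ℂ) = hfun := by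
    rw [ArithmeticFunction.IsMultiplicative.eq_iff_eq_on_prime_powers _
      (isMultiplicative_zeta.natCast.mul gfun_mult) _ hfun_mult]
    intro p i hp
    have hp1 : (1 : ℕ) ≤ p := hp.one_lt.le
    have hpne : ((p : ℂ) - 1) ≠ 0 := by
      have h1 : (p : ℂ) ≠ 1 := by exact_mod_cast hp.one_lt.ne'
      exact sub_ne_zero.mpr h1
    have hp0 : (p : ℂ) ≠ 0 := by exact_mod_cast hp.pos.ne'
    rcases Nat.eq_zero_or_pos i with rfl | hi
    · simp [(isMultiplicative_zeta.natCast.mul gfun_mult).map_one, hfun_mult.map_one]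
    obtain ⟨k, rfl⟩ : ∃ k, i = k + 1 := ⟨i - 1, by omega⟩
    rw [coe_zeta_mul_apply, Nat.sum_divisors_prime_pow hp]
    have hmid : ∀ j ∈ Finset.range k, gfun (p ^ (j + 1 + 1)) = 0 := by
      intro j _
      rw [gfun_apply, moebius_apply_prime_pow hp (by omega)]
      simp
    rw [Finset.sum_range_succ', Finset.sum_range_succ', Finset.sum_congr rfl hmid]
    have h0 : gfun (p ^ 0) = 1 := by simp [gfun_apply]
    have h1 : gfun (p ^ (0 + 1)) = 1 / ((p : ℂ) - 1) := by
      rw [pow_one, gfun_apply, moebius_apply_prime hp, Nat.totient_prime hp,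
        Nat.cast_sub hp1]
      norm_num
    rw [h0, h1, hfun_apply, Nat.totient_prime_pow hp hi]
    have hcast : ((p ^ k * (p - 1) : ℕ) : ℂ) = (p : ℂ) ^ k * ((p : ℂ) - 1) := by
      push_cast [Nat.cast_sub hp1]
      ring
    simp only [Nat.add_sub_cancel, hcast, Finset.sum_const_zero]
    rw [pow_succ]
    push_cast
    field_simp
    ring
  calc ∑ d ∈ N.divisors, (μ d : ℂ)^2 / (Nat.totient d : ℂ)
      = (↑ζ * gfun : ArithmeticFunction ℂ) N := by
        rw [coe_zeta_mul_apply]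
        exact Finset.sum_congr rfl fun d _ => (gfun_apply d).symm
    _ = (N : ℂ) / (Nat.totient N : ℂ) := by rw [key, hfun_apply]


lemma divisors_filter_not_dvd {d p : ℕ} (hp : p.Prime) (hpd : ¬ p ∣ d) (hd0 : d ≠ 0) :
    (d * p).divisors.filter (fun e => ¬ p ∣ e) = d.divisors := by
  ext e
  simp only [Finset.mem_filter, Nat.mem_divisors, mul_ne_zero hd0 hp.pos.ne']
  constructor
  · rintro ⟨⟨hed, -⟩, hpe⟩
    exact ⟨(Nat.Coprime.dvd_of_dvd_mul_right
      ((hp.coprime_iff_not_dvd.mpr hpe).symm) hed), hd0⟩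
  · rintro ⟨hed, -⟩
    exact ⟨⟨hed.mul_right p, mul_ne_zero hd0 hp.pos.ne'⟩, fun h => hpd (h.trans hed)⟩

lemma sum_divisors_mul_prime {d p : ℕ} (hp : p.Prime) (hpd : ¬ p ∣ d) (hd0 : d ≠ 0)
    (f : ℕ → ℂ) :
    ∑ e ∈ (d * p).divisors, f e = ∑ e ∈ d.divisors, f e + ∑ e ∈ d.divisors, f (e * p) := by
  classical
  rw [← Finset.sum_filter_add_sum_filter_not (d * p).divisors (fun e => p ∣ e)]
  rw [divisors_filter_not_dvd hp hpd hd0, add_comm]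
  congr 1
  refine (Finset.sum_bij (fun e _ => e * p) ?_ ?_ ?_ ?_).symm
  · intro e he
    rw [Nat.mem_divisors] at he
    simp only [Finset.mem_filter, Nat.mem_divisors]
    exact ⟨⟨Nat.mul_dvd_mul he.1 dvd_rfl, mul_ne_zero he.2 hp.pos.ne'⟩, dvd_mul_left p e⟩
  · intro a _ b _ h
    exact Nat.eq_of_mul_eq_mul_right hp.pos h
  · intro e' he'
    simp only [Finset.mem_filter, Nat.mem_divisors] at he'
    obtain ⟨⟨he'd, -⟩, c, rfl⟩ := he'
    refine ⟨c, ?_, (mul_comm p c).symm⟩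
    rw [Nat.mem_divisors]
    rw [mul_comm p c] at he'd
    exact ⟨(Nat.mul_dvd_mul_iff_right hp.pos).mp he'd, hd0⟩
  · intro e _
    rfl

lemma core_cancel {m p : ℕ} (hp : p.Prime) (hpm : p ∣ m) {d : ℕ} (hd0 : d ≠ 0)
    (hpd : ¬ p ∣ d) :
    (μ (d * p) : ℂ) / (Nat.totient (d * p) : ℂ) *
        ∑ e ∈ (d * p).divisors, (μ e : ℂ) * (if d * p ∣ m * e then ((d * p / e : ℕ) : ℂ) else 0)
      = - ((μ d : ℂ) / (Nat.totient d : ℂ) *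
        ∑ e ∈ d.divisors, (μ e : ℂ) * (if d ∣ m * e then ((d / e : ℕ) : ℂ) else 0)) := by
  classical
  have hcop : d.Coprime p := (hp.coprime_iff_not_dvd.mpr hpd).symm
  have hmu : (μ (d * p) : ℤ) = - μ d := by
    rw [isMultiplicative_moebius.map_mul_of_coprime hcop, moebius_apply_prime hp]
    ring
  have hphi : (Nat.totient (d * p) : ℂ) = (Nat.totient d : ℂ) * ((p : ℂ) - 1) := by
    rw [Nat.totient_mul hcop, Nat.totient_prime hp]
    push_cast [Nat.cast_sub hp.one_lt.le]
    ring
  have hcond1 : ∀ e, e ∣ d → (d * p ∣ m * e ↔ d ∣ m * e) := by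
    intro e he
    constructor
    · exact fun h => dvd_trans (dvd_mul_right d p) h
    · intro h
      obtain ⟨m₀, rfl⟩ := hpm
      have h' : d ∣ m₀ * e := by
        refine hcop.dvd_of_dvd_mul_left ?_
        rw [show p * (m₀ * e) = p * m₀ * e by ring]
        exact h
      calc d * p ∣ (m₀ * e) * p := Nat.mul_dvd_mul h' dvd_rfl
        _ = p * m₀ * e := by ring
  have hcond2 : ∀ e, (d * p ∣ m * (e * p) ↔ d ∣ m * e) := by
    intro e
    rw [show m * (e * p) = (m * e) * p by ring]
    exact Nat.mul_dvd_mul_iff_right hp.pos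
  have hinner : (∑ e ∈ (d * p).divisors, (μ e : ℂ) *
      (if d * p ∣ m * e then ((d * p / e : ℕ) : ℂ) else 0))
      = ((p : ℂ) - 1) * ∑ e ∈ d.divisors, (μ e : ℂ) * (if d ∣ m * e then ((d / e : ℕ) : ℂ) else 0) := by
    rw [sum_divisors_mul_prime hp hpd hd0]
    have h1 : ∑ e ∈ d.divisors, (μ e : ℂ) * (if d * p ∣ m * e then ((d * p / e : ℕ) : ℂ) else 0)
        = (p : ℂ) * ∑ e ∈ d.divisors, (μ e : ℂ) * (if d ∣ m * e then ((d / e : ℕ) : ℂ) else 0) := by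
      rw [Finset.mul_sum]
      refine Finset.sum_congr rfl fun e he => ?_
      obtain ⟨hed, -⟩ := Nat.mem_divisors.mp he
      rw [if_congr (hcond1 e hed) rfl rfl]
      have : ((d * p / e : ℕ) : ℂ) = (p : ℂ) * ((d / e : ℕ) : ℂ) := by
        rw [mul_comm d p, Nat.mul_div_assoc p hed]
        push_cast
        ring
      split <;> simp [this] <;> ring
    have h2 : ∑ e ∈ d.divisors, (μ (e * p) : ℂ) *
        (if d * p ∣ m * (e * p) then ((d * p / (e * p) : ℕ) : ℂ) else 0)
        = - ∑ e ∈ d.divisors, (μ e : ℂ) * (if d ∣ m * e then ((d / e : ℕ) : ℂ) else 0) := by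
      rw [← Finset.sum_neg_distrib]
      refine Finset.sum_congr rfl fun e he => ?_
      obtain ⟨hed, -⟩ := Nat.mem_divisors.mp he
      have hecop : e.Coprime p := (hp.coprime_iff_not_dvd.mpr (fun h => hpd (h.trans hed))).symm
      have hmue : (μ (e * p) : ℤ) = - μ e := by
        rw [isMultiplicative_moebius.map_mul_of_coprime hecop, moebius_apply_prime hp]
        ring
      rw [if_congr (hcond2 e) rfl rfl, Nat.mul_div_mul_right _ _ hp.pos]
      push_cast [hmue]
      ring
    rw [h1, h2]
    ring
  rw [hinner, hphi]
  push_cast [hmu]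
  have hphi0 : (Nat.totient d : ℂ) ≠ 0 := by
    exact_mod_cast (Nat.totient_pos.mpr (Nat.pos_of_ne_zero hd0)).ne'
  have hp1 : ((p : ℂ) - 1) ≠ 0 := by
    have : (p : ℂ) ≠ 1 := by exact_mod_cast hp.one_lt.ne'
    exact sub_ne_zero.mpr this
  field_simp

lemma arith_main (N n : ℕ) (hN : N ≠ 0) (hdvd : n ∣ N) :
    (Nat.totient N : ℂ) / (N : ℂ) * ∑ d ∈ N.divisors, (μ d : ℂ) / (Nat.totient d : ℂ) *
      ∑ e ∈ d.divisors, (μ e : ℂ) * (if d ∣ N / n * e then ((d / e : ℕ) : ℂ) else 0) =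
    if n = N then 1 else 0 := by
  classical
  by_cases hnN : n = N
  · subst hnN
    rename' hN => hN'
    rw [if_pos rfl]
    have hinner : ∀ d ∈ n.divisors,
        (μ d : ℂ) / (Nat.totient d : ℂ) *
          ∑ e ∈ d.divisors, (μ e : ℂ) * (if d ∣ n / n * e then ((d / e : ℕ) : ℂ) else 0)
        = (μ d : ℂ) ^ 2 / (Nat.totient d : ℂ) := by
      intro d hd
      have hd0 : d ≠ 0 := (Nat.pos_of_mem_divisors hd).ne'
      have : ∑ e ∈ d.divisors, (μ e : ℂ) * (if d ∣ n / n * e then ((d / e : ℕ) : ℂ) else 0)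
          = (μ d : ℂ) := by
        rw [Nat.div_self (Nat.pos_of_ne_zero hN')]
        rw [Finset.sum_eq_single d]
        · rw [if_pos (by simpa using dvd_refl d), Nat.div_self (Nat.pos_of_ne_zero hd0)]
          simp
        · intro e he hne
          obtain ⟨hed, -⟩ := Nat.mem_divisors.mp he
          rw [if_neg, mul_zero]
          rw [one_mul]
          exact fun h => hne (Nat.dvd_antisymm hed h)
        · intro h
          exact absurd (Nat.mem_divisors_self d hd0) h
      rw [this]
      ring
    rw [Finset.sum_congr rfl hinner, I1 n hN']
    have h1 : (n : ℂ) ≠ 0 := by exact_mod_cast hN'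
    have h2 : (Nat.totient n : ℂ) ≠ 0 := by
      exact_mod_cast (Nat.totient_pos.mpr (Nat.pos_of_ne_zero hN')).ne'
    field_simp
  · rw [if_neg hnN]
    set m := N / n with hm
    have hmN : m ∣ N := Nat.div_dvd_of_dvd hdvd
    have hm1 : m ≠ 1 := by
      intro h
      apply hnN
      have h2 := Nat.div_mul_cancel hdvd
      rw [← hm, h, one_mul] at h2
      exact h2
    obtain ⟨p, hp, hpm⟩ := Nat.exists_prime_and_dvd hm1
    have hpN : p ∣ N := hpm.trans hmN
    suffices h : (∑ d ∈ N.divisors, (μ d : ℂ) / (Nat.totient d : ℂ) *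
        ∑ e ∈ d.divisors, (μ e : ℂ) * (if d ∣ m * e then ((d / e : ℕ) : ℂ) else 0)) = 0 by
      rw [h, mul_zero]
    set f : ℕ → ℂ := fun d => (μ d : ℂ) / (Nat.totient d : ℂ) *
        ∑ e ∈ d.divisors, (μ e : ℂ) * (if d ∣ m * e then ((d / e : ℕ) : ℂ) else 0) with hf
    show ∑ d ∈ N.divisors, f d = 0
    have hfilter : ∑ d ∈ N.divisors.filter Squarefree, f d = ∑ d ∈ N.divisors, f d := by
      refine Finset.sum_filter_of_ne fun d hd hfd => ?_
      by_contra hsq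
      apply hfd
      rw [hf]
      simp only [moebius_eq_zero_of_not_squarefree hsq]
      simp
    rw [← hfilter]
    refine Finset.sum_involution
      (fun d _ => if p ∣ d then d / p else d * p) ?_ ?_ ?_ ?_
    · -- cancellation
      intro d hd
      simp only [Finset.mem_filter, Nat.mem_divisors] at hd
      obtain ⟨⟨hdN, -⟩, hsq⟩ := hd
      have hd0 : d ≠ 0 := by
        rintro rfl
        exact hN (zero_dvd_iff.mp hdN)
      show f d + f (if p ∣ d then d / p else d * p) = 0
      by_cases hpd : p ∣ d
      · rw [if_pos hpd]
        obtain ⟨c, rfl⟩ := hpd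
        have hc0 : c ≠ 0 := by rintro rfl; simp at hd0
        have hpc : ¬ p ∣ c := by
          intro hpc
          obtain ⟨c', rfl⟩ := hpc
          exact hp.not_isUnit (hsq p (by ring_nf; exact Dvd.intro c' rfl))
        rw [Nat.mul_div_cancel_left c hp.pos]
        have := core_cancel (m := m) hp hpm hc0 hpc
        rw [mul_comm p c] at *
        rw [show f (c * p) = - f c from this, neg_add_cancel]
      · rw [if_neg hpd]
        rw [show f (d * p) = - f d from core_cancel hp hpm hd0 hpd, add_neg_cancel]
    · -- g_ne
      intro d hd _
      simp only [Finset.mem_filter, Nat.mem_divisors] at hd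
      have hd0 : d ≠ 0 := by
        rintro rfl
        exact hN (zero_dvd_iff.mp hd.1.1)
      show (if p ∣ d then d / p else d * p) ≠ d
      by_cases hpd : p ∣ d
      · rw [if_pos hpd]
        exact (Nat.div_lt_self (Nat.pos_of_ne_zero hd0) hp.one_lt).ne
      · rw [if_neg hpd]
        intro h
        nlinarith [hp.two_le, Nat.pos_of_ne_zero hd0, h]
    · -- g_mem
      intro d hd
      simp only [Finset.mem_filter, Nat.mem_divisors] at hd
      obtain ⟨⟨hdN, -⟩, hsq⟩ := hd
      show (if p ∣ d then d / p else d * p) ∈ Finset.filter Squarefree N.divisors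
      simp only [Finset.mem_filter, Nat.mem_divisors]
      by_cases hpd : p ∣ d
      · rw [if_pos hpd]
        exact ⟨⟨(Nat.div_dvd_of_dvd hpd).trans hdN, hN⟩, hsq.squarefree_of_dvd (Nat.div_dvd_of_dvd hpd)⟩
      · rw [if_neg hpd]
        have hcop : d.Coprime p := (hp.coprime_iff_not_dvd.mpr hpd).symm
        refine ⟨⟨hcop.mul_dvd_of_dvd_of_dvd hdN hpN, hN⟩, ?_⟩
        rw [Nat.squarefree_mul hcop]
        exact ⟨hsq, hp.squarefree⟩
    · -- involutive
      intro d hd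
      simp only [Finset.mem_filter, Nat.mem_divisors] at hd
      obtain ⟨⟨hdN, -⟩, hsq⟩ := hd
      have hd0 : d ≠ 0 := by
        rintro rfl
        exact hN (zero_dvd_iff.mp hdN)
      show (if p ∣ (if p ∣ d then d / p else d * p) then (if p ∣ d then d / p else d * p) / p
        else (if p ∣ d then d / p else d * p) * p) = d
      by_cases hpd : p ∣ d
      · have hpc : ¬ p ∣ d / p := by
          intro hpc
          obtain ⟨c, hc⟩ := hpd
          rw [hc, Nat.mul_div_cancel_left c hp.pos] at hpc
          obtain ⟨c', rfl⟩ := hpc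
          exact hp.not_isUnit (hsq p (by rw [hc]; ring_nf; exact Dvd.intro c' rfl))
        rw [if_pos hpd, if_neg hpc, Nat.div_mul_cancel hpd]
      · rw [if_neg hpd, if_pos (dvd_mul_left p d), Nat.mul_div_cancel _ hp.pos]

lemma moebius_sum_divisors (g : ℕ) :
    ∑ i ∈ g.divisors, (μ i : ℂ) = if g = 1 then 1 else 0 := by
  have h : (∑ i ∈ g.divisors, μ i : ℤ) = if g = 1 then 1 else 0 := by
    rw [← coe_mul_zeta_apply, ArithmeticFunction.moebius_mul_coe_zeta,
      ArithmeticFunction.one_apply]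
  calc ∑ i ∈ g.divisors, (μ i : ℂ) = ((∑ i ∈ g.divisors, μ i : ℤ) : ℂ) := by push_cast; rfl
    _ = if g = 1 then 1 else 0 := by rw [h]; split_ifs <;> simp

lemma gcd_divisors_eq_filter {j d : ℕ} (hd : d ≠ 0) :
    (Nat.gcd j d).divisors = d.divisors.filter (fun e => e ∣ j) := by
  ext e
  simp only [Nat.mem_divisors, Finset.mem_filter, Nat.dvd_gcd_iff]
  constructor
  · rintro ⟨⟨hej, hed⟩, -⟩
    exact ⟨⟨hed, hd⟩, hej⟩
  · rintro ⟨⟨hed, -⟩, hej⟩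
    exact ⟨⟨hej, hed⟩, fun h => hd (Nat.eq_zero_of_gcd_eq_zero_right h)⟩

lemma geom_sub_sum (z : ℂ) (s : ℕ) (hzs : z ^ s = 1) :
    ∑ i ∈ Finset.range s, z ^ i = if z = 1 then (s : ℂ) else 0 := by
  split_ifs with h
  · subst h; simp
  · rw [geom_sum_eq h, hzs]
    simp

lemma ramanujan_sum' (d : ℕ) (hd : d ≠ 0) (z : ℂ) (hz : z ^ d = 1) :
    ∑ j ∈ (Finset.range d).filter (fun j => Nat.Coprime j d), z ^ j
      = ∑ e ∈ d.divisors, (μ e : ℂ) * (if z ^ e = 1 then ((d / e : ℕ) : ℂ) else 0) := by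
  classical
  rw [Finset.sum_filter]
  have step1 : ∀ j ∈ Finset.range d,
      (if Nat.Coprime j d then z ^ j else 0)
        = ∑ e ∈ d.divisors, (if e ∣ j then (μ e : ℂ) * z ^ j else 0) := by
    intro j _
    have : ∑ e ∈ d.divisors, (if e ∣ j then (μ e : ℂ) * z ^ j else 0)
        = (∑ e ∈ (Nat.gcd j d).divisors, (μ e : ℂ)) * z ^ j := by
      rw [gcd_divisors_eq_filter hd, Finset.sum_filter, Finset.sum_mul]
      refine Finset.sum_congr rfl fun e _ => ?_
      split <;> ring
    rw [this, moebius_sum_divisors]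
    unfold Nat.Coprime
    split_ifs <;> simp_all
  rw [Finset.sum_congr rfl step1, Finset.sum_comm]
  refine Finset.sum_congr rfl fun e he => ?_
  obtain ⟨⟨c, rfl⟩, -⟩ := Nat.mem_divisors.mp he
  have he0 : e ≠ 0 := by rintro rfl; simp at hd
  have hc : (e * c) / e = c := Nat.mul_div_cancel_left c (Nat.pos_of_ne_zero he0)
  have inner : ∑ j ∈ Finset.range (e * c), (if e ∣ j then (μ e : ℂ) * z ^ j else 0)
      = (μ e : ℂ) * ∑ i ∈ Finset.range c, (z ^ e) ^ i := by
    rw [Finset.mul_sum]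
    rw [← Finset.sum_filter]
    refine (Finset.sum_bij (fun i _ => e * i) ?_ ?_ ?_ ?_).symm
    · intro i hi
      simp only [Finset.mem_range] at hi
      simp only [Finset.mem_filter, Finset.mem_range]
      exact ⟨(Nat.mul_lt_mul_left (Nat.pos_of_ne_zero he0)).mpr hi, Dvd.intro i rfl⟩
    · intro a _ b _ h
      exact Nat.eq_of_mul_eq_mul_left (Nat.pos_of_ne_zero he0) h
    · intro j hj
      simp only [Finset.mem_filter, Finset.mem_range] at hj
      obtain ⟨hjlt, i, rfl⟩ := hj
      refine ⟨i, ?_, rfl⟩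
      simp only [Finset.mem_range]
      exact Nat.lt_of_mul_lt_mul_left hjlt
    · intro i _
      rw [← pow_mul]
  rw [inner, geom_sub_sum (z ^ e) c (by rw [← pow_mul]; exact hz), hc]

lemma cond_equiv {N n d : ℕ} (hN : N ≠ 0) (hn : n ∣ N) (hd : d ∣ N) (e : ℕ) :
    n ∣ N / d * e ↔ d ∣ N / n * e := by
  have hd0 : 0 < d := Nat.pos_of_ne_zero (by rintro rfl; exact hN (zero_dvd_iff.mp hd))
  have hn0 : 0 < n := Nat.pos_of_ne_zero (by rintro rfl; exact hN (zero_dvd_iff.mp hn))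
  calc n ∣ N / d * e ↔ n * d ∣ (N / d * e) * d := (Nat.mul_dvd_mul_iff_right hd0).symm
    _ ↔ n * d ∣ N * e := by rw [mul_right_comm, Nat.div_mul_cancel hd]
    _ ↔ d * n ∣ N * e := by rw [mul_comm n d]
    _ ↔ d * n ∣ (N / n * e) * n := by rw [mul_right_comm, Nat.div_mul_cancel hn]
    _ ↔ d ∣ N / n * e := Nat.mul_dvd_mul_iff_right hn0

section CharSide

variable {F : Type*} [Field F] [Fintype F]

lemma char_sum_eq (α : F) (hα : α ≠ 0) (N : ℕ) (hN : N = Fintype.card F - 1)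
    (d : ℕ) (hd : d ∈ N.divisors) :
    ∑ᶠ (χ : MulChar F ℂ) (_ : orderOf χ = d), χ α
      = ∑ e ∈ d.divisors, (μ e : ℂ) *
          (if d ∣ N / orderOf α * e then ((d / e : ℕ) : ℂ) else 0) := by
  classical
  obtain ⟨hdN, hN0⟩ := Nat.mem_divisors.mp hd
  have hd0 : d ≠ 0 := by rintro rfl; exact hN0 (zero_dvd_iff.mp hdN)
  have hdpos : 0 < d := Nat.pos_of_ne_zero hd0
  have hNpos : 0 < N := Nat.pos_of_ne_zero hN0
  -- instances
  haveI : NeZero ((Monoid.exponent Fˣ : ℂ)) :=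
    ⟨Nat.cast_ne_zero.mpr Monoid.exponent_ne_zero_of_finite⟩
  haveI : Fintype (MulChar F ℂ) := Fintype.ofFinite _
  have hcardG : Fintype.card (MulChar F ℂ) = N := by
    rw [← Nat.card_eq_fintype_card, MulChar.card_eq_card_units_of_hasEnoughRootsOfUnity,
      Nat.card_eq_fintype_card, Fintype.card_units, hN]
  haveI : IsCyclic (MulChar F ℂ) := by
    obtain ⟨e⟩ := MulChar.mulEquiv_units F ℂ
    exact isCyclic_of_surjective e.symm e.symm.surjective
  obtain ⟨ψ, hψ⟩ := IsCyclic.exists_generator (α := MulChar F ℂ)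
  have hψN : orderOf ψ = N := by
    rw [orderOf_eq_card_of_forall_mem_zpowers hψ, Nat.card_eq_fintype_card, hcardG]
  have hfin : IsOfFinOrder ψ := by
    rw [← orderOf_pos_iff, hψN]; exact hNpos
  set u : Fˣ := Units.mk0 α hα with hu
  have huα : (u : F) = α := rfl
  set z : ℂ := ψ α with hz
  set n : ℕ := orderOf α with hn
  have hzpow : ∀ k t : ℕ, (ψ ^ k) (α ^ t) = z ^ (t * k) := by
    intro k t
    have h1 : (α ^ t) = ((u ^ t : Fˣ) : F) := by rw [Units.val_pow_eq_pow_val, huα]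
    rw [h1, MulChar.pow_apply_coe, Units.val_pow_eq_pow_val, huα, map_pow, ← pow_mul, ← hz]
  have hαN : α ^ N = 1 := by
    have h1 : u ^ N = 1 := by
      rw [hN, ← Fintype.card_units]
      exact pow_card_eq_one
    calc α ^ N = ((u ^ N : Fˣ) : F) := by rw [Units.val_pow_eq_pow_val, huα]
      _ = 1 := by rw [h1, Units.val_one]
  have hnN : n ∣ N := orderOf_dvd_of_pow_eq_one hαN
  have hn0 : n ≠ 0 := by
    rintro h
    rw [h] at hnN
    exact hN0 (zero_dvd_iff.mp hnN)
  have hzN : z ^ N = 1 := by rw [hz, ← map_pow, hαN, MulChar.map_one]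
  have hzord : orderOf z = n := by
    apply Nat.dvd_antisymm
    · apply orderOf_dvd_of_pow_eq_one
      rw [hz, ← map_pow, pow_orderOf_eq_one α, MulChar.map_one]
    · apply orderOf_dvd_of_pow_eq_one
      set j : ℕ := orderOf z with hj
      have hne : α ^ j ≠ 0 := pow_ne_zero _ hα
      by_contra hone
      obtain ⟨χ, hχ⟩ := MulChar.exists_apply_ne_one_of_hasEnoughRootsOfUnity F ℂ hone
      apply hχ
      obtain ⟨k, hk⟩ := hfin.mem_powers_iff_mem_zpowers.mpr (hψ χ)
      rw [← hk, hzpow k j, pow_mul, pow_orderOf_eq_one z, one_pow]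
  -- convert finsum to finset sum
  rw [finsum_cond_eq_sum_of_cond_iff (fun χ : MulChar F ℂ => χ α)
    (t := Finset.univ.filter (fun χ : MulChar F ℂ => orderOf χ = d))
    (fun {χ} => by simp)]
  have hNd : N / d * d = N := Nat.div_mul_cancel hdN
  have hNd0 : N / d ≠ 0 := (Nat.div_pos (Nat.le_of_dvd hNpos hdN) hdpos).ne'
  set q : ℕ := N / d with hq
  -- bijection with coprime residues
  have hbij : ∑ χ ∈ Finset.univ.filter (fun χ : MulChar F ℂ => orderOf χ = d), χ α
      = ∑ j ∈ (Finset.range d).filter (fun j => Nat.Coprime j d), (z ^ q) ^ j := by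
    refine (Finset.sum_bij (fun j _ => ψ ^ (q * j)) ?_ ?_ ?_ ?_).symm
    · intro j hj
      simp only [Finset.mem_filter, Finset.mem_range] at hj
      obtain ⟨hjd, hjcop⟩ := hj
      simp only [Finset.mem_filter, Finset.mem_univ, true_and]
      rw [orderOf_pow, hψN]
      have hgg : Nat.gcd N (q * j) = q := by
        rw [← hNd, Nat.gcd_mul_left, Nat.gcd_comm d j, hjcop, mul_one]
      rw [hgg, ← hNd, Nat.mul_div_cancel_left d (Nat.pos_of_ne_zero hNd0)]
    · intro a ha b hb hab
      simp only [Finset.mem_filter, Finset.mem_range] at ha hb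
      rw [pow_eq_pow_iff_modEq, hψN, ← hNd] at hab
      have h3 := Nat.ModEq.mul_left_cancel' hNd0 hab
      exact Nat.ModEq.eq_of_lt_of_lt h3 ha.1 hb.1
    · intro χ hχmem
      simp only [Finset.mem_filter, Finset.mem_univ, true_and] at hχmem
      obtain ⟨k, hk⟩ := hfin.mem_powers_iff_mem_zpowers.mpr (hψ χ)
      have hk' : ψ ^ k = χ := hk
      have h1 : orderOf (ψ ^ k) = N / Nat.gcd N k := by rw [orderOf_pow, hψN]
      rw [hk', hχmem] at h1
      have hg : Nat.gcd N k ∣ N := Nat.gcd_dvd_left N k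
      have hgcd : Nat.gcd N k = q := by
        rw [hq, h1, Nat.div_div_self hg hN0]
      have hdvdk : q ∣ k := hgcd ▸ Nat.gcd_dvd_right N k
      set r : ℕ := k / q with hr
      have hk2 : q * r = k := Nat.mul_div_cancel' hdvdk
      have hcop : Nat.gcd d r = 1 := by
        have h2 : Nat.gcd (q * d) (q * r) = q * Nat.gcd d r := Nat.gcd_mul_left _ _ _
        rw [mul_comm q d] at h2
        rw [mul_comm (N / d) d] at hNd
        rw [hNd, hk2, hgcd] at h2
        have h4 := Nat.eq_of_mul_eq_mul_left (Nat.pos_of_ne_zero hNd0)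
          (show q * 1 = q * Nat.gcd d r by rw [mul_one]; exact h2)
        omega
      refine ⟨r % d, ?_, ?_⟩
      · simp only [Finset.mem_filter, Finset.mem_range]
        refine ⟨Nat.mod_lt _ hdpos, ?_⟩
        show Nat.gcd (r % d) d = 1
        rw [← Nat.gcd_rec d r]
        exact hcop
      · rw [← hk', pow_eq_pow_iff_modEq, hψN, ← hNd, ← hk2]
        exact Nat.ModEq.mul_left' (c := q) (Nat.mod_modEq r d)
    · intro j hj
      rw [show α = α ^ 1 from (pow_one α).symm, hzpow, one_mul, ← pow_mul]
  rw [hbij, ramanujan_sum' d hd0 _ (by rw [← pow_mul, hNd, hzN])]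
  refine Finset.sum_congr rfl fun e he => ?_
  congr 1
  have hcond : (z ^ q) ^ e = 1 ↔ n ∣ q * e := by
    rw [← pow_mul, ← orderOf_dvd_iff_pow_eq_one, hzord]
  rw [if_congr (hcond.trans (cond_equiv hN0 hnN hdN e)) rfl rfl]

end CharSide

/-- Let `F` be a finite field and `N = |F| - 1`. For every nonzero
`α ∈ F`, the sum `(φ(N)/N) * ∑_{d ∣ N} (μ(d)/φ(d)) * ∑_{ord(χ) = d} χ(α)` over the
multiplicative characters `χ` of `F` of exact order `d` equals `1` if `α` has
multiplicative order `N` (i.e. generates `Fˣ`) and `0` otherwise. -/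
theorem characteristic_function_of_primitive_elements
    (F : Type*) [Field F] [Fintype F] (N : ℕ) (hN : N = Fintype.card F - 1)
    (α : F) (hα : α ≠ 0) :
    ((Nat.totient N : ℂ) / (N : ℂ)) *
        ∑ d ∈ N.divisors, ((ArithmeticFunction.moebius d : ℂ) / (Nat.totient d : ℂ)) *
          ∑ᶠ (χ : MulChar F ℂ) (_ : orderOf χ = d), χ α =
      if orderOf α = N then 1 else 0 := by
  classical
  have hN0 : N ≠ 0 := by
    have h2 : 1 < Fintype.card F := Fintype.one_lt_card
    omega
  have hαN : α ^ N = 1 := by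
    set u : Fˣ := Units.mk0 α hα with hu
    have h1 : u ^ N = 1 := by
      rw [hN, ← Fintype.card_units]
      exact pow_card_eq_one
    calc α ^ N = ((u ^ N : Fˣ) : F) := by rw [Units.val_pow_eq_pow_val]; rfl
      _ = 1 := by rw [h1, Units.val_one]
  have hnN : orderOf α ∣ N := orderOf_dvd_of_pow_eq_one hαN
  have hstep : ∀ d ∈ N.divisors,
      ((ArithmeticFunction.moebius d : ℂ) / (Nat.totient d : ℂ)) *
          ∑ᶠ (χ : MulChar F ℂ) (_ : orderOf χ = d), χ α
        = ((ArithmeticFunction.moebius d : ℂ) / (Nat.totient d : ℂ)) *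
          ∑ e ∈ d.divisors, (ArithmeticFunction.moebius e : ℂ) *
            (if d ∣ N / orderOf α * e then ((d / e : ℕ) : ℂ) else 0) := by
    intro d hd
    rw [char_sum_eq α hα N hN d hd]
  rw [Finset.sum_congr rfl hstep]
  exact arith_main N (orderOf α) hN0 hnN
end

section
/- Let p be a prime and let P_p = {g : 1 ≤ g ≤ p − 1, g is a primitive root mod p} be the set of primitive roots modulo p. Then for every integer s with p ∤ s, the exponential sum satisfies |Σ_{g ∈ P_p} e^{2πi s g / p}| ≤ 2^{ω(p−1)} · √p, where ω(m) denotes the number of distinct prime divisors of m; moreover Σ_{g ∈ P_p} 1 = φ(p − 1). -/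
open Finset
open scoped Classical

noncomputable def eE (p : ℕ) (k : ℤ) : ℂ :=
  Complex.exp (2 * Real.pi * Complex.I * k / p)

lemma eE_add (p : ℕ) (a b : ℤ) : eE p (a + b) = eE p a * eE p b := by
  rw [eE, eE, eE, ← Complex.exp_add]
  congr 1
  push_cast
  ring

lemma eE_zero (p : ℕ) : eE p 0 = 1 := by simp [eE]

lemma eE_period (p : ℕ) (hp : p ≠ 0) (m : ℤ) : eE p (p * m) = 1 := by
  have hpc : (p : ℂ) ≠ 0 := Nat.cast_ne_zero.mpr hp
  rw [eE]
  have : 2 * (Real.pi : ℂ) * Complex.I * ((p : ℤ) * m : ℤ) / p = m * (2 * Real.pi * Complex.I) := by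
    push_cast
    field_simp
  rw [this, Complex.exp_int_mul_two_pi_mul_I]

lemma eE_congr (p : ℕ) (hp : p ≠ 0) {a b : ℤ} (h : (p : ℤ) ∣ a - b) : eE p a = eE p b := by
  obtain ⟨m, hm⟩ := h
  have : a = b + p * m := by linarith
  rw [this, eE_add, eE_period p hp, mul_one]

lemma eE_conj (p : ℕ) (k : ℤ) : (starRingEnd ℂ) (eE p k) = eE p (-k) := by
  rw [eE, eE, ← Complex.exp_conj]
  congr 1
  simp only [map_div₀, map_mul, Complex.conj_I, map_ofNat, Complex.conj_ofReal,
    Complex.conj_natCast, map_intCast]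
  push_cast
  ring

lemma eE_abs (p : ℕ) (k : ℤ) : ‖eE p k‖ = 1 := by
  rw [eE, Complex.norm_exp]
  have : (2 * (Real.pi:ℂ) * Complex.I * k / p).re = 0 := by
    have : 2 * (Real.pi:ℂ) * Complex.I * k / p = ((2 * Real.pi * k / p : ℝ)) * Complex.I := by
      push_cast; ring
    rw [this]
    simp
  rw [this, Real.exp_zero]

noncomputable def EC (p : ℕ) (x : ZMod p) : ℂ := eE p (x.val : ℤ)

section p
variable (p : ℕ) [hp : Fact p.Prime]

lemma p_pos : 0 < p := hp.out.pos
lemma p_ne : p ≠ 0 := hp.out.pos.ne'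

lemma EC_intCast (k : ℤ) : EC p ((k : ZMod p)) = eE p k := by
  apply eE_congr p (p_ne p)
  have h1 : (((((k : ZMod p)).val : ℤ) - k : ℤ) : ZMod p) = 0 := by
    push_cast
    simp [ZMod.natCast_val, ZMod.cast_id]
  rw [ZMod.intCast_zmod_eq_zero_iff_dvd] at h1
  exact h1

lemma EC_natCast (k : ℕ) : EC p ((k : ZMod p)) = eE p k := by
  have := EC_intCast p (k : ℤ)
  rwa [Int.cast_natCast] at this

lemma EC_add (x y : ZMod p) : EC p (x + y) = EC p x * EC p y := by
  have hx : ((x.val : ℤ) : ZMod p) = x := by push_cast; simp [ZMod.natCast_val, ZMod.cast_id]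
  have hy : ((y.val : ℤ) : ZMod p) = y := by push_cast; simp [ZMod.natCast_val, ZMod.cast_id]
  have : x + y = (((x.val : ℤ) + (y.val : ℤ) : ℤ) : ZMod p) := by
    push_cast
    simp [ZMod.natCast_val, ZMod.cast_id]
  rw [this, EC_intCast, eE_add, EC, EC]

lemma EC_conj (x : ZMod p) : (starRingEnd ℂ) (EC p x) = EC p (-x) := by
  have : -x = (((-(x.val : ℤ)) : ℤ) : ZMod p) := by
    push_cast
    simp [ZMod.natCast_val, ZMod.cast_id]
  rw [this, EC_intCast, EC, eE_conj]

lemma EC_zero : EC p 0 = 1 := by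
  have : (0 : ZMod p) = ((0 : ℕ) : ZMod p) := by simp
  rw [this, EC_natCast]
  simpa using eE_zero p

lemma sum_EC : ∑ x : ZMod p, EC p x = 0 := by
  have hne : (p : ℂ) ≠ 0 := Nat.cast_ne_zero.mpr (p_ne p)
  have h1 : ∑ x : ZMod p, EC p x = ∑ k ∈ Finset.range p, eE p k := by
    refine Finset.sum_nbij' (fun x => x.val) (fun k => (k : ZMod p)) ?_ ?_ ?_ ?_ ?_
    · intro x _
      exact Finset.mem_range.mpr (ZMod.val_lt x)
    · intro k _
      exact Finset.mem_univ _
    · intro x _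
      simp [ZMod.natCast_val, ZMod.cast_id]
    · intro k hk
      exact ZMod.val_cast_of_lt (Finset.mem_range.mp hk)
    · intro x _
      rfl
  set ζ : ℂ := Complex.exp (2 * Real.pi * Complex.I / p) with hζ
  have hk : ∀ k : ℕ, eE p (k : ℤ) = ζ ^ k := by
    intro k
    rw [hζ, ← Complex.exp_nat_mul, eE]
    congr 1
    push_cast
    ring
  have hζp : ζ ^ p = 1 := by
    rw [hζ, ← Complex.exp_nat_mul]
    have : (p : ℂ) * (2 * Real.pi * Complex.I / p) = 2 * Real.pi * Complex.I := by
      field_simp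
    rw [this, Complex.exp_two_pi_mul_I]
  have hζ1 : ζ ≠ 1 := by
    intro h
    rw [hζ, Complex.exp_eq_one_iff] at h
    obtain ⟨n, hn⟩ := h
    have h2 : (2 * (Real.pi : ℂ) * Complex.I) ≠ 0 := by
      refine mul_ne_zero (mul_ne_zero two_ne_zero ?_) Complex.I_ne_zero
      exact Complex.ofReal_ne_zero.mpr Real.pi_ne_zero
    rw [div_eq_iff hne] at hn
    have h3 : (2 * (Real.pi : ℂ) * Complex.I) * 1 = (2 * (Real.pi : ℂ) * Complex.I) * (n * p) := by
      linear_combination hn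
    have h4 : (1 : ℂ) = ((n * p : ℤ) : ℂ) := by
      push_cast
      exact mul_left_cancel₀ h2 h3
    have h5 : (n * p : ℤ) = 1 := by exact_mod_cast h4.symm
    have h6 : (p : ℤ) ∣ 1 := ⟨n, by linarith⟩
    have h7 := Int.le_of_dvd one_pos h6
    have := hp.out.two_le
    omega
  rw [h1]
  have : ∀ k ∈ Finset.range p, eE p (k : ℤ) = ζ ^ k := fun k _ => hk k
  rw [Finset.sum_congr rfl this, geom_sum_eq hζ1, hζp]
  simp

lemma sum_EC_mul (a : ZMod p) :
    ∑ t : ZMod p, EC p (t * a) = if a = 0 then (p : ℂ) else 0 := by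
  split_ifs with h
  · subst h
    simp only [mul_zero, EC_zero, Finset.sum_const, Finset.card_univ, ZMod.card, nsmul_eq_mul,
      mul_one]
  · rw [← sum_EC p]
    exact Fintype.sum_equiv (Equiv.mulRight₀ a h) _ _ (fun t => rfl)

end p
section pb
variable (p : ℕ) [hp : Fact p.Prime]

lemma F_bound (m : ℕ) (hm : m ≠ 0) (σ : ZMod p) (hσ : σ ≠ 0) :
    ‖∑ x ∈ Finset.univ.filter (fun x : ZMod p => x ^ m = 1), EC p (σ * x)‖ ≤
      Real.sqrt p := by
  set H : Finset (ZMod p) := Finset.univ.filter (fun x : ZMod p => x ^ m = 1) with hH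
  have memH : ∀ x : ZMod p, x ∈ H ↔ x ^ m = 1 := by
    intro x; simp [hH]
  have memH_ne : ∀ x ∈ H, x ≠ 0 := by
    intro x hx h0
    rw [memH] at hx
    rw [h0, zero_pow hm] at hx
    exact zero_ne_one hx
  have one_mem : (1 : ZMod p) ∈ H := by rw [memH]; simp
  set F : ZMod p → ℂ := fun t => ∑ x ∈ H, EC p (t * x) with hF
  -- invariance under multiplication by elements of H
  have F_mul : ∀ t : ZMod p, ∀ y ∈ H, F (t * y) = F t := by
    intro t y hy
    have hy0 : y ≠ 0 := memH_ne y hy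
    rw [hF]
    refine Finset.sum_nbij' (fun x => y * x) (fun x => y⁻¹ * x) ?_ ?_ ?_ ?_ ?_
    · intro x hx
      rw [memH] at hx ⊢
      rw [mul_pow, hx, (memH y).mp hy, one_mul]
    · intro x hx
      rw [memH] at hx ⊢
      rw [mul_pow, hx, inv_pow, (memH y).mp hy, inv_one, one_mul]
    · intro x _
      exact inv_mul_cancel_left₀ hy0 x
    · intro x _
      exact mul_inv_cancel_left₀ hy0 x
    · intro x _
      congr 1
      ring
  -- Parseval
  have parseval : ∑ t : ZMod p, Complex.normSq (F t) = p * H.card := by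
    have hC : ∑ t : ZMod p, (Complex.normSq (F t) : ℂ) = (p : ℂ) * H.card := by
      have e1 : ∀ t : ZMod p, (Complex.normSq (F t) : ℂ) =
          ∑ x ∈ H, ∑ y ∈ H, EC p (t * (x - y)) := by
        intro t
        rw [← Complex.mul_conj, hF]
        rw [map_sum]
        rw [Finset.sum_mul_sum]
        refine Finset.sum_congr rfl fun x _ => Finset.sum_congr rfl fun y _ => ?_
        rw [EC_conj]
        rw [← EC_add]
        congr 1
        ring
      calc ∑ t : ZMod p, (Complex.normSq (F t) : ℂ)
          = ∑ t : ZMod p, ∑ x ∈ H, ∑ y ∈ H, EC p (t * (x - y)) :=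
            Finset.sum_congr rfl fun t _ => e1 t
        _ = ∑ x ∈ H, ∑ y ∈ H, ∑ t : ZMod p, EC p (t * (x - y)) := by
            rw [Finset.sum_comm]
            refine Finset.sum_congr rfl fun x _ => Finset.sum_comm
        _ = ∑ x ∈ H, ∑ y ∈ H, if x - y = 0 then (p : ℂ) else 0 := by
            refine Finset.sum_congr rfl fun x _ => Finset.sum_congr rfl fun y _ => ?_
            exact sum_EC_mul p (x - y)
        _ = ∑ x ∈ H, ∑ y ∈ H, if y = x then (p : ℂ) else 0 := by
            refine Finset.sum_congr rfl fun x _ => Finset.sum_congr rfl fun y _ => ?_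
            congr 1
            simp [sub_eq_zero, eq_comm]
        _ = ∑ x ∈ H, (p : ℂ) := by
            refine Finset.sum_congr rfl fun x hx => ?_
            rw [Finset.sum_ite_eq' H x (fun _ => (p : ℂ))]
            simp [hx]
        _ = (p : ℂ) * H.card := by
            rw [Finset.sum_const]
            simp [mul_comm]
    have := hC
    rw [← Complex.ofReal_sum] at this
    · have h2 : ((∑ t : ZMod p, Complex.normSq (F t) : ℝ) : ℂ) = ((p * H.card : ℝ) : ℂ) := by
        rw [this]; push_cast; ring
      exact_mod_cast h2
  -- coset bound
  have cardH_pos : 0 < H.card := Finset.card_pos.mpr ⟨1, one_mem⟩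
  have coset : (H.card : ℝ) * Complex.normSq (F σ) ≤ p * H.card := by
    have e2 : (H.card : ℝ) * Complex.normSq (F σ) = ∑ y ∈ H, Complex.normSq (F (σ * y)) := by
      rw [Finset.sum_congr rfl fun y hy => by rw [F_mul σ y hy]]
      rw [Finset.sum_const]
      simp [nsmul_eq_mul]
    have e3 : ∑ y ∈ H, Complex.normSq (F (σ * y)) =
        ∑ t ∈ H.image (fun y => σ * y), Complex.normSq (F t) := by
      rw [Finset.sum_image]
      intro x _ y _ h
      exact mul_left_cancel₀ hσ h
    rw [e2, e3, ← parseval]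
    refine Finset.sum_le_sum_of_subset_of_nonneg (Finset.subset_univ _) ?_
    intro t _ _
    exact Complex.normSq_nonneg _
  have hnormSq : Complex.normSq (F σ) ≤ p := by
    have hc : (0 : ℝ) < H.card := by exact_mod_cast cardH_pos
    nlinarith [coset]
  rw [show (∑ x ∈ Finset.univ.filter (fun x : ZMod p => x ^ m = 1), EC p (σ * x)) = F σ from rfl]
  rw [Complex.norm_def]
  exact Real.sqrt_le_sqrt hnormSq

end pb
open ArithmeticFunction in
lemma sum_moebius_divisors (m : ℕ) :
    ∑ d ∈ m.divisors, (ArithmeticFunction.moebius d : ℤ) = if m = 1 then 1 else 0 := by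
  have h := congrArg (fun f : ArithmeticFunction ℤ => f m) ArithmeticFunction.moebius_mul_coe_zeta
  rwa [ArithmeticFunction.coe_mul_zeta_apply, ArithmeticFunction.one_apply] at h

open ArithmeticFunction in
lemma sum_abs_moebius (n : ℕ) (hn : n ≠ 0) :
    ∑ d ∈ n.divisors, |(ArithmeticFunction.moebius d : ℤ)| = 2 ^ n.primeFactors.card := by
  classical
  have h1 : ∑ d ∈ n.divisors, |(ArithmeticFunction.moebius d : ℤ)| =
      ∑ d ∈ n.divisors, (if Squarefree d then (1 : ℤ) else 0) :=
    Finset.sum_congr rfl fun d _ => ArithmeticFunction.abs_moebius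
  rw [h1, ← Finset.sum_filter]
  have h2 : ∑ d ∈ n.divisors with Squarefree d, (1 : ℤ) =
      ∑ i ∈ (UniqueFactorizationMonoid.normalizedFactors n).toFinset.powerset, (1 : ℤ) :=
    Nat.sum_divisors_filter_squarefree hn
  rw [h2, Finset.sum_const, Finset.card_powerset]
  rw [Nat.factors_eq n]
  have : ((n.primeFactorsList : Multiset ℕ)).toFinset = n.primeFactors := by
    rw [List.toFinset_coe, Nat.toFinset_factors]
  rw [this]
  simp

lemma orderOf_zmod_zero [hp : Fact p.Prime] : orderOf (0 : ZMod p) = 0 := by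
  rw [orderOf_eq_zero_iff]
  intro h
  rw [isOfFinOrder_iff_pow_eq_one] at h
  obtain ⟨k, hk, h1⟩ := h
  rw [zero_pow hk.ne'] at h1
  exact zero_ne_one h1

lemma orderOf_dvd_sub_one {p : ℕ} [hp : Fact p.Prime] {x : ZMod p} (hx : x ≠ 0) :
    orderOf x ∣ p - 1 := by
  have : orderOf x = orderOf (Units.mk0 x hx) := by
    rw [← orderOf_units, Units.val_mk0]
  rw [this, ← ZMod.card_units p]
  exact orderOf_dvd_card

lemma moebius_indicator {p : ℕ} [hp : Fact p.Prime] (x : ZMod p) :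
    ∑ d ∈ (p - 1).divisors,
        (ArithmeticFunction.moebius d : ℂ) * (if x ^ ((p - 1) / d) = 1 then 1 else 0) =
      if orderOf x = p - 1 then 1 else 0 := by
  classical
  have hp2 := hp.out.two_le
  have hn : p - 1 ≠ 0 := by omega
  by_cases hx : x = 0
  · subst hx
    rw [orderOf_zmod_zero]
    have : ∀ d ∈ (p - 1).divisors, (ArithmeticFunction.moebius d : ℂ) *
        (if (0 : ZMod p) ^ ((p - 1) / d) = 1 then 1 else 0) = 0 := by
      intro d hd
      obtain ⟨hdvd, -⟩ := Nat.mem_divisors.mp hd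
      have hdpos : 0 < d := Nat.pos_of_mem_divisors hd
      have hq : 0 < (p - 1) / d := Nat.div_pos (Nat.le_of_dvd (by omega) hdvd) hdpos
      rw [zero_pow hq.ne']
      simp
    rw [Finset.sum_congr rfl this, Finset.sum_const_zero, if_neg (by omega)]
  · set r := orderOf x with hr
    have hrdvd : r ∣ p - 1 := orderOf_dvd_sub_one hx
    have hrpos : 0 < r := by
      have : orderOf x = orderOf (Units.mk0 x hx) := by rw [← orderOf_units, Units.val_mk0]
      rw [hr, this]
      exact orderOf_pos _
    have key : ∀ d ∈ (p - 1).divisors, (x ^ ((p - 1) / d) = 1) ↔ d ∣ (p - 1) / r := by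
      intro d hd
      obtain ⟨hdvd, -⟩ := Nat.mem_divisors.mp hd
      rw [← orderOf_dvd_iff_pow_eq_one, ← hr]
      rw [Nat.dvd_div_iff_mul_dvd hdvd, Nat.dvd_div_iff_mul_dvd hrdvd]
      rw [mul_comm]
    have h1 : ∑ d ∈ (p - 1).divisors,
        (ArithmeticFunction.moebius d : ℂ) * (if x ^ ((p - 1) / d) = 1 then 1 else 0) =
        ∑ d ∈ (p - 1).divisors, (if d ∣ (p - 1) / r then (ArithmeticFunction.moebius d : ℂ) else 0) := by
      refine Finset.sum_congr rfl fun d hd => ?_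
      rw [if_congr (key d hd) rfl rfl]
      split_ifs <;> simp
    rw [h1, ← Finset.sum_filter]
    have h2 : (p - 1).divisors.filter (· ∣ (p - 1) / r) = ((p - 1) / r).divisors :=
      Nat.divisors_filter_dvd_of_dvd hn (Nat.div_dvd_of_dvd hrdvd)
    rw [h2]
    have h3 : ∑ d ∈ ((p - 1) / r).divisors, (ArithmeticFunction.moebius d : ℂ) =
        ((∑ d ∈ ((p - 1) / r).divisors, (ArithmeticFunction.moebius d : ℤ) : ℤ) : ℂ) := by
      push_cast
      rfl
    rw [h3, sum_moebius_divisors]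
    have h4 : (p - 1) / r = 1 ↔ r = p - 1 := by
      obtain ⟨c, hc⟩ := hrdvd
      rw [hc, Nat.mul_div_cancel_left _ hrpos]
      constructor
      · intro h; subst h; simp
      · intro h
        have h' : r * 1 = r * c := by rw [mul_one]; omega
        exact (Nat.eq_of_mul_eq_mul_left hrpos h').symm
    rw [if_congr h4 rfl rfl]
    split_ifs <;> simp

/-- Let `p` be a prime and `P_p` the set of primitive roots mod `p`
in `[1, p-1]`. Then for every integer `s` with `p ∤ s`,
`|∑_{g ∈ P_p} e^{2πi s g / p}| ≤ 2^{ω(p-1)} * √p`, where `ω(m)` is the number of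
distinct prime divisors of `m`; moreover `|P_p| = φ(p-1)`. -/
theorem primitive_roots_exponential_sum_bound
    (p : ℕ) [hp : Fact p.Prime] :
    (∀ s : ℤ, ¬ (p : ℤ) ∣ s →
      ‖∑ g ∈ (Finset.Icc 1 (p - 1)).filter
            (fun g : ℕ => orderOf ((g : ZMod p)) = p - 1),
          Complex.exp (2 * Real.pi * Complex.I * (s : ℂ) * (g : ℂ) / (p : ℂ))‖ ≤
        (2 : ℝ) ^ (p - 1).primeFactors.card * Real.sqrt p) ∧
    ((Finset.Icc 1 (p - 1)).filter
        (fun g : ℕ => orderOf ((g : ZMod p)) = p - 1)).card = Nat.totient (p - 1) := by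
  have hp2 := hp.out.two_le
  have hn : p - 1 ≠ 0 := by omega
  constructor
  · -- the exponential sum bound
    intro s hs
    set σ : ZMod p := (s : ZMod p) with hσdef
    have hσ : σ ≠ 0 := by
      rw [hσdef, Ne, ZMod.intCast_zmod_eq_zero_iff_dvd]
      exact hs
    -- Step A : rewrite the sum over `ZMod p`
    have stepA : (∑ g ∈ (Finset.Icc 1 (p - 1)).filter
            (fun g : ℕ => orderOf ((g : ZMod p)) = p - 1),
          Complex.exp (2 * Real.pi * Complex.I * (s : ℂ) * (g : ℂ) / (p : ℂ))) =
        ∑ x ∈ Finset.univ.filter (fun x : ZMod p => orderOf x = p - 1), EC p (σ * x) := by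
      refine Finset.sum_nbij' (fun g => (g : ZMod p)) (fun x => x.val) ?_ ?_ ?_ ?_ ?_
      · intro g hg
        rw [Finset.mem_filter] at hg ⊢
        exact ⟨Finset.mem_univ _, hg.2⟩
      · intro x hx
        rw [Finset.mem_filter] at hx
        have hord : orderOf x = p - 1 := hx.2
        have hx0 : x ≠ 0 := by
          intro h0
          rw [h0, orderOf_zmod_zero] at hord
          omega
        have hval0 : x.val ≠ 0 := fun h => hx0 ((ZMod.val_eq_zero x).mp h)
        have hvlt : x.val < p := ZMod.val_lt x
        simp only [Finset.mem_filter, Finset.mem_Icc]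
        refine ⟨⟨by omega, by omega⟩, ?_⟩
        have : ((x.val : ℕ) : ZMod p) = x := by simp [ZMod.natCast_val, ZMod.cast_id]
        rw [this, hord]
      · intro g hg
        rw [Finset.mem_filter, Finset.mem_Icc] at hg
        exact ZMod.val_cast_of_lt (by omega)
      · intro x _
        simp [ZMod.natCast_val, ZMod.cast_id]
      · intro g hg
        have h1 : σ * (g : ZMod p) = ((s * (g : ℕ) : ℤ) : ZMod p) := by
          rw [hσdef]; push_cast; ring
        rw [h1, EC_intCast, eE]
        congr 1
        push_cast
        ring
    rw [stepA]
    -- Step B : Möbius expansion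
    have stepB : ∑ x ∈ Finset.univ.filter (fun x : ZMod p => orderOf x = p - 1), EC p (σ * x) =
        ∑ d ∈ (p - 1).divisors, (ArithmeticFunction.moebius d : ℂ) *
          ∑ x ∈ Finset.univ.filter (fun x : ZMod p => x ^ ((p - 1) / d) = 1), EC p (σ * x) := by
      rw [Finset.sum_filter]
      have e1 : ∀ x : ZMod p, (if orderOf x = p - 1 then EC p (σ * x) else 0) =
          (∑ d ∈ (p - 1).divisors, (ArithmeticFunction.moebius d : ℂ) *
            (if x ^ ((p - 1) / d) = 1 then 1 else 0)) * EC p (σ * x) := by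
        intro x
        rw [moebius_indicator x]
        split_ifs <;> simp
      rw [Finset.sum_congr rfl fun x _ => e1 x]
      calc ∑ x : ZMod p, (∑ d ∈ (p - 1).divisors, (ArithmeticFunction.moebius d : ℂ) *
              (if x ^ ((p - 1) / d) = 1 then 1 else 0)) * EC p (σ * x)
          = ∑ x : ZMod p, ∑ d ∈ (p - 1).divisors, ((ArithmeticFunction.moebius d : ℂ) *
              (if x ^ ((p - 1) / d) = 1 then 1 else 0)) * EC p (σ * x) := by
            refine Finset.sum_congr rfl fun x _ => ?_
            rw [Finset.sum_mul]
        _ = ∑ d ∈ (p - 1).divisors, ∑ x : ZMod p, ((ArithmeticFunction.moebius d : ℂ) *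
              (if x ^ ((p - 1) / d) = 1 then 1 else 0)) * EC p (σ * x) := Finset.sum_comm
        _ = ∑ d ∈ (p - 1).divisors, (ArithmeticFunction.moebius d : ℂ) *
              ∑ x ∈ Finset.univ.filter (fun x : ZMod p => x ^ ((p - 1) / d) = 1),
                EC p (σ * x) := by
            refine Finset.sum_congr rfl fun d _ => ?_
            rw [Finset.mul_sum, Finset.sum_filter]
            refine Finset.sum_congr rfl fun x _ => ?_
            split_ifs <;> ring
    rw [stepB]
    -- Step C : triangle inequality and the Gauss-type bound
    have hsqrt : (0:ℝ) ≤ Real.sqrt p := Real.sqrt_nonneg _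
    calc ‖∑ d ∈ (p - 1).divisors, (ArithmeticFunction.moebius d : ℂ) *
            ∑ x ∈ Finset.univ.filter (fun x : ZMod p => x ^ ((p - 1) / d) = 1), EC p (σ * x)‖
        ≤ ∑ d ∈ (p - 1).divisors, ‖(ArithmeticFunction.moebius d : ℂ) *
            ∑ x ∈ Finset.univ.filter (fun x : ZMod p => x ^ ((p - 1) / d) = 1), EC p (σ * x)‖ := by
          exact norm_sum_le _ _
      _ ≤ ∑ d ∈ (p - 1).divisors, (|ArithmeticFunction.moebius d| : ℝ) * Real.sqrt p := by
          refine Finset.sum_le_sum fun d hd => ?_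
          rw [norm_mul]
          have habs : ‖((ArithmeticFunction.moebius d : ℤ) : ℂ)‖ =
              (|ArithmeticFunction.moebius d| : ℝ) := by
            rw [Complex.norm_intCast]
          rw [habs]
          refine mul_le_mul_of_nonneg_left ?_ (by positivity)
          have hdvd := (Nat.mem_divisors.mp hd).1
          have hdpos := Nat.pos_of_mem_divisors hd
          have hm : (p - 1) / d ≠ 0 :=
            (Nat.div_pos (Nat.le_of_dvd (by omega) hdvd) hdpos).ne'
          exact F_bound p ((p - 1) / d) hm σ hσ
      _ = (∑ d ∈ (p - 1).divisors, (|ArithmeticFunction.moebius d| : ℝ)) * Real.sqrt p := by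
          rw [Finset.sum_mul]
      _ = (2 : ℝ) ^ (p - 1).primeFactors.card * Real.sqrt p := by
          congr 1
          have := sum_abs_moebius (p - 1) hn
          calc ∑ d ∈ (p - 1).divisors, (|ArithmeticFunction.moebius d| : ℝ)
              = ((∑ d ∈ (p - 1).divisors, |ArithmeticFunction.moebius d| : ℤ) : ℝ) := by
                push_cast; rfl
            _ = (2 : ℝ) ^ (p - 1).primeFactors.card := by rw [this]; push_cast; rfl
  · -- the cardinality statement
    have hcard : (Finset.univ.filter (fun u : (ZMod p)ˣ => orderOf u = p - 1)).card =
        ((Finset.Icc 1 (p - 1)).filter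
          (fun g : ℕ => orderOf ((g : ZMod p)) = p - 1)).card := by
      refine Finset.card_bij (fun u _ => (u : ZMod p).val) ?_ ?_ ?_
      · intro u hu
        rw [Finset.mem_filter] at hu
        simp only [Finset.mem_filter, Finset.mem_Icc]
        have h0 : ((u : ZMod p)).val ≠ 0 := by
          rw [Ne, ZMod.val_eq_zero]
          exact Units.ne_zero u
        have hvlt : ((u : ZMod p)).val < p := ZMod.val_lt _
        have hback : ((((u : ZMod p)).val : ℕ) : ZMod p) = (u : ZMod p) := by
          simp [ZMod.natCast_val, ZMod.cast_id]
        refine ⟨⟨by omega, by omega⟩, ?_⟩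
        rw [hback, orderOf_units]
        exact hu.2
      · intro u₁ h₁ u₂ h₂ h
        have h' : ((u₁ : ZMod p)).val = ((u₂ : ZMod p)).val := h
        have : (u₁ : ZMod p) = (u₂ : ZMod p) := by
          have b1 : ((((u₁ : ZMod p)).val : ℕ) : ZMod p) = (u₁ : ZMod p) := by
            simp [ZMod.natCast_val, ZMod.cast_id]
          have b2 : ((((u₂ : ZMod p)).val : ℕ) : ZMod p) = (u₂ : ZMod p) := by
            simp [ZMod.natCast_val, ZMod.cast_id]
          rw [← b1, ← b2, h']
        exact Units.ext this
      · intro g hg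
        rw [Finset.mem_filter, Finset.mem_Icc] at hg
        obtain ⟨⟨hg1, hg2⟩, hord⟩ := hg
        have hne : ((g : ℕ) : ZMod p) ≠ 0 := by
          intro h0
          rw [h0, orderOf_zmod_zero] at hord
          omega
        refine ⟨Units.mk0 ((g : ℕ) : ZMod p) hne, ?_, ?_⟩
        · rw [Finset.mem_filter]
          refine ⟨Finset.mem_univ _, ?_⟩
          rw [← orderOf_units, Units.val_mk0]
          exact hord
        · show ((Units.mk0 ((g : ℕ) : ZMod p) hne : (ZMod p)ˣ) : ZMod p).val = g
          rw [Units.val_mk0]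
          exact ZMod.val_cast_of_lt (by omega)
    rw [← hcard]
    have hdvd : p - 1 ∣ Fintype.card (ZMod p)ˣ := by
      rw [ZMod.card_units p]
    exact IsCyclic.card_orderOf_eq_totient hdvd
end
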